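/- arXiv:1301.2636 — 7 statements merged into one kernel-verified Lean document; each statement's English description precedes it below -/
import Mathlib

section
/- If F is analytic on the open unit disc and F converges at a boundary point in the sense that its Taylor series ∑ c(n) e^{int} converges at t, then F(z) converges non-tangentially to the same value at e^{it}. -/
open Complex Filter Metric

/-- The Stolz angle (nontangential approach region) at a boundary point `ζ` of the unit
disc, with aperture parameter `M`. -/
def stolzAngle (ζ : ℂ) (M : ℝ) : Set ℂ :=
  {z : ℂ | ‖z‖ < 1 ∧ ‖ζ - z‖ < M * (1 - ‖z‖)}

/-- `F` has non-tangential limit `L` at the boundary point `ζ` if `F(z) → L` as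
`z → ζ` within every Stolz angle at `ζ`. -/
def HasNontangentialLimit (F : ℂ → ℂ) (ζ L : ℂ) : Prop :=
  ∀ M : ℝ, 1 < M → Tendsto F (nhdsWithin ζ (stolzAngle ζ M)) (nhds L)

/-- Abel's theorem in its non-tangential form: if `F(z) = ∑_{n ≥ 0} c(n) zⁿ` on the open
unit disc and the series `∑_{n ≥ 0} c(n) e^{int}` converges to `L` at `t`, then `F(z)`
converges non-tangentially to `L` at `e^{it}`. -/
theorem abel_nontangential (c : ℕ → ℂ) (F : ℂ → ℂ)
    (hF : ∀ z ∈ ball (0 : ℂ) 1, HasSum (fun n : ℕ => c n * z ^ n) (F z))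
    (t : ℝ) (L : ℂ)
    (hconv : Tendsto (fun N : ℕ => ∑ n ∈ Finset.range (N + 1),
        c n * Complex.exp (Complex.I * n * t)) atTop (nhds L)) :
    HasNontangentialLimit F (Complex.exp (Complex.I * t)) L := by
  intro M hM
  set ζ : ℂ := Complex.exp (Complex.I * t) with hζ
  have hζn : ‖ζ‖ = 1 := by
    simp [hζ, Complex.norm_exp]
  have hζne : ζ ≠ 0 := Complex.exp_ne_zero _
  have hpow : ∀ n : ℕ, ζ ^ n = Complex.exp (Complex.I * n * t) := by
    intro n
    rw [hζ, ← Complex.exp_nat_mul]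
    ring_nf
  -- series convergence at 1 for rotated coefficients
  have hconv' : Tendsto (fun n : ℕ => ∑ i ∈ Finset.range n, (c i * ζ ^ i)) atTop (nhds L) := by
    rw [← tendsto_add_atTop_iff_nat 1]
    refine hconv.congr fun N => ?_
    exact Finset.sum_congr rfl fun i _ => by rw [hpow]
  have key := Complex.tendsto_tsum_powerSeries_nhdsWithin_stolzSet
    (f := fun n => c n * ζ ^ n) hconv' (M := M)
  -- rotation maps the Stolz angle at ζ into the Stolz set at 1
  have hmaps : Set.MapsTo (fun z => ζ⁻¹ * z) (stolzAngle ζ M) (Complex.stolzSet M) := by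
    rintro z ⟨h1, h2⟩
    have hninv : ‖ζ⁻¹‖ = 1 := by rw [norm_inv, hζn]; norm_num
    constructor
    · simpa [norm_mul, hninv] using h1
    · have : (1 : ℂ) - ζ⁻¹ * z = ζ⁻¹ * (ζ - z) := by
        field_simp
      simpa [this, norm_mul, hninv] using h2
  have hcont : Tendsto (fun z => ζ⁻¹ * z) (nhdsWithin ζ (stolzAngle ζ M))
      (nhdsWithin 1 (Complex.stolzSet M)) := by
    have hc : ContinuousWithinAt (fun z : ℂ => ζ⁻¹ * z) (stolzAngle ζ M) ζ :=
      ((continuous_const.mul continuous_id : Continuous fun z : ℂ => ζ⁻¹ * z)).continuousWithinAt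
    have h := hc.tendsto_nhdsWithin hmaps
    simpa [inv_mul_cancel₀ hζne] using h
  have hcomp := key.comp hcont
  refine hcomp.congr' ?_
  filter_upwards [self_mem_nhdsWithin] with z hz
  have hzball : z ∈ ball (0 : ℂ) 1 := by
    simpa [Metric.mem_ball, dist_eq_norm] using hz.1
  have hsum := hF z hzball
  have heq : ∀ n : ℕ, (c n * ζ ^ n) * (ζ⁻¹ * z) ^ n = c n * z ^ n := by
    intro n
    rw [mul_pow]
    have : ζ ^ n * (ζ⁻¹ ^ n * z ^ n) = (ζ * ζ⁻¹) ^ n * z ^ n := by ring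
    rw [mul_assoc, this, mul_inv_cancel₀ hζne, one_pow, one_mul]
  calc (fun z => ∑' n, (c n * ζ ^ n) * z ^ n) ((fun z => ζ⁻¹ * z) z)
      = ∑' n, c n * z ^ n := by simp only []; exact tsum_congr heq
    _ = F z := hsum.tsum_eq
end

section
/- If μ is a complex Borel measure on the circle whose Fourier coefficients μ̂(n) tend to 0 as n → +∞, then μ̂(n) also tends to 0 as n → −∞. -/
open MeasureTheory Complex Filter

/-- The `n`-th Fourier coefficient of the complex measure `f dν` on the circle `ℝ/2πℤ`
(every complex Borel measure on the circle can be written this way, e.g. with `ν` its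
total variation and `f` the Radon–Nikodym density): `μ̂(n) = ∫ e^{-int} f(t) dν(t)`. -/
noncomputable def cmFourierCoeff (ν : Measure (AddCircle (2 * Real.pi)))
    (f : AddCircle (2 * Real.pi) → ℂ) (n : ℤ) : ℂ :=
  ∫ x, (fourier (-n) x : ℂ) * f x ∂ν

lemma fourier_norm_apply {T : ℝ} (m : ℤ) (x : AddCircle T) : ‖(fourier m x : ℂ)‖ = 1 :=
  Circle.norm_coe _

lemma rajchman_key (ν : Measure (AddCircle (2 * Real.pi))) [IsFiniteMeasure ν]
    (f : AddCircle (2 * Real.pi) → ℂ) (hfm : StronglyMeasurable f) (hf : Integrable f ν)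
    (l : Filter ℤ) (hl : ∀ k : ℤ, Tendsto (fun n => n - k) l l)
    (h0 : Tendsto (cmFourierCoeff ν f) l (nhds 0))
    (h : AddCircle (2 * Real.pi) → ℂ) (hm : Measurable h) (hb : ∀ x, ‖h x‖ ≤ 1) :
    Tendsto (cmFourierCoeff ν (fun x => h x * f x)) l (nhds 0) := by
  haveI : Fact (0 < 2 * Real.pi) := ⟨by positivity⟩
  -- integrability of bounded × f
  have int_mul : ∀ (u : AddCircle (2 * Real.pi) → ℂ) (C : ℝ),
      AEStronglyMeasurable u ν → (∀ x, ‖u x‖ ≤ C) → ∀ n : ℤ,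
      Integrable (fun x => (fourier (-n) x : ℂ) * (u x * f x)) ν := by
    intro u C hu hC n
    have := hf.bdd_mul ((map_continuous (fourier (-n))).aestronglyMeasurable.mul hu)
      (Eventually.of_forall fun x => by
        simp only [Pi.mul_apply]
        rw [norm_mul, fourier_norm_apply, one_mul]
        exact hC x)
    simpa [mul_assoc] using this
  -- the trig-polynomial case
  have trig : ∀ q : C(AddCircle (2 * Real.pi), ℂ),
      q ∈ Submodule.span ℂ (Set.range (@fourier (2 * Real.pi))) →
      Tendsto (cmFourierCoeff ν (fun x => q x * f x)) l (nhds 0) := by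
    intro q hq
    induction hq using Submodule.span_induction with
    | mem q hq =>
      obtain ⟨k, rfl⟩ := hq
      have heq : cmFourierCoeff ν (fun x => fourier k x * f x)
          = fun n => cmFourierCoeff ν f (n - k) := by
        funext n
        unfold cmFourierCoeff
        refine integral_congr_ae (Eventually.of_forall fun x => ?_)
        show (fourier (-n)) x * ((fourier k) x * f x) = (fourier (-(n - k))) x * f x
        rw [show -(n - k) = -n + k by ring, fourier_add]
        ring
      rw [heq]
      exact h0.comp (hl k)
    | zero =>
      have heq : cmFourierCoeff ν (fun x => (0 : C(AddCircle (2 * Real.pi), ℂ)) x * f x)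
          = fun _ : ℤ => (0 : ℂ) := by
        funext n
        unfold cmFourierCoeff
        simp
      rw [heq]
      exact tendsto_const_nhds
    | add a b ha hb iha ihb =>
      have heq : cmFourierCoeff ν (fun x => (a + b) x * f x)
          = fun n => cmFourierCoeff ν (fun x => a x * f x) n
            + cmFourierCoeff ν (fun x => b x * f x) n := by
        funext n
        unfold cmFourierCoeff
        rw [← integral_add (int_mul a ‖a‖ a.continuous.aestronglyMeasurable
            (fun x => a.norm_coe_le_norm x) n)
          (int_mul b ‖b‖ b.continuous.aestronglyMeasurable (fun x => b.norm_coe_le_norm x) n)]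
        refine integral_congr_ae (Eventually.of_forall fun x => ?_)
        show (fourier (-n)) x * ((a + b) x * f x)
          = (fourier (-n)) x * (a x * f x) + (fourier (-n)) x * (b x * f x)
        simp only [ContinuousMap.add_apply]; ring
      rw [heq]
      simpa using iha.add ihb
    | smul c q hq ih =>
      have heq : cmFourierCoeff ν (fun x => (c • q) x * f x)
          = fun n => c • cmFourierCoeff ν (fun x => q x * f x) n := by
        funext n
        unfold cmFourierCoeff
        rw [← integral_smul]
        refine integral_congr_ae (Eventually.of_forall fun x => ?_)
        show (fourier (-n)) x * ((c • q) x * f x) = c • ((fourier (-n)) x * (q x * f x))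
        simp only [ContinuousMap.smul_apply, smul_eq_mul]; ring
      rw [heq]
      simpa using ih.const_smul c
  -- set up the measure ρ = ‖f‖ dν
  set ρ : Measure (AddCircle (2 * Real.pi)) :=
    ν.withDensity (fun x => (‖f x‖₊ : ENNReal)) with hρ
  haveI : IsFiniteMeasure ρ := isFiniteMeasure_withDensity hf.2.ne
  have hInt : Integrable h ρ :=
    ⟨hm.aestronglyMeasurable.mono_ac (withDensity_absolutelyContinuous _ _),
      HasFiniteIntegral.of_bounded (C := 1) (Eventually.of_forall hb)⟩
  rw [NormedAddCommGroup.tendsto_nhds_zero]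
  intro ε hε
  -- continuous approximation
  obtain ⟨g, hg, hgi⟩ := hInt.exists_boundedContinuous_lintegral_sub_le
    (ε := ENNReal.ofReal (ε / 4)) (by simp only [ne_eq, ENNReal.ofReal_eq_zero, not_le]; linarith)
  set B : ℝ := (ρ Set.univ).toReal with hB
  have hB0 : 0 ≤ B := ENNReal.toReal_nonneg
  set δ : ℝ := (ε / 4) / (B + 1) with hδdef
  have hδ : 0 < δ := by positivity
  -- trig polynomial approximation of g
  have hgmem : (g.toContinuousMap : C(AddCircle (2 * Real.pi), ℂ)) ∈
      closure ((Submodule.span ℂ (Set.range (@fourier (2 * Real.pi)))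
        : Submodule ℂ C(AddCircle (2 * Real.pi), ℂ)) : Set C(AddCircle (2 * Real.pi), ℂ)) := by
    have h1 := span_fourier_closure_eq_top (T := 2 * Real.pi)
    have h2 : (g.toContinuousMap : C(AddCircle (2 * Real.pi), ℂ)) ∈
        (Submodule.span ℂ (Set.range (@fourier (2 * Real.pi)))).topologicalClosure := by
      rw [h1]; trivial
    exact h2
  obtain ⟨q, hqmem, hqdist⟩ := Metric.mem_closure_iff.mp hgmem δ hδ
  have hqpt : ∀ x, ‖g x - q x‖ ≤ δ := fun x =>
    le_of_lt (lt_of_le_of_lt ((dist_eq_norm _ _).symm.trans_le (ContinuousMap.dist_apply_le_dist (f := g.toContinuousMap) (g := q) x)) hqdist)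
  have hqb : ∀ x, ‖q x‖ ≤ ‖q‖ := fun x => q.norm_coe_le_norm x
  -- key bound
  have key_bound : ∀ n : ℤ, ‖cmFourierCoeff ν (fun x => h x * f x) n
      - cmFourierCoeff ν (fun x => q x * f x) n‖ ≤ ε / 2 := by
    intro n
    have hsub : cmFourierCoeff ν (fun x => h x * f x) n
        - cmFourierCoeff ν (fun x => q x * f x) n
        = ∫ x, (fourier (-n) x : ℂ) * ((h x - q x) * f x) ∂ν := by
      unfold cmFourierCoeff
      rw [← integral_sub (int_mul h 1 hm.aestronglyMeasurable hb n)
        (int_mul q ‖q‖ q.continuous.aestronglyMeasurable hqb n)]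
      refine integral_congr_ae (Eventually.of_forall fun x => ?_)
      ring
    rw [hsub]
    refine le_trans (norm_integral_le_lintegral_norm
      (μ := ν) (fun x => (fourier (-n) x : ℂ) * ((h x - q x) * f x))) ?_
    have hpt : ∀ x, ENNReal.ofReal ‖(fourier (-n) x : ℂ) * ((h x - q x) * f x)‖
        = (‖f x‖₊ : ENNReal) * (‖h x - q x‖₊ : ENNReal) := by
      intro x
      rw [norm_mul, fourier_norm_apply, one_mul, ofReal_norm, enorm_eq_nnnorm, nnnorm_mul,
        ENNReal.coe_mul, mul_comm]
    have hli : ∫⁻ x, ENNReal.ofReal ‖(fourier (-n) x : ℂ) * ((h x - q x) * f x)‖ ∂ν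
        = ∫⁻ x, (‖h x - q x‖₊ : ENNReal) ∂ρ := by
      rw [hρ, lintegral_withDensity_eq_lintegral_mul _
        (hfm.measurable.nnnorm.coe_nnreal_ennreal)
        ((show Measurable fun x => h x - q x from hm.sub q.continuous.measurable).nnnorm.coe_nnreal_ennreal)]
      exact lintegral_congr fun x => hpt x
    rw [hli]
    have htr : ∫⁻ x, (‖h x - q x‖₊ : ENNReal) ∂ρ
        ≤ ENNReal.ofReal (ε / 4) + ENNReal.ofReal δ * ρ Set.univ := by
      have hle : ∫⁻ x, (‖h x - q x‖₊ : ENNReal) ∂ρ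
          ≤ (∫⁻ x, (‖h x - g x‖₊ : ENNReal) ∂ρ) + ∫⁻ x, (‖g x - q x‖₊ : ENNReal) ∂ρ := by
        rw [← lintegral_add_left ((show Measurable fun x => h x - g x from hm.sub g.continuous.measurable).nnnorm.coe_nnreal_ennreal)]
        refine lintegral_mono fun x => ?_
        rw [← ENNReal.coe_add]
        refine ENNReal.coe_le_coe.2 ?_
        rw [← nndist_eq_nnnorm, ← nndist_eq_nnnorm, ← nndist_eq_nnnorm]
        exact nndist_triangle _ (g x) _
      refine le_trans hle (add_le_add hg ?_)
      calc ∫⁻ x, (‖g x - q x‖₊ : ENNReal) ∂ρ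
          ≤ ∫⁻ _, ENNReal.ofReal δ ∂ρ := lintegral_mono fun x => by
            rw [← enorm_eq_nnnorm, ← ofReal_norm]; exact ENNReal.ofReal_le_ofReal (hqpt x)
        _ = ENNReal.ofReal δ * ρ Set.univ := lintegral_const _
    have hfin : ENNReal.ofReal (ε / 4) + ENNReal.ofReal δ * ρ Set.univ ≠ ⊤ :=
      ENNReal.add_ne_top.2 ⟨ENNReal.ofReal_ne_top,
        ENNReal.mul_ne_top ENNReal.ofReal_ne_top (measure_ne_top ρ _)⟩
    refine le_trans (ENNReal.toReal_mono hfin htr) ?_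
    rw [ENNReal.toReal_add ENNReal.ofReal_ne_top
        (ENNReal.mul_ne_top ENNReal.ofReal_ne_top (measure_ne_top ρ _)),
      ENNReal.toReal_ofReal (by linarith), ENNReal.toReal_mul,
      ENNReal.toReal_ofReal hδ.le]
    have hδB : δ * B ≤ ε / 4 := by
      rw [hδdef]
      rw [div_mul_eq_mul_div, div_le_iff₀ (by linarith)]
      nlinarith
    rw [← hB]
    linarith
  have htq := trig q hqmem
  rw [NormedAddCommGroup.tendsto_nhds_zero] at htq
  filter_upwards [htq (ε / 2) (by linarith)] with n hn
  have : cmFourierCoeff ν (fun x => h x * f x) n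
      = (cmFourierCoeff ν (fun x => h x * f x) n - cmFourierCoeff ν (fun x => q x * f x) n)
        + cmFourierCoeff ν (fun x => q x * f x) n := by ring
  rw [this]
  calc ‖_ + _‖ ≤ _ + _ := norm_add_le _ _
    _ < ε := by have := key_bound n; linarith
/-- Rajchman's symmetry theorem: if the Fourier coefficients of a complex Borel measure
on the circle tend to `0` as `n → +∞`, then they also tend to `0` as `n → −∞`. -/
theorem rajchman_symmetry (ν : Measure (AddCircle (2 * Real.pi))) [IsFiniteMeasure ν]
    (f : AddCircle (2 * Real.pi) → ℂ) (hf : Integrable f ν)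
    (h : Tendsto (fun n : ℤ => cmFourierCoeff ν f n) atTop (nhds 0)) :
    Tendsto (fun n : ℤ => cmFourierCoeff ν f n) atBot (nhds 0) := by
  haveI : Fact (0 < 2 * Real.pi) := ⟨by positivity⟩
  obtain ⟨F, hFm, hFeq⟩ := hf.1
  have hc : cmFourierCoeff ν f = cmFourierCoeff ν F := by
    funext n
    unfold cmFourierCoeff
    refine integral_congr_ae (hFeq.mono fun x hx => ?_)
    show (fourier (-n)) x * f x = (fourier (-n)) x * F x
    rw [hx]
  have hF : Integrable F ν := hf.congr hFeq
  have hπ : Tendsto (cmFourierCoeff ν F) atTop (nhds 0) := by rw [← hc]; exact h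
  -- the phase function
  set p : AddCircle (2 * Real.pi) → ℂ :=
    fun x => if F x = 0 then 0 else F x / ((‖F x‖ : ℝ) : ℂ) with hp
  have hpm : Measurable p := by
    apply Measurable.ite (hFm.measurable (measurableSet_singleton 0)) measurable_const
    exact hFm.measurable.div (Complex.measurable_ofReal.comp hFm.measurable.norm)
  have hpb : ∀ x, ‖p x‖ ≤ 1 := by
    intro x
    by_cases hx : F x = 0
    · simp [hp, hx]
    · simp only [hp, hx, if_false]
      rw [norm_div, Complex.norm_real, Real.norm_eq_abs, _root_.abs_of_nonneg (norm_nonneg _),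
        div_self (norm_ne_zero_iff.2 hx)]
  have hconj : ∀ x, (starRingEnd ℂ) (p x) * F x = ((‖F x‖ : ℝ) : ℂ) := by
    intro x
    by_cases hx : F x = 0
    · simp [hp, hx]
    · simp only [hp, hx, if_false]
      rw [map_div₀, Complex.conj_ofReal, div_mul_eq_mul_div]
      rw [show (starRingEnd ℂ) (F x) * F x = F x * (starRingEnd ℂ) (F x) from mul_comm _ _,
        Complex.mul_conj]
      rw [Complex.normSq_eq_norm_sq]
      have hn : ((‖F x‖ : ℝ) : ℂ) ≠ 0 := Complex.ofReal_ne_zero.2 (norm_ne_zero_iff.2 hx)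
      rw [Complex.ofReal_pow, sq, mul_div_assoc, div_self hn, mul_one]
  have hl_top : ∀ k : ℤ, Tendsto (fun n : ℤ => n - k) atTop atTop := fun k => by
    simpa [sub_eq_add_neg] using tendsto_atTop_add_const_right atTop (-k)
      (tendsto_id : Tendsto _ atTop atTop)
  have hl_bot : ∀ k : ℤ, Tendsto (fun n : ℤ => n - k) atBot atBot := fun k => by
    simpa [sub_eq_add_neg] using tendsto_atBot_add_const_right atBot (-k)
      (tendsto_id : Tendsto _ atBot atBot)
  -- step 1: coefficients of |F| dν vanish at +∞
  have hpcm : Measurable fun x => (starRingEnd ℂ) (p x) := Complex.continuous_conj.measurable.comp hpm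
  have hpcb : ∀ x, ‖(starRingEnd ℂ) (p x)‖ ≤ 1 := fun x => by
    rw [RCLike.norm_conj]; exact hpb x
  have h1 := rajchman_key ν F hFm hF atTop hl_top hπ _ hpcm hpcb
  set G : AddCircle (2 * Real.pi) → ℂ := fun x => ((‖F x‖ : ℝ) : ℂ) with hG
  have hgeq : (fun x => (starRingEnd ℂ) (p x) * F x) = G := funext hconj
  rw [hgeq] at h1
  -- symmetry of the coefficients of the positive measure |F| dν
  have hsym : ∀ n : ℤ, cmFourierCoeff ν G (-n) = (starRingEnd ℂ) (cmFourierCoeff ν G n) := by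
    intro n
    unfold cmFourierCoeff
    rw [← integral_conj]
    refine integral_congr_ae (Eventually.of_forall fun x => ?_)
    show (fourier (- -n)) x * G x = (starRingEnd ℂ) ((fourier (-n)) x * G x)
    simp only [hG]
    rw [map_mul, ← fourier_neg, neg_neg, Complex.conj_ofReal]
  have h2 : Tendsto (cmFourierCoeff ν G) atBot (nhds 0) := by
    have h3 : Tendsto (fun n : ℤ => cmFourierCoeff ν G (-n)) atTop (nhds 0) := by
      simp only [hsym]
      have := (Complex.continuous_conj.tendsto 0).comp h1
      simpa [Function.comp_def] using this
    have h4 := h3.comp tendsto_neg_atBot_atTop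
    simpa [Function.comp_def, neg_neg] using h4
  -- step 2: back to F via the phase, at -∞
  have hGm : StronglyMeasurable G :=
    (Complex.measurable_ofReal.comp hFm.measurable.norm).stronglyMeasurable
  have hGint : Integrable G ν := hF.norm.ofReal
  have h5 := rajchman_key ν G hGm hGint atBot hl_bot h2 p hpm hpb
  have hpG : (fun x => p x * G x) = F := by
    funext x
    by_cases hx : F x = 0
    · simp [hp, hG, hx]
    · simp only [hp, hG, hx, if_false]
      exact div_mul_cancel₀ _ (by exact_mod_cast norm_ne_zero_iff.2 hx)
  rw [hpG] at h5
  rw [hc]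
  exact h5
end

section
/- If μ is a complex Borel measure on the circle such that ∑_{n>0} |μ̂(n)|²/n < ∞, then also ∑_{n<0} |μ̂(n)|²/|n| < ∞. -/
open MeasureTheory Complex Filter
open Finset ComplexConjugate



lemma abel_bound (S : ℕ → ℂ) (G : ℝ) (hS : ∀ m, ‖S m‖ ≤ G) (A : ℕ) (hA : S A = 0)
    (B : ℕ) (hAB : A ≤ B) :
    ‖∑ n ∈ Finset.Ico A B, (S (n+1) - S n) / ((n : ℂ) + 1)‖ ≤ G / (A + 1) := by
  have hG : 0 ≤ G := le_trans (norm_nonneg _) (hS 0)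
  have hcne : ∀ m : ℕ, ((m : ℂ) + 1) ≠ 0 := by
    intro m hcon
    have := congrArg Complex.re hcon
    simp at this
    nlinarith [this, Nat.cast_nonneg (α := ℝ) m]
  have key : ∀ B, A ≤ B →
      ‖(∑ n ∈ Finset.Ico A B, (S (n+1) - S n) / ((n : ℂ) + 1)) - S B / ((B : ℂ) + 1)‖
        ≤ G * (1 / (A + 1) - 1 / (B + 1)) := by
    intro B hB
    induction B, hB using Nat.le_induction with
    | base =>
        simp [hA]
    | succ B hB ih =>
        rw [Finset.sum_Ico_succ_top hB]
        have e1 : (∑ n ∈ Finset.Ico A B, (S (n+1) - S n) / ((n : ℂ) + 1))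
              + (S (B+1) - S B) / ((B : ℂ) + 1) - S (B+1) / (((B+1 : ℕ) : ℂ) + 1)
            = ((∑ n ∈ Finset.Ico A B, (S (n+1) - S n) / ((n : ℂ) + 1)) - S B / ((B : ℂ) + 1))
              + S (B+1) * (1 / ((B : ℂ) + 1) - 1 / ((B : ℂ) + 1 + 1)) := by
          push_cast
          have h1 := hcne B
          have h2 : ((B : ℂ) + 1 + 1) ≠ 0 := by
            have := hcne (B + 1)
            push_cast at this
            exact this
          field_simp
          ring
        rw [e1]
        refine le_trans (norm_add_le _ _) ?_
        have e2 : ‖S (B+1) * (1 / ((B : ℂ) + 1) - 1 / ((B : ℂ) + 1 + 1))‖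
            ≤ G * (1 / ((B:ℝ) + 1) - 1 / ((B:ℝ) + 1 + 1)) := by
          rw [norm_mul]
          have e3 : (1 / ((B : ℂ) + 1) - 1 / ((B : ℂ) + 1 + 1))
              = ((1 / ((B:ℝ) + 1) - 1 / ((B:ℝ) + 1 + 1) : ℝ) : ℂ) := by push_cast; ring
          rw [e3, Complex.norm_real]
          have h4 : (0:ℝ) ≤ 1 / ((B:ℝ) + 1) - 1 / ((B:ℝ) + 1 + 1) := by
            rw [sub_nonneg]
            have hb0 : (0:ℝ) < (B:ℝ) + 1 := by positivity
            gcongr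
            linarith
          rw [Real.norm_of_nonneg h4]
          exact mul_le_mul_of_nonneg_right (hS _) h4
        refine le_trans (add_le_add ih e2) ?_
        push_cast
        ring_nf
        nlinarith [hG]
  have h2 := key B hAB
  have h3 : ‖S B / ((B : ℂ) + 1)‖ ≤ G * (1 / (B + 1)) := by
    rw [norm_div]
    have e : ((B : ℂ) + 1) = (((B:ℝ) + 1 : ℝ) : ℂ) := by push_cast; ring
    rw [e, Complex.norm_real, Real.norm_of_nonneg (by positivity)]
    rw [mul_one_div, div_eq_mul_inv, div_eq_mul_inv]
    gcongr
    exact hS B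
  calc ‖∑ n ∈ Finset.Ico A B, (S (n+1) - S n) / ((n : ℂ) + 1)‖
      ≤ ‖(∑ n ∈ Finset.Ico A B, (S (n+1) - S n) / ((n : ℂ) + 1)) - S B / ((B : ℂ) + 1)‖
        + ‖S B / ((B : ℂ) + 1)‖ := by
        conv_lhs => rw [show (∑ n ∈ Finset.Ico A B, (S (n+1) - S n) / ((n : ℂ) + 1))
            = ((∑ n ∈ Finset.Ico A B, (S (n+1) - S n) / ((n : ℂ) + 1)) - S B / ((B : ℂ) + 1))
              + S B / ((B : ℂ) + 1) from by ring]
        exact norm_add_le _ _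
    _ ≤ G * (1 / (A + 1) - 1 / (B + 1)) + G * (1 / (B + 1)) := add_le_add h2 h3
    _ = G / (A + 1) := by ring


/-- Norm bound for geometric partial sums `∑_{A ≤ n < m} u^{n+1}` on the unit circle. -/
lemma geom_partial_bound (u : ℂ) (hu : ‖u‖ = 1) (hne : u ≠ 1) (A m : ℕ) :
    ‖∑ n ∈ Finset.Ico A m, u ^ (n+1)‖ ≤ 2 / ‖1 - u‖ := by
  have hd : 0 < ‖1 - u‖ := by
    rw [norm_pos_iff, sub_ne_zero]
    exact fun hcon => hne hcon.symm
  rcases le_or_gt m A with hmA | hAm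
  · rw [Finset.Ico_eq_empty (by omega), Finset.sum_empty, norm_zero]
    positivity
  · have hsum : ∑ n ∈ Finset.Ico A m, u ^ (n+1) = u * ((u ^ m - u ^ A) / (u - 1)) := by
      rw [← geom_sum_Ico hne hAm.le, Finset.mul_sum]
      exact Finset.sum_congr rfl fun n _ => by ring
    rw [hsum, norm_mul, hu, one_mul, norm_div]
    rw [norm_sub_rev (1:ℂ) u] at *
    gcongr
    calc ‖u ^ m - u ^ A‖ ≤ ‖u ^ m‖ + ‖u ^ A‖ := norm_sub_le _ _
      _ = 2 := by rw [norm_pow, norm_pow, hu]; norm_num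


lemma pow_sub_one_bound (z : ℂ) (hz : ‖z‖ = 1) (k : ℕ) : ‖z ^ k - 1‖ ≤ k * ‖z - 1‖ := by
  induction k with
  | zero => simp
  | succ k ih =>
      have e : z ^ (k+1) - 1 = z ^ k * (z - 1) + (z ^ k - 1) := by ring
      rw [e]
      calc ‖z ^ k * (z - 1) + (z ^ k - 1)‖ ≤ ‖z ^ k * (z - 1)‖ + ‖z ^ k - 1‖ := norm_add_le _ _
        _ ≤ 1 * ‖z - 1‖ + k * ‖z - 1‖ := by
            rw [norm_mul, norm_pow, hz, one_pow]
            exact add_le_add le_rfl ih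
        _ = (k + 1 : ℕ) * ‖z - 1‖ := by push_cast; ring

/-- Tail bound via Abel summation: for `u` on the unit circle, `u ≠ 1`,
`‖∑_{A ≤ n < B} u^{n+1}/(n+1)‖ ≤ (2/‖1-u‖)/(A+1)`. -/
lemma tail_bound (u : ℂ) (hu : ‖u‖ = 1) (hne : u ≠ 1) (A B : ℕ) (hAB : A ≤ B) :
    ‖∑ n ∈ Finset.Ico A B, u ^ (n+1) / ((n : ℂ) + 1)‖ ≤ (2 / ‖1 - u‖) / (A + 1) := by
  set S : ℕ → ℂ := fun m => ∑ n ∈ Finset.Ico A m, u ^ (n+1) with hSdef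
  have hS : ∀ m, ‖S m‖ ≤ 2 / ‖1 - u‖ := fun m => geom_partial_bound u hu hne A m
  have hA : S A = 0 := by simp [hSdef]
  have hstep : ∀ n, A ≤ n → S (n+1) - S n = u ^ (n+1) := by
    intro n hn
    simp only [hSdef]
    rw [Finset.sum_Ico_succ_top hn]
    ring
  have := abel_bound S (2 / ‖1 - u‖) hS A hA B hAB
  have e : ∑ n ∈ Finset.Ico A B, u ^ (n+1) / ((n : ℂ) + 1)
      = ∑ n ∈ Finset.Ico A B, (S (n+1) - S n) / ((n : ℂ) + 1) := by
    refine Finset.sum_congr rfl fun n hn => ?_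
    rw [hstep n (Finset.mem_Ico.mp hn).1]
  rw [e]
  exact this

/-- The key uniform bound: partial sums of `∑ (z^n - z^{-n})/n` are bounded by 10
on the unit circle. -/
lemma key_bound (z : ℂ) (hz : ‖z‖ = 1) (N : ℕ) :
    ‖∑ n ∈ Finset.range N, (z ^ (n+1) - (z⁻¹) ^ (n+1)) / ((n:ℂ)+1)‖ ≤ 10 := by
  by_cases hz1 : z = 1
  · simp [hz1]
  have hz0 : z ≠ 0 := by intro h; rw [h] at hz; simp at hz
  have hd : 0 < ‖1 - z‖ := by
    rw [norm_pos_iff, sub_ne_zero]; exact fun h => hz1 h.symm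
  set d : ℝ := ‖1 - z‖ with hddef
  have hd2 : d ≤ 2 := by
    calc ‖1 - z‖ ≤ ‖(1:ℂ)‖ + ‖z‖ := norm_sub_le _ _
      _ = 2 := by rw [hz]; norm_num
  have hwnorm : ‖z⁻¹‖ = 1 := by rw [norm_inv, hz]; norm_num
  have hw1 : z⁻¹ ≠ 1 := by
    rw [ne_eq, inv_eq_one]; exact hz1
  have hwd : ‖1 - z⁻¹‖ = d := by
    have e : 1 - z⁻¹ = z⁻¹ * (z - 1) := by field_simp
    rw [e, norm_mul, hwnorm, one_mul, norm_sub_rev]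
  set M : ℕ := ⌈1/d⌉₊ with hMdef
  have hM1 : 1/d ≤ (M:ℝ) := Nat.le_ceil _
  have hM2 : (M:ℝ) < 1/d + 1 := Nat.ceil_lt_add_one (by positivity)
  have hdM : 1 ≤ d * M := (div_le_iff₀' hd).mp hM1
  set A : ℕ := min M N with hAdef
  have hsplit : ∑ n ∈ Finset.range N, (z ^ (n+1) - (z⁻¹) ^ (n+1)) / ((n:ℂ)+1)
      = (∑ n ∈ Finset.Ico 0 A, (z ^ (n+1) - (z⁻¹) ^ (n+1)) / ((n:ℂ)+1))
        + ∑ n ∈ Finset.Ico A N, (z ^ (n+1) - (z⁻¹) ^ (n+1)) / ((n:ℂ)+1) := by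
    rw [Finset.range_eq_Ico, ← Finset.sum_Ico_consecutive _ (Nat.zero_le A) (min_le_right M N)]
  rw [hsplit]
  have part1 : ‖∑ n ∈ Finset.Ico 0 A, (z ^ (n+1) - (z⁻¹) ^ (n+1)) / ((n:ℂ)+1)‖ ≤ 6 := by
    calc ‖∑ n ∈ Finset.Ico 0 A, (z ^ (n+1) - (z⁻¹) ^ (n+1)) / ((n:ℂ)+1)‖
        ≤ ∑ n ∈ Finset.Ico 0 A, ‖(z ^ (n+1) - (z⁻¹) ^ (n+1)) / ((n:ℂ)+1)‖ :=
          norm_sum_le _ _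
      _ ≤ ∑ n ∈ Finset.Ico 0 A, 2 * d := by
          refine Finset.sum_le_sum fun n _ => ?_
          rw [norm_div]
          have hsub : z ^ (n+1) - (z⁻¹) ^ (n+1) = (z⁻¹) ^ (n+1) * (z ^ (2*(n+1)) - 1) := by
            have h1 : (z * z⁻¹) ^ (n+1) = 1 := by rw [mul_inv_cancel₀ hz0, one_pow]
            linear_combination (-(z ^ (n+1))) * h1
          have hnum : ‖z ^ (n+1) - (z⁻¹) ^ (n+1)‖ ≤ (2*(n+1)) * d := by
            rw [hsub, norm_mul, norm_pow, hwnorm, one_pow, one_mul]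
            have := pow_sub_one_bound z hz (2*(n+1))
            rw [norm_sub_rev z 1] at this
            calc ‖z ^ (2*(n+1)) - 1‖ ≤ (2*(n+1) : ℕ) * ‖1 - z‖ := by exact_mod_cast this
              _ = (2*(n+1)) * d := by push_cast; ring
          have hden : ‖((n:ℂ)+1)‖ = (n:ℝ) + 1 := by
            rw [show ((n:ℂ)+1) = (((n:ℝ)+1 : ℝ) : ℂ) from by push_cast; ring,
              Complex.norm_real, Real.norm_of_nonneg (by positivity)]
          rw [hden, div_le_iff₀ (by positivity)]
          calc ‖z ^ (n+1) - (z⁻¹) ^ (n+1)‖ ≤ (2*((n:ℝ)+1)) * d := by exact_mod_cast hnum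
            _ = 2 * d * ((n:ℝ)+1) := by ring
      _ = A * (2 * d) := by
          rw [Finset.sum_const, Nat.card_Ico, Nat.sub_zero, nsmul_eq_mul]
      _ ≤ M * (2 * d) := by
          have : (A:ℝ) ≤ M := by exact_mod_cast Nat.cast_le.mpr (min_le_left M N)
          nlinarith [hd]
      _ ≤ 6 := by
          have h1d : (1/d) * d = 1 := by field_simp
          nlinarith [mul_lt_mul_of_pos_right hM2 (show (0:ℝ) < 2*d by positivity), hd2, hd]
  have part2 : ‖∑ n ∈ Finset.Ico A N, (z ^ (n+1) - (z⁻¹) ^ (n+1)) / ((n:ℂ)+1)‖ ≤ 4 := by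
    rcases le_total N M with hNM | hMN
    · have hAN : A = N := min_eq_right hNM
      rw [hAN]
      simp
    · have hAN : A = M := min_eq_left hMN
      have hsub : ∑ n ∈ Finset.Ico A N, (z ^ (n+1) - (z⁻¹) ^ (n+1)) / ((n:ℂ)+1)
          = (∑ n ∈ Finset.Ico A N, z ^ (n+1) / ((n:ℂ)+1))
            - ∑ n ∈ Finset.Ico A N, (z⁻¹) ^ (n+1) / ((n:ℂ)+1) := by
        rw [← Finset.sum_sub_distrib]
        exact Finset.sum_congr rfl fun n _ => by ring
      rw [hsub]
      have hone : ∀ u : ℂ, ‖u‖ = 1 → u ≠ 1 → ‖1 - u‖ = d →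
          ‖∑ n ∈ Finset.Ico A N, u ^ (n+1) / ((n:ℂ)+1)‖ ≤ 2 := by
        intro u hu hu1 hud
        have := tail_bound u hu hu1 A N (hAN ▸ hMN)
        rw [hud] at this
        refine le_trans this ?_
        rw [div_le_iff₀ (by positivity)]
        have hA1 : (M:ℝ) ≤ (A:ℝ) + 1 := by
          rw [hAN]; linarith
        calc 2 / d = 2 * (1/d) := by ring
          _ ≤ 2 * (M:ℝ) := by nlinarith
          _ ≤ 2 * ((A:ℝ)+1) := by nlinarith
      calc ‖(∑ n ∈ Finset.Ico A N, z ^ (n+1) / ((n:ℂ)+1))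
            - ∑ n ∈ Finset.Ico A N, (z⁻¹) ^ (n+1) / ((n:ℂ)+1)‖
          ≤ ‖∑ n ∈ Finset.Ico A N, z ^ (n+1) / ((n:ℂ)+1)‖
            + ‖∑ n ∈ Finset.Ico A N, (z⁻¹) ^ (n+1) / ((n:ℂ)+1)‖ := norm_sub_le _ _
        _ ≤ 2 + 2 := add_le_add (hone z hz hz1 rfl) (hone z⁻¹ hwnorm hw1 hwd)
        _ = 4 := by norm_num
  calc ‖(∑ n ∈ Finset.Ico 0 A, (z ^ (n+1) - (z⁻¹) ^ (n+1)) / ((n:ℂ)+1))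
        + ∑ n ∈ Finset.Ico A N, (z ^ (n+1) - (z⁻¹) ^ (n+1)) / ((n:ℂ)+1)‖
      ≤ ‖∑ n ∈ Finset.Ico 0 A, (z ^ (n+1) - (z⁻¹) ^ (n+1)) / ((n:ℂ)+1)‖
        + ‖∑ n ∈ Finset.Ico A N, (z ^ (n+1) - (z⁻¹) ^ (n+1)) / ((n:ℂ)+1)‖ := norm_add_le _ _
    _ ≤ 6 + 4 := add_le_add part1 part2
    _ = 10 := by norm_num

lemma norm_fourier_eq_one {T : ℝ} (n : ℤ) (x : AddCircle T) : ‖(fourier n x : ℂ)‖ = 1 := by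
  rw [fourier_apply]
  exact Circle.norm_coe _

lemma fourier_sub_eq {T : ℝ} (m : ℤ) (x y : AddCircle T) :
    (fourier m (x - y) : ℂ) = fourier m x * fourier (-m) y := by
  simp_rw [fourier_apply, smul_sub, sub_eq_add_neg, ← neg_smul, AddCircle.toCircle_add,
    Circle.coe_mul]

lemma fourier_eq_zpow (m : ℤ) (r : ℝ) :
    (fourier m (r : AddCircle (2 * Real.pi)) : ℂ) = Complex.exp (r * Complex.I) ^ m := by
  rw [fourier_coe_apply, ← Complex.exp_int_mul]
  congr 1
  have hπ : (Real.pi : ℂ) ≠ 0 := by exact_mod_cast Real.pi_ne_zero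
  push_cast
  field_simp

lemma zpow_coe_succ (z : ℂ) (n : ℕ) : z ^ (((n:ℤ)+1)) = z ^ (n+1) := by
  rw [show (((n:ℤ)+1)) = ((n+1 : ℕ) : ℤ) by push_cast; ring]
  rw [zpow_natCast]

lemma zpow_neg_coe_succ (z : ℂ) (n : ℕ) : z ^ (-((n:ℤ)+1)) = (z⁻¹) ^ (n+1) := by
  rw [show (-((n:ℤ)+1)) = -((n+1 : ℕ) : ℤ) by push_cast; ring]
  rw [zpow_neg]
  rw [zpow_natCast]
  rw [inv_pow]

lemma kernel_bound (N : ℕ) (t : AddCircle (2 * Real.pi)) :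
    ‖∑ n ∈ Finset.range N,
        ((fourier ((n:ℤ)+1) t : ℂ) - (fourier (-((n:ℤ)+1)) t : ℂ)) / ((n:ℂ)+1)‖ ≤ 10 := by
  induction t using QuotientAddGroup.induction_on with
  | H r =>
    set z : ℂ := Complex.exp (r * Complex.I) with hzdef
    have hz : ‖z‖ = 1 := by
      rw [hzdef, Complex.norm_exp_ofReal_mul_I]
    have e : ∀ n : ℕ, ((fourier ((n:ℤ)+1) (r : AddCircle (2 * Real.pi)) : ℂ)
          - (fourier (-((n:ℤ)+1)) (r : AddCircle (2 * Real.pi)) : ℂ))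
        = z ^ (n+1) - (z⁻¹) ^ (n+1) := by
      intro n
      rw [fourier_eq_zpow, fourier_eq_zpow]
      congr 1
      · rw [show (-((n:ℤ)+1)) = -((n+1 : ℕ) : ℤ) by push_cast; ring, zpow_neg, zpow_natCast,
          inv_pow]
    calc ‖∑ n ∈ Finset.range N,
        ((fourier ((n:ℤ)+1) (r : AddCircle (2 * Real.pi)) : ℂ)
          - (fourier (-((n:ℤ)+1)) (r : AddCircle (2 * Real.pi)) : ℂ)) / ((n:ℂ)+1)‖
        = ‖∑ n ∈ Finset.range N, (z ^ (n+1) - (z⁻¹) ^ (n+1)) / ((n:ℂ)+1)‖ := by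
          congr 1
          exact Finset.sum_congr rfl fun n _ => by rw [e n]
      _ ≤ 10 := key_bound z hz N
section MT
variable (ν : Measure (AddCircle (2 * Real.pi))) [IsFiniteMeasure ν]
  (f : AddCircle (2 * Real.pi) → ℂ) (hf : Integrable f ν)
include hf

lemma integrable_term (m : ℤ) (y : AddCircle (2 * Real.pi)) :
    Integrable (fun x => (fourier m (x - y) : ℂ) * f x * conj (f y)) ν := by
  have hmeas : AEStronglyMeasurable (fun x => (fourier m (x - y) : ℂ)) ν :=
    ((fourier m).continuous.comp (continuous_id.sub continuous_const)).aestronglyMeasurable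
  have h1 : Integrable (fun x => (fourier m (x - y) : ℂ) * f x) ν :=
    hf.bdd_mul hmeas (Eventually.of_forall fun x => le_of_eq (norm_fourier_eq_one m (x - y)))
  exact h1.mul_const _

lemma integrable_fourier_mul (m : ℤ) :
    Integrable (fun x => (fourier m x : ℂ) * f x) ν :=
  hf.bdd_mul (fourier m).continuous.aestronglyMeasurable
    (Eventually.of_forall fun x => le_of_eq (norm_fourier_eq_one m x))

lemma integrable_conj_f : Integrable (fun y => conj (f y)) ν := by
  have := (Complex.conjCLE.toContinuousLinearMap : ℂ →L[ℝ] ℂ).integrable_comp hf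
  simpa using this

lemma inner_integral_eq (m : ℤ) (y : AddCircle (2 * Real.pi)) :
    ∫ x, (fourier m (x - y) : ℂ) * f x * conj (f y) ∂ν
      = cmFourierCoeff ν f (-m) * ((fourier (-m) y : ℂ) * conj (f y)) := by
  have e : ∀ x : AddCircle (2 * Real.pi),
      (fourier m (x - y) : ℂ) * f x * conj (f y)
        = ((fourier m x : ℂ) * f x) * ((fourier (-m) y : ℂ) * conj (f y)) := by
    intro x; rw [fourier_sub_eq]; ring
  simp_rw [e]
  rw [integral_mul_const]
  congr 1
  rw [cmFourierCoeff, neg_neg]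

lemma outer_integral_eq (m : ℤ) :
    ∫ y, cmFourierCoeff ν f (-m) * ((fourier (-m) y : ℂ) * conj (f y)) ∂ν
      = ((‖cmFourierCoeff ν f (-m)‖ ^ 2 : ℝ) : ℂ) := by
  rw [integral_const_mul]
  have e : ∀ y : AddCircle (2 * Real.pi),
      (fourier (-m) y : ℂ) * conj (f y) = conj ((fourier m y : ℂ) * f y) := by
    intro y
    rw [map_mul, ← fourier_neg]
  simp_rw [e]
  rw [integral_conj]
  have : (∫ y, (fourier m y : ℂ) * f y ∂ν) = cmFourierCoeff ν f (-m) := by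
    rw [cmFourierCoeff, neg_neg]
  rw [this, Complex.mul_conj, Complex.normSq_eq_norm_sq]

end MT

section MT
variable (ν : Measure (AddCircle (2 * Real.pi))) [IsFiniteMeasure ν]
  (f : AddCircle (2 * Real.pi) → ℂ) (hf : Integrable f ν)

include hf

lemma integrable_outer (c : ℂ) (m : ℤ) :
    Integrable (fun y => c * ((fourier m y : ℂ) * conj (f y))) ν := by
  have h1 : Integrable (fun y => (fourier m y : ℂ) * conj (f y)) ν :=
    (integrable_conj_f ν f hf).bdd_mul (fourier m).continuous.aestronglyMeasurable
      (Eventually.of_forall fun x => le_of_eq (norm_fourier_eq_one m x))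
  exact h1.const_mul c

lemma double_integral_eq (N : ℕ) :
    ∫ y, ∫ x, (∑ n ∈ Finset.range N,
        ((fourier ((n:ℤ)+1) (x - y) : ℂ) - (fourier (-((n:ℤ)+1)) (x - y) : ℂ)) / ((n:ℂ)+1))
        * (f x * conj (f y)) ∂ν ∂ν
      = ∑ n ∈ Finset.range N,
          (((‖cmFourierCoeff ν f (-((n:ℤ)+1))‖ ^ 2 : ℝ) : ℂ)
            - ((‖cmFourierCoeff ν f ((n:ℤ)+1)‖ ^ 2 : ℝ) : ℂ)) / ((n:ℂ)+1) := by
  have hptwise : ∀ y x : AddCircle (2 * Real.pi),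
      (∑ n ∈ Finset.range N,
        ((fourier ((n:ℤ)+1) (x - y) : ℂ) - (fourier (-((n:ℤ)+1)) (x - y) : ℂ)) / ((n:ℂ)+1))
        * (f x * conj (f y))
      = ∑ n ∈ Finset.range N, (1/((n:ℂ)+1)) *
          ((fourier ((n:ℤ)+1) (x - y) : ℂ) * f x * conj (f y)
            - (fourier (-((n:ℤ)+1)) (x - y) : ℂ) * f x * conj (f y)) := by
    intro y x
    rw [Finset.sum_mul]
    exact Finset.sum_congr rfl fun n _ => by ring
  have hinner : ∀ y : AddCircle (2 * Real.pi),
      ∫ x, (∑ n ∈ Finset.range N,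
        ((fourier ((n:ℤ)+1) (x - y) : ℂ) - (fourier (-((n:ℤ)+1)) (x - y) : ℂ)) / ((n:ℂ)+1))
        * (f x * conj (f y)) ∂ν
      = ∑ n ∈ Finset.range N, (1/((n:ℂ)+1)) *
          (cmFourierCoeff ν f (-((n:ℤ)+1)) * ((fourier (-((n:ℤ)+1)) y : ℂ) * conj (f y))
            - cmFourierCoeff ν f ((n:ℤ)+1) * ((fourier ((n:ℤ)+1) y : ℂ) * conj (f y))) := by
    intro y
    simp_rw [hptwise y]
    rw [integral_finset_sum]
    · refine Finset.sum_congr rfl fun n _ => ?_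
      rw [integral_const_mul, integral_sub (integrable_term ν f hf _ y)
        (integrable_term ν f hf _ y)]
      congr 1
      rw [inner_integral_eq ν f hf ((n:ℤ)+1) y, inner_integral_eq ν f hf (-((n:ℤ)+1)) y,
        neg_neg]
    · intro n _
      exact (((integrable_term ν f hf _ y).sub (integrable_term ν f hf _ y)).const_mul _)
  rw [integral_congr_ae (Eventually.of_forall hinner)]
  rw [integral_finset_sum]
  · refine Finset.sum_congr rfl fun n _ => ?_
    rw [integral_const_mul, integral_sub (integrable_outer ν f hf _ _)
      (integrable_outer ν f hf _ _)]
    have h1 := outer_integral_eq ν f hf ((n:ℤ)+1)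
    have h2 := outer_integral_eq ν f hf (-((n:ℤ)+1))
    rw [neg_neg] at h2
    rw [h1, h2]
    ring
  · intro n _
    exact (((integrable_outer ν f hf _ _).sub (integrable_outer ν f hf _ _)).const_mul _)

end MT

section MT
variable (ν : Measure (AddCircle (2 * Real.pi))) [IsFiniteMeasure ν]
  (f : AddCircle (2 * Real.pi) → ℂ) (hf : Integrable f ν)

include hf

lemma double_integral_bound (N : ℕ) :
    ‖∫ y, ∫ x, (∑ n ∈ Finset.range N,
        ((fourier ((n:ℤ)+1) (x - y) : ℂ) - (fourier (-((n:ℤ)+1)) (x - y) : ℂ)) / ((n:ℂ)+1))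
        * (f x * conj (f y)) ∂ν ∂ν‖
      ≤ 10 * (∫ x, ‖f x‖ ∂ν) ^ 2 := by
  set L : ℝ := ∫ x, ‖f x‖ ∂ν with hLdef
  have hL0 : 0 ≤ L := integral_nonneg fun x => norm_nonneg _
  have hptbound : ∀ y x : AddCircle (2 * Real.pi),
      ‖(∑ n ∈ Finset.range N,
        ((fourier ((n:ℤ)+1) (x - y) : ℂ) - (fourier (-((n:ℤ)+1)) (x - y) : ℂ)) / ((n:ℂ)+1))
        * (f x * conj (f y))‖ ≤ (10 * ‖f y‖) * ‖f x‖ := by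
    intro y x
    rw [norm_mul, norm_mul, RCLike.norm_conj]
    calc ‖∑ n ∈ Finset.range N,
        ((fourier ((n:ℤ)+1) (x - y) : ℂ) - (fourier (-((n:ℤ)+1)) (x - y) : ℂ)) / ((n:ℂ)+1)‖
          * (‖f x‖ * ‖f y‖)
        ≤ 10 * (‖f x‖ * ‖f y‖) := by
          refine mul_le_mul_of_nonneg_right (kernel_bound N (x - y)) (by positivity)
      _ = (10 * ‖f y‖) * ‖f x‖ := by ring
  have hinner : ∀ y : AddCircle (2 * Real.pi),
      ‖∫ x, (∑ n ∈ Finset.range N,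
        ((fourier ((n:ℤ)+1) (x - y) : ℂ) - (fourier (-((n:ℤ)+1)) (x - y) : ℂ)) / ((n:ℂ)+1))
        * (f x * conj (f y)) ∂ν‖ ≤ (10 * L) * ‖f y‖ := by
    intro y
    refine le_trans (norm_integral_le_integral_norm _) ?_
    have step : ∫ x, ‖(∑ n ∈ Finset.range N,
        ((fourier ((n:ℤ)+1) (x - y) : ℂ) - (fourier (-((n:ℤ)+1)) (x - y) : ℂ)) / ((n:ℂ)+1))
        * (f x * conj (f y))‖ ∂ν ≤ ∫ x, (10 * ‖f y‖) * ‖f x‖ ∂ν := by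
      refine integral_mono_of_nonneg (Eventually.of_forall fun x => norm_nonneg _)
        ((hf.norm.const_mul _)) (Eventually.of_forall fun x => hptbound y x)
    refine le_trans step ?_
    rw [integral_const_mul]
    rw [hLdef]
    ring_nf
    exact le_rfl

  refine le_trans (norm_integral_le_integral_norm _) ?_
  have step2 : ∫ y, ‖∫ x, (∑ n ∈ Finset.range N,
        ((fourier ((n:ℤ)+1) (x - y) : ℂ) - (fourier (-((n:ℤ)+1)) (x - y) : ℂ)) / ((n:ℂ)+1))
        * (f x * conj (f y)) ∂ν‖ ∂ν ≤ ∫ y, (10 * L) * ‖f y‖ ∂ν := by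
    refine integral_mono_of_nonneg (Eventually.of_forall fun y => norm_nonneg _)
      ((hf.norm.const_mul _)) (Eventually.of_forall hinner)
  refine le_trans step2 ?_
  rw [integral_const_mul, ← hLdef]
  ring_nf
  exact le_rfl


end MT

/-- The Hruščev–Peller / Koosis–Pichorides symmetry theorem: for a complex Borel measure
`μ` on the circle, if `∑_{n>0} |μ̂(n)|²/n < ∞` then `∑_{n<0} |μ̂(n)|²/|n| < ∞`. -/
theorem hruscev_peller (ν : Measure (AddCircle (2 * Real.pi))) [IsFiniteMeasure ν]
    (f : AddCircle (2 * Real.pi) → ℂ) (hf : Integrable f ν)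
    (h : Summable fun n : ℕ => ‖cmFourierCoeff ν f (n + 1)‖ ^ 2 / (n + 1 : ℝ)) :
    Summable fun n : ℕ => ‖cmFourierCoeff ν f (-(n + 1))‖ ^ 2 / (n + 1 : ℝ) := by
  set L : ℝ := ∫ x, ‖f x‖ ∂ν with hLdef
  set P : ℕ → ℝ := fun n => ‖cmFourierCoeff ν f (n + 1)‖ ^ 2 / (n + 1 : ℝ) with hPdef
  set Q : ℕ → ℝ := fun n => ‖cmFourierCoeff ν f (-(n + 1))‖ ^ 2 / (n + 1 : ℝ) with hQdef
  have hQ0 : ∀ n, 0 ≤ Q n := by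
    intro n
    rw [hQdef]
    positivity
  have hP0 : ∀ n, 0 ≤ P n := by
    intro n
    rw [hPdef]
    positivity
  refine summable_of_sum_range_le hQ0 (c := (∑' n, P n) + 10 * L ^ 2) fun N => ?_
  have key : ∑ n ∈ Finset.range N, (Q n - P n) ≤ 10 * L ^ 2 := by
    have hcast : ((∑ n ∈ Finset.range N, (Q n - P n) : ℝ) : ℂ)
        = ∑ n ∈ Finset.range N,
          (((‖cmFourierCoeff ν f (-((n:ℤ)+1))‖ ^ 2 : ℝ) : ℂ)
            - ((‖cmFourierCoeff ν f ((n:ℤ)+1)‖ ^ 2 : ℝ) : ℂ)) / ((n:ℂ)+1) := by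
      rw [hQdef, hPdef]
      push_cast
      exact Finset.sum_congr rfl fun n _ => by ring
    have := double_integral_bound ν f hf N
    rw [double_integral_eq ν f hf N, ← hcast] at this
    rw [Complex.norm_real, Real.norm_eq_abs] at this
    calc ∑ n ∈ Finset.range N, (Q n - P n)
        ≤ |∑ n ∈ Finset.range N, (Q n - P n)| := le_abs_self _
      _ ≤ 10 * L ^ 2 := this
  have hPsum : ∑ n ∈ Finset.range N, P n ≤ ∑' n, P n :=
    Summable.sum_le_tsum (Finset.range N) (fun n _ => hP0 n) h
  calc ∑ n ∈ Finset.range N, Q n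
      = ∑ n ∈ Finset.range N, (Q n - P n) + ∑ n ∈ Finset.range N, P n := by
        rw [← Finset.sum_add_distrib]
        exact Finset.sum_congr rfl fun n _ => by ring
    _ ≤ 10 * L ^ 2 + ∑' n, P n := add_le_add key hPsum
    _ = (∑' n, P n) + 10 * L ^ 2 := by ring
end

section
/- For subsets A, B of ℝ, the Hausdorff dimension of the sumset A + B is at most the Hausdorff dimension of A plus the upper Minkowski (box) dimension of B. -/
open MeasureTheory Filter
open scoped Pointwise

/-- `coverNum B δ` is the minimal number of balls of radius `δ` needed to cover `B`
(`⊤` if no finite cover exists). -/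
noncomputable def coverNum (B : Set ℝ) (δ : ℝ) : ℕ∞ :=
  sInf {n : ℕ∞ | ∃ s : Finset ℝ, (s.card : ℕ∞) = n ∧ B ⊆ ⋃ x ∈ s, Metric.ball x δ}

/-- The upper Minkowski (box) dimension of `B ⊆ ℝ`:
`limsup_{δ → 0+} log N(B,δ) / log (1/δ)` (as an extended nonnegative real). -/
noncomputable def upperBoxDim (B : Set ℝ) : ENNReal :=
  Filter.limsup
    (fun δ : ℝ =>
      match coverNum B δ with
      | ⊤ => (⊤ : ENNReal)
      | (n : ℕ) => ENNReal.ofReal (Real.log n / Real.log (1 / δ)))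
    (nhdsWithin 0 (Set.Ioi 0))

open EMetric
open scoped ENNReal NNReal

lemma exists_cover (A : Set ℝ) (d : ℝ) (hA : μH[d] A = 0)
    (e : ℝ≥0∞) (he : 0 < e) (ε : ℝ≥0∞) (hε : 0 < ε) :
    ∃ U : ℕ → Set ℝ, (A ⊆ ⋃ n, U n) ∧ (∀ n, EMetric.diam (U n) ≤ e) ∧
      (∑' n, ⨆ _ : (U n).Nonempty, EMetric.diam (U n) ^ d) < ε := by
  rw [MeasureTheory.Measure.hausdorffMeasure_apply] at hA
  have h1 : (⨅ (U : ℕ → Set ℝ) (_ : A ⊆ ⋃ n, U n) (_ : ∀ n, EMetric.diam (U n) ≤ e),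
      ∑' n, ⨆ _ : (U n).Nonempty, EMetric.diam (U n) ^ d) = 0 := by
    refine le_antisymm ?_ zero_le
    calc _ ≤ _ := le_iSup₂ (f := fun (r : ℝ≥0∞) (_ : 0 < r) =>
        ⨅ (U : ℕ → Set ℝ) (_ : A ⊆ ⋃ n, U n) (_ : ∀ n, EMetric.diam (U n) ≤ r),
          ∑' n, ⨆ _ : (U n).Nonempty, EMetric.diam (U n) ^ d) e he
      _ = 0 := hA
  have h2 : (⨅ (U : ℕ → Set ℝ) (_ : A ⊆ ⋃ n, U n) (_ : ∀ n, EMetric.diam (U n) ≤ e),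
      ∑' n, ⨆ _ : (U n).Nonempty, EMetric.diam (U n) ^ d) < ε := h1 ▸ hε
  simp only [iInf_lt_iff] at h2
  obtain ⟨U, h3, h4, h5⟩ := h2
  exact ⟨U, h3, h4, h5⟩

lemma step (A B : Set ℝ) (s t : ℝ) (hs : 0 < s) (ht : 0 < t)
    (hA : μH[s] A = 0) (δ₀ : ℝ)
    (hB : ∀ δ : ℝ, 0 < δ → δ < δ₀ → ∃ F : Finset ℝ,
      ((F.card : ℝ) ≤ δ ^ (-t) ∧ B ⊆ ⋃ x ∈ F, Metric.ball x δ))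
    (ρ : ℝ) (hρ : 0 < ρ) (hρδ : ρ < δ₀) (ε : ℝ) (hε : 0 < ε) :
    ∃ V : ℕ × ℕ → Set ℝ, (A + B ⊆ ⋃ p, V p) ∧
      (∀ p, EMetric.diam (V p) ≤ ENNReal.ofReal (3 * ρ)) ∧
      (∑' p, EMetric.diam (V p) ^ (s + t)) ≤
        ENNReal.ofReal ((3:ℝ) ^ (s+t)) * (ENNReal.ofReal ε * 2) := by
  classical
  have hst : 0 < s + t := by linarith
  obtain ⟨U, hUcov, hUdiam, hUsum⟩ := exists_cover A s hA (ENNReal.ofReal ρ)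
    (ENNReal.ofReal_pos.2 hρ) (ENNReal.ofReal ε) (ENNReal.ofReal_pos.2 hε)
  have hUtop : ∀ i, EMetric.diam (U i) ≠ ⊤ :=
    fun i => ne_top_of_le_ne_top ENNReal.ofReal_ne_top (hUdiam i)
  set Dr : ℕ → ℝ := fun i => (EMetric.diam (U i)).toReal with hDr
  have hDr0 : ∀ i, 0 ≤ Dr i := fun i => ENNReal.toReal_nonneg
  have hDrρ : ∀ i, Dr i ≤ ρ := fun i => ENNReal.toReal_le_of_le_ofReal hρ.le (hUdiam i)
  set η : ℕ → ℝ := fun i => min ((ε * (2:ℝ)⁻¹ ^ (i+1)) ^ s⁻¹) ρ with hη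
  have hηpos : ∀ i, 0 < η i := fun i => lt_min
    (Real.rpow_pos_of_pos (by positivity) _) hρ
  have hηρ : ∀ i, η i ≤ ρ := fun i => min_le_right _ _
  have hηpow : ∀ i, η i ^ s ≤ ε * (2:ℝ)⁻¹ ^ (i+1) := by
    intro i
    have h1 : η i ^ s ≤ (((ε * (2:ℝ)⁻¹ ^ (i+1)) ^ s⁻¹)) ^ s :=
      Real.rpow_le_rpow (hηpos i).le (min_le_left _ _) hs.le
    rwa [← Real.rpow_natCast (2:ℝ)⁻¹ (i+1), ← Real.rpow_mul (by positivity),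
      inv_mul_cancel₀ hs.ne', Real.rpow_one, Real.rpow_natCast] at h1
  set δ' : ℕ → ℝ := fun i => max (Dr i) (η i) with hδ'
  have hδ'pos : ∀ i, 0 < δ' i := fun i => lt_max_of_lt_right (hηpos i)
  have hδ'ρ : ∀ i, δ' i ≤ ρ := fun i => max_le (hDrρ i) (hηρ i)
  have hδ'δ₀ : ∀ i, δ' i < δ₀ := fun i => lt_of_le_of_lt (hδ'ρ i) hρδ
  have hF := fun i => hB (δ' i) (hδ'pos i) (hδ'δ₀ i)
  set F : ℕ → Finset ℝ := fun i => (hF i).choose with hFdef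
  have hFcard : ∀ i, ((F i).card : ℝ) ≤ (δ' i) ^ (-t) := fun i => (hF i).choose_spec.1
  have hFcov : ∀ i, B ⊆ ⋃ x ∈ F i, Metric.ball x (δ' i) := fun i => (hF i).choose_spec.2
  set L : ℕ → List ℝ := fun i => (F i).toList with hL
  set V : ℕ × ℕ → Set ℝ := fun p =>
    if (U p.1).Nonempty ∧ p.2 < (L p.1).length then
      U p.1 + Metric.ball ((L p.1).getD p.2 0) (δ' p.1) else ∅ with hV
  refine ⟨V, ?_, ?_, ?_⟩
  · rintro z hz
    rw [Set.mem_add] at hz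
    obtain ⟨a, ha, b, hb, rfl⟩ := hz
    obtain ⟨i, hai⟩ := Set.mem_iUnion.1 (hUcov ha)
    obtain ⟨x, hxF, hbx⟩ := Set.mem_iUnion₂.1 (hFcov i hb)
    have hxL : x ∈ L i := by simpa [hL] using Finset.mem_toList.2 hxF
    obtain ⟨j, hj, hget⟩ := List.mem_iff_getElem.1 hxL
    refine Set.mem_iUnion.2 ⟨(i, j), ?_⟩
    have hcond : (U (i,j).1).Nonempty ∧ (i,j).2 < (L (i,j).1).length := ⟨⟨a, hai⟩, hj⟩
    rw [hV]
    simp only [if_pos hcond]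
    have : (L i).getD j 0 = x := by rw [List.getD_eq_getElem _ _ hj, hget]
    rw [this]
    exact Set.add_mem_add hai hbx
  · intro p
    rw [hV]; dsimp only
    split_ifs with hc
    · refine le_trans (ediam_add_le _ _) ?_
      have h1 : EMetric.diam (Metric.ball ((L p.1).getD p.2 0) (δ' p.1)) ≤
          2 * ENNReal.ofReal (δ' p.1) := by
        rw [← Metric.emetric_ball]; exact EMetric.diam_ball
      calc EMetric.diam (U p.1) + EMetric.diam (Metric.ball ((L p.1).getD p.2 0) (δ' p.1))
          ≤ ENNReal.ofReal ρ + 2 * ENNReal.ofReal ρ := by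
            refine add_le_add (hUdiam _) (h1.trans ?_)
            exact mul_le_mul_right (ENNReal.ofReal_le_ofReal (hδ'ρ _)) 2
        _ = ENNReal.ofReal (3 * ρ) := by
            rw [ENNReal.ofReal_mul (by norm_num)]
            rw [show ENNReal.ofReal 3 = 3 by simp [ENNReal.ofReal_ofNat]]
            ring
    · simp [EMetric.diam, Metric.ediam_empty]
  · -- the sum bound
    have hVdiam' : ∀ p : ℕ × ℕ, EMetric.diam (V p) ≤ ENNReal.ofReal (3 * δ' p.1) := by
      intro p; rw [hV]; dsimp only
      split_ifs with hc
      · refine (ediam_add_le _ _).trans ?_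
        have h1 : diam (Metric.ball ((L p.1).getD p.2 0) (δ' p.1)) ≤
            2 * ENNReal.ofReal (δ' p.1) := by
          rw [← Metric.emetric_ball]; exact EMetric.diam_ball
        have h2 : diam (U p.1) ≤ ENNReal.ofReal (δ' p.1) := by
          rw [← ENNReal.ofReal_toReal (hUtop p.1)]
          exact ENNReal.ofReal_le_ofReal (le_max_left _ _)
        calc diam (U p.1) + diam (Metric.ball ((L p.1).getD p.2 0) (δ' p.1))
            ≤ ENNReal.ofReal (δ' p.1) + 2 * ENNReal.ofReal (δ' p.1) := add_le_add h2 h1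
          _ = ENNReal.ofReal (3 * δ' p.1) := by
              rw [ENNReal.ofReal_mul (by norm_num),
                show ENNReal.ofReal 3 = 3 from by simp]; ring
      · simp [EMetric.diam, Metric.ediam_empty]
    have hps : (∑' (p : ℕ × ℕ), EMetric.diam (V p) ^ (s+t))
        = ∑' i, ∑' j, EMetric.diam (V (i, j)) ^ (s+t) :=
      ENNReal.tsum_prod (f := fun i j => EMetric.diam (V (i, j)) ^ (s+t))
    rw [hps]
    have hrow : ∀ i, (∑' j, EMetric.diam (V (i, j)) ^ (s+t)) ≤
        ENNReal.ofReal ((3:ℝ)^(s+t)) * (ENNReal.ofReal (Dr i ^ s) + ENNReal.ofReal (η i ^ s)) := by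
      intro i
      have hzero : ∀ j ∉ Finset.range (L i).length, EMetric.diam (V (i, j)) ^ (s+t) = 0 := by
        intro j hj
        rw [Finset.mem_range, not_lt] at hj
        have he : V (i, j) = ∅ := by
          rw [hV]; dsimp only; rw [if_neg]; rintro ⟨-, h⟩; omega
        rw [he]
        simp [EMetric.diam, Metric.ediam_empty, ENNReal.zero_rpow_of_pos hst]
      rw [tsum_eq_sum hzero]
      have hδ's : δ' i ^ s ≤ Dr i ^ s + η i ^ s := by
        rcases max_choice (Dr i) (η i) with h | h
        · rw [hδ']; dsimp only; rw [h]
          exact le_add_of_nonneg_right (Real.rpow_nonneg (hηpos i).le _)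
        · rw [hδ']; dsimp only; rw [h]
          exact le_add_of_nonneg_left (Real.rpow_nonneg (hDr0 i) _)
      calc ∑ j ∈ Finset.range (L i).length, EMetric.diam (V (i,j)) ^ (s+t)
          ≤ ∑ _j ∈ Finset.range (L i).length, ENNReal.ofReal (3 * δ' i) ^ (s+t) :=
            Finset.sum_le_sum fun j _ => ENNReal.rpow_le_rpow (hVdiam' (i,j)) hst.le
        _ = ((L i).length : ℝ≥0∞) * ENNReal.ofReal (3 * δ' i) ^ (s+t) := by
            rw [Finset.sum_const, Finset.card_range, nsmul_eq_mul]
        _ ≤ ENNReal.ofReal ((δ' i) ^ (-t)) * ENNReal.ofReal ((3 * δ' i) ^ (s+t)) := by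
            refine mul_le_mul' ?_ (le_of_eq ?_)
            · rw [hL]; dsimp only; rw [Finset.length_toList,
                show ((F i).card : ℝ≥0∞) = ENNReal.ofReal ((F i).card : ℝ) by
                  simp [ENNReal.ofReal_natCast]]
              exact ENNReal.ofReal_le_ofReal (hFcard i)
            · exact ENNReal.ofReal_rpow_of_pos (by positivity)
        _ = ENNReal.ofReal ((δ' i) ^ (-t) * (3 * δ' i) ^ (s+t)) :=
            (ENNReal.ofReal_mul (Real.rpow_nonneg (hδ'pos i).le _)).symm
        _ = ENNReal.ofReal ((3:ℝ)^(s+t) * (δ' i ^ s)) := by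
            congr 1
            rw [Real.mul_rpow (by norm_num) (hδ'pos i).le, ← mul_assoc,
              mul_comm ((δ' i) ^ (-t)) ((3:ℝ)^(s+t)), mul_assoc,
              ← Real.rpow_add (hδ'pos i)]
            ring_nf
        _ ≤ ENNReal.ofReal ((3:ℝ)^(s+t)) * (ENNReal.ofReal (Dr i ^ s) + ENNReal.ofReal (η i ^ s)) := by
            rw [ENNReal.ofReal_mul (Real.rpow_nonneg (by norm_num) _)]
            refine mul_le_mul' le_rfl ?_
            refine le_trans (ENNReal.ofReal_le_ofReal hδ's) ?_
            rw [ENNReal.ofReal_add (Real.rpow_nonneg (hDr0 i) _) (Real.rpow_nonneg (hηpos i).le _)]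
    calc (∑' i, ∑' j, EMetric.diam (V (i, j)) ^ (s+t))
        ≤ ∑' i, ENNReal.ofReal ((3:ℝ)^(s+t)) *
            (ENNReal.ofReal (Dr i ^ s) + ENNReal.ofReal (η i ^ s)) :=
          Summable.tsum_le_tsum hrow ENNReal.summable ENNReal.summable
      _ = ENNReal.ofReal ((3:ℝ)^(s+t)) *
            ((∑' i, ENNReal.ofReal (Dr i ^ s)) + ∑' i, ENNReal.ofReal (η i ^ s)) := by
          rw [ENNReal.tsum_mul_left, ENNReal.tsum_add]
      _ ≤ ENNReal.ofReal ((3:ℝ)^(s+t)) * (ENNReal.ofReal ε + ENNReal.ofReal ε) := by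
          refine mul_le_mul' le_rfl (add_le_add ?_ ?_)
          · refine le_trans (le_of_eq (tsum_congr fun i => ?_)) hUsum.le
            by_cases h : (U i).Nonempty
            · rw [iSup_pos h, ← ENNReal.ofReal_toReal (hUtop i),
                ENNReal.ofReal_rpow_of_nonneg (hDr0 i) hs.le]
            · rw [iSup_neg h]
              have hD0 : Dr i = 0 := by
                rw [hDr]; dsimp only; rw [Set.not_nonempty_iff_eq_empty.1 h]; simp [EMetric.diam, Metric.ediam_empty]
              rw [hD0, Real.zero_rpow hs.ne']
              simp
          · calc (∑' i, ENNReal.ofReal (η i ^ s))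
                ≤ ∑' i, ENNReal.ofReal (ε * (2:ℝ)⁻¹^(i+1)) :=
                  Summable.tsum_le_tsum (fun i => ENNReal.ofReal_le_ofReal (hηpow i))
                    ENNReal.summable ENNReal.summable
              _ = ENNReal.ofReal ε * ∑' i : ℕ, ((2:ℝ≥0∞)⁻¹)^(i+1) := by
                  have h2 : ENNReal.ofReal ((2:ℝ)⁻¹) = (2:ℝ≥0∞)⁻¹ := by
                    rw [ENNReal.ofReal_inv_of_pos (by norm_num)]; norm_num
                  simp_rw [ENNReal.ofReal_mul hε.le,
                    ENNReal.ofReal_pow (by norm_num : (0:ℝ) ≤ 2⁻¹), h2]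
                  rw [ENNReal.tsum_mul_left]
              _ ≤ ENNReal.ofReal ε := by
                  have hsum : (∑' i : ℕ, ((2:ℝ≥0∞)⁻¹)^(i+1)) = 1 := by
                    simp_rw [pow_succ]
                    rw [ENNReal.tsum_mul_right, ENNReal.tsum_geometric,
                      ENNReal.one_sub_inv_two, inv_inv]
                    exact ENNReal.mul_inv_cancel two_ne_zero ENNReal.ofNat_ne_top
                  rw [hsum, mul_one]
      _ = ENNReal.ofReal ((3:ℝ)^(s+t)) * (ENNReal.ofReal ε * 2) := by
          rw [← mul_two]

lemma key (A B : Set ℝ) (s t : ℝ) (hs : 0 < s) (ht : 0 < t)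
    (hA : μH[s] A = 0) (δ₀ : ℝ) (hδ₀ : 0 < δ₀)
    (hB : ∀ δ : ℝ, 0 < δ → δ < δ₀ → ∃ F : Finset ℝ,
      ((F.card : ℝ) ≤ δ ^ (-t) ∧ B ⊆ ⋃ x ∈ F, Metric.ball x δ)) :
    μH[s + t] (A + B) = 0 := by
  refine le_antisymm ?_ zero_le
  refine ENNReal.le_of_forall_pos_le_add fun η hη _ => ?_
  rw [zero_add]
  set C : ℝ := (3:ℝ) ^ (s+t) with hC
  have hCpos : 0 < C := Real.rpow_pos_of_pos (by norm_num) _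
  set ε : ℝ := (η : ℝ) / (2 * C) with hεdef
  have hεpos : 0 < ε := div_pos hη (by positivity)
  set ρ : ℕ → ℝ := fun n => min ((1:ℝ)/(n+1)) (δ₀/2) with hρdef
  have hρpos : ∀ n : ℕ, 0 < ρ n := fun n => lt_min (by positivity) (by positivity)
  have hρδ : ∀ n : ℕ, ρ n < δ₀ := fun n => lt_of_le_of_lt (min_le_right _ _) (by linarith)
  choose V hVcov hVdiam hVsum using fun n : ℕ =>
    step A B s t hs ht hA δ₀ hB (ρ n) (hρpos n) (hρδ n) ε hεpos
  have hr0 : Filter.Tendsto (fun n : ℕ => ENNReal.ofReal (3 * ρ n)) Filter.atTop (nhds 0) := by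
    rw [← ENNReal.ofReal_zero]
    refine ENNReal.tendsto_ofReal ?_
    have h1 : Filter.Tendsto (fun n : ℕ => 3 * ((1:ℝ)/(n+1))) Filter.atTop (nhds 0) := by
      simpa using (tendsto_one_div_add_atTop_nhds_zero_nat).const_mul (3:ℝ)
    refine squeeze_zero (fun n => by positivity) (fun n => ?_) h1
    have h2 := min_le_left ((1:ℝ)/(n+1)) (δ₀/2)
    have := hρpos n
    rw [hρdef]
    dsimp only
    nlinarith
  have hle := MeasureTheory.Measure.hausdorffMeasure_le_liminf_tsum (s+t) (A+B)
      (fun n : ℕ => ENNReal.ofReal (3 * ρ n)) hr0 V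
      (Filter.Eventually.of_forall fun n => hVdiam n)
      (Filter.Eventually.of_forall hVcov)
  refine hle.trans ?_
  have hb : ∀ n : ℕ, (∑' p, EMetric.diam (V n p) ^ (s+t)) ≤ (η : ℝ≥0∞) := by
    intro n
    refine (hVsum n).trans ?_
    have h2 : (2 : ℝ≥0∞) = ENNReal.ofReal (2:ℝ) := by norm_num
    rw [h2, ← ENNReal.ofReal_mul hεpos.le, ← ENNReal.ofReal_mul hCpos.le]
    have : C * (ε * 2) = (η : ℝ) := by
      rw [hεdef]
      field_simp
    rw [this, ENNReal.ofReal_coe_nnreal]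
  exact Filter.liminf_le_of_frequently_le (Filter.Frequently.of_forall hb)

/-- For `A, B ⊆ ℝ`, the Hausdorff dimension of the sumset `A + B` is at most the
Hausdorff dimension of `A` plus the upper Minkowski (box) dimension of `B`. -/
theorem dimH_sumset_le (A B : Set ℝ) :
    dimH (A + B) ≤ dimH A + upperBoxDim B := by
  rcases eq_top_or_lt_top (dimH A + upperBoxDim B) with htop | hlt
  · rw [htop]; exact le_top
  have hAtop : dimH A ≠ ⊤ := fun h => by simp [h] at hlt
  have hBtop : upperBoxDim B ≠ ⊤ := fun h => by simp [h] at hlt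
  refine ENNReal.le_of_forall_pos_le_add fun η hη _ => ?_
  set s : NNReal := (dimH A).toNNReal + η/2 with hs
  set t : NNReal := (upperBoxDim B).toNNReal + η/2 with ht
  have hη2 : (0:NNReal) < η/2 := by positivity
  have hsA : dimH A < (s : ENNReal) := by
    rw [hs, ENNReal.coe_add, ENNReal.coe_toNNReal hAtop]
    exact ENNReal.lt_add_right hAtop (by exact_mod_cast hη2.ne')
  have htB : upperBoxDim B < (t : ENNReal) := by
    rw [ht, ENNReal.coe_add, ENNReal.coe_toNNReal hBtop]
    exact ENNReal.lt_add_right hBtop (by exact_mod_cast hη2.ne')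
  have hspos : (0:ℝ) < (s:ℝ) := by
    have : (0:NNReal) < s := hη2.trans_le (le_add_self)
    exact_mod_cast this
  have htpos : (0:ℝ) < (t:ℝ) := by
    have : (0:NNReal) < t := hη2.trans_le (le_add_self)
    exact_mod_cast this
  have hA0 : μH[(s:ℝ)] A = 0 := hausdorffMeasure_of_dimH_lt hsA
  have hev : ∀ᶠ δ in nhdsWithin (0:ℝ) (Set.Ioi 0), (fun δ : ℝ =>
      match coverNum B δ with
      | ⊤ => (⊤ : ENNReal)
      | (n : ℕ) => ENNReal.ofReal (Real.log n / Real.log (1 / δ))) δ < (t : ENNReal) :=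
    Filter.eventually_lt_of_limsup_lt htB
  rw [Filter.eventually_iff, Metric.mem_nhdsWithin_iff] at hev
  obtain ⟨δ₁, hδ₁, hball⟩ := hev
  set δ₀ : ℝ := min δ₁ 1 with hδ₀def
  have hδ₀pos : 0 < δ₀ := lt_min hδ₁ one_pos
  have hB' : ∀ δ : ℝ, 0 < δ → δ < δ₀ → ∃ F : Finset ℝ,
      ((F.card : ℝ) ≤ δ ^ (-(t:ℝ)) ∧ B ⊆ ⋃ x ∈ F, Metric.ball x δ) := by
    intro δ hδpos hδlt
    have hδ1 : δ < 1 := hδlt.trans_le (min_le_right _ _)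
    have hmem : δ ∈ Metric.ball (0:ℝ) δ₁ ∩ Set.Ioi 0 := by
      constructor
      · rw [Metric.mem_ball, Real.dist_eq, sub_zero, abs_of_pos hδpos]
        exact hδlt.trans_le (min_le_left _ _)
      · exact hδpos
    have hfδ := hball hmem
    simp only [Set.mem_setOf_eq] at hfδ
    split at hfδ
    · exact absurd hfδ (by simp)
    · rename_i n heq
      -- extract a finset
      have hlt1 : coverNum B δ < (n : ℕ∞) + 1 := by
        rw [heq, ← Nat.cast_one, ← Nat.cast_add]
        have hnn : ((n:ℕ∞)) < ((n+1:ℕ):ℕ∞) := by exact_mod_cast Nat.lt_succ_self n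
        exact hnn
      rw [coverNum] at hlt1
      obtain ⟨m, hmS, hmlt⟩ := sInf_lt_iff.1 hlt1
      obtain ⟨Fs, hFcard, hFcov⟩ := hmS
      have hcard : Fs.card ≤ n := by
        rw [← hFcard] at hmlt
        exact_mod_cast Nat.lt_succ_iff.1 (by exact_mod_cast hmlt)
      -- bound n by δ ^ (-t)
      have hn : (n:ℝ) ≤ δ ^ (-(t:ℝ)) := by
        by_cases hn1 : n ≤ 1
        · have h1 : (1:ℝ) ≤ δ ^ (-(t:ℝ)) :=
            Real.one_le_rpow_of_pos_of_le_one_of_nonpos hδpos hδ1.le (by linarith)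
          have : (n:ℝ) ≤ 1 := by exact_mod_cast hn1
          linarith
        · push_neg at hn1
          have hn2 : (2:ℝ) ≤ (n:ℝ) := by exact_mod_cast hn1
          have hlogn : 0 < Real.log n := Real.log_pos (by linarith)
          have hlogδ : 0 < Real.log (1/δ) := Real.log_pos (one_lt_one_div hδpos hδ1)
          have hdiv : Real.log n / Real.log (1/δ) < (t:ℝ) := by
            rwa [ENNReal.ofReal_lt_coe_iff (by positivity)] at hfδ
          have hlt2 : Real.log n < (t:ℝ) * Real.log (1/δ) := by
            rw [div_lt_iff₀ hlogδ] at hdiv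
            linarith [hdiv]
          have hr : δ ^ (-(t:ℝ)) = Real.exp (Real.log δ * (-(t:ℝ))) :=
            Real.rpow_def_of_pos hδpos _
          have hne : (n:ℝ) = Real.exp (Real.log n) := (Real.exp_log (by linarith)).symm
          rw [hne, hr]
          refine (Real.exp_le_exp.2 ?_)
          rw [one_div, Real.log_inv] at hlt2
          nlinarith [hlt2]
      exact ⟨Fs, le_trans (by exact_mod_cast hcard) hn, hFcov⟩
  have h0 := key A B (s:ℝ) (t:ℝ) hspos htpos hA0 δ₀ hδ₀pos hB'
  have hne : μH[((s + t : NNReal) : ℝ)] (A + B) ≠ ⊤ := by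
    rw [show ((s + t : NNReal) : ℝ) = (s:ℝ) + (t:ℝ) by push_cast; ring, h0]
    exact ENNReal.zero_ne_top
  have hdim : dimH (A + B) ≤ ((s + t : NNReal) : ENNReal) :=
    dimH_le_of_hausdorffMeasure_ne_top hne
  refine hdim.trans (le_of_eq ?_)
  have hst : s + t = (dimH A).toNNReal + (upperBoxDim B).toNNReal + η := by
    have h22 : η / 2 * 2 = η := div_mul_cancel₀ η two_ne_zero
    rw [hs, ht]; ring_nf
  rw [hst, ENNReal.coe_add, ENNReal.coe_add, ENNReal.coe_toNNReal hAtop,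
    ENNReal.coe_toNNReal hBtop]
end

section
/- There exist compact subsets A, B of ℝ with Hausdorff dimension dim_H A = dim_H B = 0 but dim_H(A + B) = 1. -/
open MeasureTheory Set Filter Topology
open scoped Pointwise ENNReal NNReal

noncomputable section

namespace SumsetAux

/-- The value of the `m`-th binary digit. -/
def dig (ε : ℕ → Bool) (m : ℕ) : ℝ := if ε m then ((2:ℝ)⁻¹) ^ (m+1) else 0

lemma dig_nonneg (ε : ℕ → Bool) (m : ℕ) : 0 ≤ dig ε m := by
  unfold dig; split <;> positivity

lemma dig_le (ε : ℕ → Bool) (m : ℕ) : dig ε m ≤ ((2:ℝ)⁻¹) ^ (m+1) := by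
  unfold dig; split
  · exact le_rfl
  · positivity

lemma summable_bound : Summable (fun m : ℕ => ((2:ℝ)⁻¹) ^ (m+1)) := by
  have h : Summable (fun m : ℕ => ((2:ℝ)⁻¹) ^ m) :=
    summable_geometric_of_lt_one (by norm_num) (by norm_num)
  simpa [pow_succ, mul_comm] using h.mul_left (2:ℝ)⁻¹

lemma summable_dig (ε : ℕ → Bool) : Summable (dig ε) :=
  Summable.of_nonneg_of_le (dig_nonneg ε) (dig_le ε) summable_bound

/-- The real number with binary digits `ε`. -/
def f (ε : ℕ → Bool) : ℝ := ∑' m, dig ε m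

lemma f_continuous : Continuous f := by
  apply continuous_tsum (u := fun m : ℕ => ((2:ℝ)⁻¹) ^ (m+1))
  · intro m
    have : Continuous fun b : Bool => if b then ((2:ℝ)⁻¹) ^ (m+1) else 0 :=
      continuous_of_discreteTopology
    exact this.comp (continuous_apply m)
  · exact summable_bound
  · intro m ε
    rw [Real.norm_eq_abs, abs_of_nonneg (dig_nonneg ε m)]
    exact dig_le ε m


lemma tail_nonneg (ε : ℕ → Bool) (n : ℕ) : 0 ≤ ∑' m, dig ε (m + n) :=
  tsum_nonneg fun m => dig_nonneg ε (m + n)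

lemma tsum_shifted_bound (n : ℕ) : ∑' m : ℕ, ((2:ℝ)⁻¹) ^ (m + n + 1) = ((2:ℝ)⁻¹) ^ n := by
  have h : ∀ m : ℕ, ((2:ℝ)⁻¹) ^ (m + n + 1) = ((2:ℝ)⁻¹) ^ (n+1) * ((2:ℝ)⁻¹) ^ m := by
    intro m; rw [← pow_add]; ring_nf
  rw [tsum_congr h, tsum_mul_left,
    tsum_geometric_of_lt_one (by norm_num) (by norm_num : (2:ℝ)⁻¹ < 1)]
  rw [pow_succ]
  ring

lemma tail_le (ε : ℕ → Bool) (n : ℕ) : ∑' m, dig ε (m + n) ≤ ((2:ℝ)⁻¹) ^ n := by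
  rw [← tsum_shifted_bound n]
  exact Summable.tsum_le_tsum (fun m => dig_le ε (m+n)) ((summable_dig ε).comp_injective
    (add_left_injective n)) (summable_bound.comp_injective (add_left_injective n))

lemma f_eq (ε : ℕ → Bool) (n : ℕ) :
    f ε = ∑ m ∈ Finset.range n, dig ε m + ∑' m, dig ε (m + n) :=
  (Summable.sum_add_tsum_nat_add n (summable_dig ε)).symm

lemma f_nonneg (ε : ℕ → Bool) : 0 ≤ f ε := tsum_nonneg fun m => dig_nonneg ε m

/-- Sequences whose support is contained in `T`. -/
def K (T : Set ℕ) : Set (ℕ → Bool) := {ε | ∀ m, ε m = true → m ∈ T}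

/-- The compact set of reals whose binary digits are supported in `T`. -/
def A (T : Set ℕ) : Set ℝ := f '' K T

lemma isClosed_K (T : Set ℕ) : IsClosed (K T) := by
  have : K T = ⋂ m ∈ Tᶜ, {ε : ℕ → Bool | ε m = false} := by
    ext ε
    simp only [K, mem_setOf_eq, mem_iInter, mem_compl_iff]
    constructor
    · intro h m hm
      by_contra hb
      exact hm (h m (by simpa using hb))
    · intro h m hm
      by_contra hmT
      simp [h m hmT] at hm
  rw [this]
  refine isClosed_biInter fun m _ => ?_
  show IsClosed ((fun ε : ℕ → Bool => ε m) ⁻¹' {false})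
  exact IsClosed.preimage (continuous_apply m) (isClosed_discrete ({false} : Set Bool))

lemma isCompact_A (T : Set ℕ) : IsCompact (A T) :=
  ((isClosed_K T).isCompact).image f_continuous


lemma dimH_A_zero (T : Set ℕ) (n c : ℕ → ℕ)
    (hn : Tendsto n atTop atTop)
    (hcn : ∀ k, c k ≤ n k)
    (hTc : ∀ k m, m ∈ T → m < n k → m < c k)
    (hlim : ∀ s : ℝ, 0 < s → Tendsto (fun k => (c k : ℝ) - s * n k) atTop atBot) :
    dimH (A T) = 0 := by
  have key : ∀ d : ℝ≥0, 0 < d → μH[(d:ℝ)] (A T) = 0 := by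
    intro d hd
    set p : ∀ k : ℕ, (Fin (c k) → Bool) → ℝ :=
      fun k σ => ∑ j : Fin (c k), if σ j then ((2:ℝ)⁻¹) ^ ((j:ℕ)+1) else 0 with hp
    set t : ∀ k : ℕ, (Fin (c k) → Bool) → Set ℝ :=
      fun k σ => Icc (p k σ) (p k σ + ((2:ℝ)⁻¹) ^ (n k)) with htdef
    set r : ℕ → ℝ≥0∞ := fun k => ENNReal.ofReal (((2:ℝ)⁻¹) ^ (n k)) with hrdef
    have hr : Tendsto r atTop (𝓝 0) := by
      have h1 : Tendsto (fun k : ℕ => ((2:ℝ)⁻¹) ^ (n k)) atTop (𝓝 0) :=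
        (tendsto_pow_atTop_nhds_zero_of_lt_one (by norm_num) (by norm_num)).comp hn
      simpa [hrdef, inv_pow] using ENNReal.tendsto_ofReal h1
    have ht : ∀ᶠ k in atTop, ∀ σ : Fin (c k) → Bool, EMetric.diam (t k σ) ≤ r k := by
      filter_upwards with k σ
      rw [htdef, EMetric.diam, Real.ediam_Icc, add_sub_cancel_left]
    have hst : ∀ᶠ k in atTop, A T ⊆ ⋃ σ : Fin (c k) → Bool, t k σ := by
      filter_upwards with k x hx
      obtain ⟨ε, hε, rfl⟩ := hx
      refine mem_iUnion.2 ⟨fun j => ε j, ?_⟩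
      have hsum : ∑ m ∈ Finset.range (n k), dig ε m = p k (fun j => ε j) := by
        rw [hp]
        have h1 : ∑ m ∈ Finset.range (n k), dig ε m = ∑ m ∈ Finset.range (c k), dig ε m := by
          refine (Finset.sum_subset (Finset.range_subset_range.2 (hcn k)) ?_).symm
          intro m hm hm'
          simp only [Finset.mem_range] at hm hm'
          unfold dig
          split
          · next h => exact absurd (hTc k m (hε m h) hm) (by omega)
          · rfl
        rw [h1, ← Fin.sum_univ_eq_sum_range (fun m => dig ε m) (c k)]
        rfl
      rw [htdef]
      constructor
      · rw [f_eq ε (n k), hsum]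
        simpa using tail_nonneg ε (n k)
      · rw [f_eq ε (n k), hsum]
        exact add_le_add_right (tail_le ε (n k)) _
    have hμ := MeasureTheory.Measure.hausdorffMeasure_le_liminf_sum (d:ℝ) (A T) r hr t ht hst
    have hsum_eq : ∀ k, (∑ σ : Fin (c k) → Bool, EMetric.diam (t k σ) ^ (d:ℝ))
        = ENNReal.ofReal ((2:ℝ) ^ ((c k : ℝ) - d * n k)) := by
      intro k
      have hdiam : ∀ σ : Fin (c k) → Bool,
          EMetric.diam (t k σ) ^ (d:ℝ) = ENNReal.ofReal (((2:ℝ)⁻¹) ^ (n k)) ^ (d:ℝ) := by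
        intro σ
        rw [htdef, EMetric.diam, Real.ediam_Icc, add_sub_cancel_left]
      rw [Finset.sum_congr rfl (fun σ _ => hdiam σ), Finset.sum_const]
      have hcard : (Finset.univ : Finset (Fin (c k) → Bool)).card = 2 ^ (c k) := by
        simp [Fintype.card_fun]
      rw [hcard, nsmul_eq_mul]
      have hpos : (0:ℝ) < ((2:ℝ)⁻¹) ^ (n k) := by positivity
      rw [ENNReal.ofReal_rpow_of_pos hpos]
      have h2 : ((2 ^ c k : ℕ) : ℝ≥0∞) = ENNReal.ofReal ((2:ℝ) ^ (c k)) := by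
        rw [ENNReal.ofReal_pow (by norm_num)]
        simp [ENNReal.ofReal_ofNat]
      rw [h2, ← ENNReal.ofReal_mul (by positivity)]
      congr 1
      have hbase : ((2:ℝ)⁻¹) ^ (n k) = (2:ℝ) ^ (-(n k : ℝ)) := by
        rw [Real.rpow_neg (by norm_num), Real.rpow_natCast, inv_pow]
      rw [hbase, ← Real.rpow_natCast (2:ℝ) (c k),
        ← Real.rpow_mul (by norm_num), ← Real.rpow_add (by norm_num)]
      ring_nf
    have hlim2 : Tendsto (fun k => ∑ σ : Fin (c k) → Bool, EMetric.diam (t k σ) ^ (d:ℝ))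
        atTop (𝓝 0) := by
      rw [tendsto_congr hsum_eq]
      have h1 : Tendsto (fun k => (c k : ℝ) - (d:ℝ) * n k) atTop atBot := hlim d hd
      have h2 : Tendsto (fun y : ℝ => (2:ℝ) ^ y) atBot (𝓝 0) :=
        tendsto_rpow_atBot_of_base_gt_one 2 (by norm_num)
      have := ENNReal.tendsto_ofReal (h2.comp h1)
      simpa using this
    refine le_antisymm ?_ zero_le
    calc μH[(d:ℝ)] (A T) ≤ _ := hμ
      _ = 0 := hlim2.liminf_eq
  refine le_antisymm ?_ zero_le
  refine dimH_le fun d' hd' => ?_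
  rcases eq_or_lt_of_le (zero_le (a := d')) with h0 | hpos
  · simp [← h0]
  · exact absurd (key d' hpos) (by rw [hd']; simp)


lemma floor_double (y : ℝ) :
    ⌊2 * y⌋ = 2 * ⌊y⌋ ∨ ⌊2 * y⌋ = 2 * ⌊y⌋ + 1 := by
  have h1 : (2 * ⌊y⌋ : ℤ) ≤ ⌊2 * y⌋ := by
    rw [Int.le_floor]
    push_cast
    nlinarith [Int.floor_le y]
  have h2 : ⌊2 * y⌋ < 2 * ⌊y⌋ + 2 := by
    rw [Int.floor_lt]
    push_cast
    nlinarith [Int.lt_floor_add_one y]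
  omega

/-- Binary digits of `x`. -/
def bdig (x : ℝ) (m : ℕ) : Bool := decide (⌊x * 2 ^ (m+1)⌋ % 2 = 1)

lemma bdig_partial (x : ℝ) (hx0 : 0 ≤ x) (hx1 : x < 1) (nn : ℕ) :
    ∑ m ∈ Finset.range nn, dig (bdig x) m = (⌊x * 2 ^ nn⌋ : ℝ) / 2 ^ nn := by
  induction nn with
  | zero =>
    simp [Int.floor_eq_zero_iff.2 ⟨hx0, by simpa using hx1⟩]
  | succ nn ih =>
    rw [Finset.sum_range_succ, ih]
    have hdb : x * 2 ^ (nn+1) = 2 * (x * 2 ^ nn) := by ring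
    rcases floor_double (x * 2 ^ nn) with h | h
    · have hd : bdig x nn = false := by
        unfold bdig
        rw [hdb, h]
        simp [Int.mul_emod_right]
      rw [hdb, h]
      unfold dig
      rw [hd]
      push_cast
      field_simp
      ring
    · have hd : bdig x nn = true := by
        unfold bdig
        rw [hdb, h]
        simp only [decide_eq_true_eq]
        omega
      rw [hdb, h]
      unfold dig
      rw [hd, if_pos rfl]
      push_cast
      field_simp
      have h2 : ((1:ℝ) / 2) ^ nn * 2 ^ nn = 1 := by rw [← mul_pow]; norm_num
      linear_combination (2:ℝ) ^ nn * h2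

lemma f_bdig (x : ℝ) (hx0 : 0 ≤ x) (hx1 : x < 1) : f (bdig x) = x := by
  have hs := summable_dig (bdig x)
  have h1 : Tendsto (fun nn => ∑ m ∈ Finset.range nn, dig (bdig x) m) atTop (𝓝 (f (bdig x))) :=
    hs.hasSum.tendsto_sum_nat
  have h2 : Tendsto (fun nn => ∑ m ∈ Finset.range nn, dig (bdig x) m) atTop (𝓝 x) := by
    rw [tendsto_congr (bdig_partial x hx0 hx1)]
    have hup : ∀ nn : ℕ, |(⌊x * 2 ^ nn⌋ : ℝ) / 2 ^ nn - x| ≤ ((2:ℝ)⁻¹) ^ nn := by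
      intro nn
      have hp : (0:ℝ) < 2 ^ nn := by positivity
      have hfl : (⌊x * 2 ^ nn⌋ : ℝ) ≤ x * 2 ^ nn := Int.floor_le _
      have hfg : x * 2 ^ nn < (⌊x * 2 ^ nn⌋ : ℝ) + 1 := Int.lt_floor_add_one _
      rw [abs_le]
      constructor
      all_goals
        have hinv : ((2:ℝ) ^ nn)⁻¹ * 2 ^ nn = 1 := inv_mul_cancel₀ hp.ne'
      · rw [div_sub' hp.ne', le_div_iff₀ hp, inv_pow]
        nlinarith
      · rw [div_sub' hp.ne', div_le_iff₀ hp, inv_pow]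
        nlinarith
    have hzero : Tendsto (fun nn : ℕ => ((2:ℝ)⁻¹) ^ nn) atTop (𝓝 0) :=
      tendsto_pow_atTop_nhds_zero_of_lt_one (by norm_num) (by norm_num)
    have hsq := squeeze_zero_norm (f := fun nn : ℕ => (⌊x * 2 ^ nn⌋ : ℝ) / 2 ^ nn - x)
      (fun nn => by simpa using hup nn) hzero
    have h3 : Tendsto (fun nn => ((⌊x * 2 ^ nn⌋ : ℝ) / 2 ^ nn - x) + x) atTop (𝓝 (0 + x)) :=
      hsq.add tendsto_const_nhds
    simpa using h3
  exact tendsto_nhds_unique h1 h2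

lemma f_one : f (fun _ => true) = 1 := by
  have h : ∀ m : ℕ, dig (fun _ => true) m = ((2:ℝ)⁻¹) ^ (m + 0 + 1) := by
    intro m; simp [dig]
  unfold f
  rw [tsum_congr h, tsum_shifted_bound 0, pow_zero]

lemma f_surj (x : ℝ) (hx : x ∈ Icc (0:ℝ) 1) : ∃ ε, f ε = x := by
  rcases eq_or_lt_of_le hx.2 with h1 | h1
  · exact ⟨fun _ => true, by rw [f_one, h1]⟩
  · exact ⟨bdig x, f_bdig x hx.1 h1⟩


open Classical in
/-- Restriction of a digit sequence to a set of positions. -/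
def restr (T : Set ℕ) (ε : ℕ → Bool) (m : ℕ) : Bool := if m ∈ T then ε m else false

lemma restr_mem_K (T : Set ℕ) (ε : ℕ → Bool) : restr T ε ∈ K T := by
  intro m hm
  unfold restr at hm
  by_contra h
  simp [h] at hm

lemma dig_split (T : Set ℕ) (ε : ℕ → Bool) (m : ℕ) :
    dig ε m = dig (restr T ε) m + dig (restr Tᶜ ε) m := by
  unfold dig restr
  by_cases h : m ∈ T <;> simp [h]

lemma f_split (T : Set ℕ) (ε : ℕ → Bool) : f ε = f (restr T ε) + f (restr Tᶜ ε) := by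
  unfold f
  rw [← Summable.tsum_add (summable_dig _) (summable_dig _)]
  exact tsum_congr (dig_split T ε)

lemma Icc_subset_sumset (T : Set ℕ) : Icc (0:ℝ) 1 ⊆ A T + A Tᶜ := by
  intro x hx
  obtain ⟨ε, hε⟩ := f_surj x hx
  rw [Set.mem_add]
  exact ⟨f (restr T ε), ⟨restr T ε, restr_mem_K T ε, rfl⟩,
    f (restr Tᶜ ε), ⟨restr Tᶜ ε, restr_mem_K Tᶜ ε, rfl⟩,
    by rw [← f_split T ε, hε]⟩


/-- Rapidly growing block boundaries. -/
def Nq : ℕ → ℕ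
  | 0 => 0
  | k + 1 => (k + 1) * (Nq k + 1)

lemma Nq_strictMono : StrictMono Nq := by
  apply strictMono_nat_of_lt_succ
  intro k
  show Nq k < (k + 1) * (Nq k + 1)
  nlinarith [Nat.zero_le (k * Nq k)]

lemma Nq_ge (k : ℕ) : k ≤ Nq k := by
  cases k with
  | zero => simp [Nq]
  | succ k =>
    show k + 1 ≤ (k + 1) * (Nq k + 1)
    nlinarith [Nat.zero_le ((k+1) * Nq k)]

lemma Nq_tendsto : Tendsto Nq atTop atTop :=
  tendsto_atTop_mono Nq_ge tendsto_id

/-- The set of positions in even-indexed blocks. -/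
def S : Set ℕ := ⋃ k, Ico (Nq (2 * k)) (Nq (2 * k + 1))

lemma S_count (k m : ℕ) (hm : m ∈ S) (hlt : m < Nq (2 * k + 2)) : m < Nq (2 * k + 1) := by
  obtain ⟨j, hj1, hj2⟩ := Set.mem_iUnion.1 hm
  rcases le_or_gt j k with h | h
  · exact lt_of_lt_of_le hj2 (Nq_strictMono.monotone (by omega))
  · have h1 : Nq (2*k+2) ≤ Nq (2*j) := Nq_strictMono.monotone (by omega)
    omega

lemma Sc_count (k m : ℕ) (hm : m ∈ Sᶜ) (hlt : m < Nq (2 * k + 1)) : m < Nq (2 * k) := by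
  by_contra h
  exact hm (Set.mem_iUnion.2 ⟨k, le_of_not_gt h, hlt⟩)

lemma Nq_growth (s : ℝ) (hs : 0 < s) :
    Tendsto (fun j => (Nq j : ℝ) - s * Nq (j + 1)) atTop atBot := by
  have hneg : Tendsto (fun j : ℕ => -(j:ℝ)) atTop atBot :=
    tendsto_neg_atBot_iff.2 tendsto_natCast_atTop_atTop
  refine tendsto_atBot_mono' atTop ?_ hneg
  · rw [EventuallyLE, eventually_atTop]
    obtain ⟨J, hJ⟩ := exists_nat_ge (2 / s)
    refine ⟨J, fun j hj => ?_⟩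
    have h1 : (2:ℝ) ≤ s * (j + 1) := by
      rw [div_le_iff₀ hs] at hJ
      have : (J:ℝ) ≤ j := by exact_mod_cast hj
      nlinarith
    have h2 : (Nq (j+1) : ℝ) = (j+1) * (Nq j + 1) := by
      show ((Nq (j+1) : ℕ) : ℝ) = _
      rw [show Nq (j+1) = (j+1) * (Nq j + 1) from rfl]
      push_cast
      ring
    have h3 : (j:ℝ) ≤ Nq j := by exact_mod_cast Nq_ge j
    have h4 : s * Nq (j+1) = s * (j+1) * (Nq j + 1) := by rw [h2]; ring
    have h5 : (0:ℝ) ≤ Nq j + 1 := by positivity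
    nlinarith

lemma two_mul_add_tendsto (a : ℕ) : Tendsto (fun k : ℕ => 2 * k + a) atTop atTop :=
  tendsto_atTop_mono (fun k => by simp only [id_eq]; omega) tendsto_id

lemma dimH_AS : dimH (A S) = 0 := by
  refine dimH_A_zero S (fun k => Nq (2 * k + 2)) (fun k => Nq (2 * k + 1)) ?_ ?_ ?_ ?_
  · exact Nq_tendsto.comp (two_mul_add_tendsto 2)
  · exact fun k => Nq_strictMono.monotone (by omega)
  · exact fun k m hm hlt => S_count k m hm hlt
  · intro s hs
    exact (Nq_growth s hs).comp (two_mul_add_tendsto 1)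

lemma dimH_ASc : dimH (A Sᶜ) = 0 := by
  refine dimH_A_zero Sᶜ (fun k => Nq (2 * k + 1)) (fun k => Nq (2 * k)) ?_ ?_ ?_ ?_
  · exact Nq_tendsto.comp (two_mul_add_tendsto 1)
  · exact fun k => Nq_strictMono.monotone (by omega)
  · exact fun k m hm hlt => Sc_count k m hm hlt
  · intro s hs
    exact (Nq_growth s hs).comp (two_mul_add_tendsto 0)

end SumsetAux

end

/-- There exist compact sets `A, B ⊆ ℝ` of Hausdorff dimension zero whose sumset has
Hausdorff dimension one. -/
theorem exists_compact_dimH_zero_sumset_dimH_one :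
    ∃ A B : Set ℝ, IsCompact A ∧ IsCompact B ∧
      dimH A = 0 ∧ dimH B = 0 ∧ dimH (A + B) = 1 := by
  refine ⟨SumsetAux.A SumsetAux.S, SumsetAux.A SumsetAux.Sᶜ,
    SumsetAux.isCompact_A _, SumsetAux.isCompact_A _,
    SumsetAux.dimH_AS, SumsetAux.dimH_ASc, ?_⟩
  refine le_antisymm ((dimH_mono (subset_univ _)).trans_eq Real.dimH_univ) ?_
  have hIcc : dimH (Icc (0:ℝ) 1) = 1 := by
    have hmem : Icc (0:ℝ) 1 ∈ 𝓝 (1/2 : ℝ) := Icc_mem_nhds (by norm_num) (by norm_num)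
    rw [Real.dimH_of_mem_nhds hmem, Module.finrank_self, Nat.cast_one]
  calc (1:ℝ≥0∞) = dimH (Icc (0:ℝ) 1) := hIcc.symm
    _ ≤ dimH (SumsetAux.A SumsetAux.S + SumsetAux.A SumsetAux.Sᶜ) :=
      dimH_mono (SumsetAux.Icc_subset_sumset SumsetAux.S)
end

section
/- A vector x ∈ ℓ¹(ℤ) is cyclic in ℓ¹(ℤ) (i.e., the closed linear span of its translates is all of ℓ¹(ℤ)) if and only if its Fourier transform x̂(t) = ∑_k x_k e^{ikt} has no zeros on the circle. -/
open Complex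

/-- `x` is a cyclic vector in `ℓᵖ(ℤ)`: the closed linear span of the translates
`(x_{k-m})_k`, `m ∈ ℤ`, is all of `ℓᵖ(ℤ)`. -/
def IsCyclicVector (p : ENNReal) [Fact (1 ≤ p)] (x : ℤ → ℂ) : Prop :=
  Dense (↑(Submodule.span ℂ
    {y : lp (fun _ : ℤ => ℂ) p | ∃ m : ℤ, ∀ k : ℤ, (y : ℤ → ℂ) k = x (k - m)}) :
    Set (lp (fun _ : ℤ => ℂ) p))

set_option maxHeartbeats 1000000
set_option synthInstance.maxHeartbeats 1000000

noncomputable section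

namespace WienerL1

abbrev A1 := lp (fun _ : ℤ => ℂ) 1

lemma summable_norm (f : A1) : Summable (fun k => ‖(f : ℤ → ℂ) k‖) := by
  have := (lp.memℓp f).summable (p := 1) (by norm_num)
  simpa using this

lemma norm_eq (f : A1) : ‖f‖ = ∑' k, ‖(f : ℤ → ℂ) k‖ := by
  have := lp.norm_eq_tsum_rpow (p := 1) (by norm_num) f
  simpa using this

/-- The shear equivalence `(j, i) ↦ (i + j, j)`. -/
def shear : ℤ × ℤ ≃ ℤ × ℤ where
  toFun p := (p.2 + p.1, p.1)
  invFun q := (q.2, q.1 - q.2)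
  left_inv p := by simp
  right_inv q := by simp

lemma summable2 (f g : A1) :
    Summable (fun p : ℤ × ℤ => ‖(f : ℤ → ℂ) p.2 * (g : ℤ → ℂ) (p.1 - p.2)‖) := by
  have h : Summable (fun p : ℤ × ℤ => ‖(f : ℤ → ℂ) p.1‖ * ‖(g : ℤ → ℂ) p.2‖) :=
    (summable_norm f).mul_of_nonneg (summable_norm g)
      (fun _ => norm_nonneg _) (fun _ => norm_nonneg _)
  refine shear.summable_iff.1 ?_
  have : ((fun p : ℤ × ℤ => ‖(f : ℤ → ℂ) p.2 * (g : ℤ → ℂ) (p.1 - p.2)‖) ∘ shear)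
      = fun p : ℤ × ℤ => ‖(f : ℤ → ℂ) p.1‖ * ‖(g : ℤ → ℂ) p.2‖ := by
    funext p
    simp [shear, norm_mul]
  rw [this]
  exact h

lemma memℓp_conv (f g : A1) :
    Memℓp (fun k : ℤ => ∑' j, (f : ℤ → ℂ) j * (g : ℤ → ℂ) (k - j)) 1 := by
  have hs := summable2 f g
  apply memℓp_gen
  have h1 : Summable (fun k : ℤ => ∑' j, ‖(f : ℤ → ℂ) j * (g : ℤ → ℂ) (k - j)‖) := hs.prod
  have h2 : Summable (fun k : ℤ => ‖∑' j, (f : ℤ → ℂ) j * (g : ℤ → ℂ) (k - j)‖) :=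
    Summable.of_nonneg_of_le (fun k => norm_nonneg _)
      (fun k => norm_tsum_le_tsum_norm (hs.prod_factor k)) h1
  simpa using h2

instance : One A1 := ⟨lp.single 1 (0 : ℤ) (1 : ℂ)⟩

instance : Mul A1 := ⟨fun f g => ⟨fun k => ∑' j, (f : ℤ → ℂ) j * (g : ℤ → ℂ) (k - j),
  memℓp_conv f g⟩⟩

lemma mul_apply (f g : A1) (k : ℤ) :
    ((f * g : A1) : ℤ → ℂ) k = ∑' j, (f : ℤ → ℂ) j * (g : ℤ → ℂ) (k - j) := rfl

lemma single_apply (i : ℤ) (a : ℂ) (j : ℤ) :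
    (lp.single 1 i a : ℤ → ℂ) j = if j = i then a else 0 := by
  rcases eq_or_ne j i with rfl | h
  · rw [lp.single_apply_self, if_pos rfl]
  · rw [lp.single_apply_ne _ _ _ h, if_neg h]

lemma one_apply (j : ℤ) : ((1 : A1) : ℤ → ℂ) j = if j = 0 then 1 else 0 :=
  single_apply 0 1 j

lemma summable_row (f g : A1) (k : ℤ) :
    Summable (fun j => (f : ℤ → ℂ) j * (g : ℤ → ℂ) (k - j)) :=
  ((summable2 f g).prod_factor k).of_norm

end WienerL1

namespace WienerL1

lemma mul_comm' (f g : A1) : f * g = g * f := by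
  apply lp.ext
  funext k
  rw [mul_apply, mul_apply,
    ← (Equiv.subLeft k).tsum_eq (fun j => (f : ℤ → ℂ) j * (g : ℤ → ℂ) (k - j))]
  exact tsum_congr fun j => by simp [Equiv.subLeft, sub_sub_cancel, mul_comm]

lemma one_mul' (f : A1) : 1 * f = f := by
  apply lp.ext
  funext k
  rw [mul_apply, tsum_eq_single 0 (fun j hj => by simp [one_apply, hj])]
  simp [one_apply]

lemma mul_one' (f : A1) : f * 1 = f := by rw [mul_comm', one_mul']

lemma zero_mul' (f : A1) : 0 * f = 0 := by
  apply lp.ext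
  funext k
  simp [mul_apply, lp.coeFn_zero]

lemma mul_zero' (f : A1) : f * 0 = 0 := by rw [mul_comm', zero_mul']

lemma left_distrib' (f g h : A1) : f * (g + h) = f * g + f * h := by
  apply lp.ext
  funext k
  simp only [mul_apply, lp.coeFn_add, Pi.add_apply, mul_add]
  exact Summable.tsum_add (summable_row f g k) (summable_row f h k)

lemma right_distrib' (f g h : A1) : (f + g) * h = f * h + g * h := by
  rw [mul_comm', left_distrib', mul_comm' h f, mul_comm' h g]

lemma summable3 (f g h : A1) (k : ℤ) :
    Summable (fun p : ℤ × ℤ =>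
      ‖(f : ℤ → ℂ) p.2 * (g : ℤ → ℂ) (p.1 - p.2) * (h : ℤ → ℂ) (k - p.1)‖) := by
  refine Summable.of_nonneg_of_le (fun p => norm_nonneg _) (fun p => ?_)
    ((summable2 f g).mul_right ‖h‖)
  rw [norm_mul]
  exact mul_le_mul_of_nonneg_left (lp.norm_apply_le_norm one_ne_zero h _) (norm_nonneg _)

lemma mul_assoc' (f g h : A1) : f * g * h = f * (g * h) := by
  apply lp.ext
  funext k
  have hs := (summable3 f g h k).of_norm
  have hrow : ∀ j, ((f * g : A1) : ℤ → ℂ) j * (h : ℤ → ℂ) (k - j)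
      = ∑' i, (f : ℤ → ℂ) i * (g : ℤ → ℂ) (j - i) * (h : ℤ → ℂ) (k - j) := fun j => by
    rw [mul_apply, ← tsum_mul_right]
  have hswap :
      (∑' (j : ℤ) (i : ℤ), (f : ℤ → ℂ) i * (g : ℤ → ℂ) (j - i) * (h : ℤ → ℂ) (k - j))
      = ∑' (i : ℤ) (j : ℤ), (f : ℤ → ℂ) i * (g : ℤ → ℂ) (j - i) * (h : ℤ → ℂ) (k - j) := by
    refine Summable.tsum_comm' ?_ ?_ ?_
    · -- Summable (uncurry fun i j => f i * g (j-i) * h (k-j))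
      have := hs.prod_symm
      exact this.congr fun p => by simp [Function.uncurry]
    · exact fun i => (hs.prod_symm.prod_factor i).congr fun j => by simp
    · exact fun j => (hs.prod_factor j).congr fun i => by simp
  rw [mul_apply (f * g) h, tsum_congr hrow, hswap]
  rw [mul_apply f (g * h)]
  refine tsum_congr fun i => ?_
  rw [mul_apply g h, ← tsum_mul_left,
    ← (Equiv.addLeft i).tsum_eq (fun j => (f : ℤ → ℂ) i * (g : ℤ → ℂ) (j - i) *
        (h : ℤ → ℂ) (k - j))]
  exact tsum_congr fun j => by
    simp only [Equiv.coe_addLeft, add_sub_cancel_left, sub_add_eq_sub_sub]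
    ring

instance commRing : CommRing A1 :=
  { (inferInstance : AddCommGroup A1) with
    mul := (· * ·)
    one := 1
    mul_assoc := mul_assoc'
    one_mul := one_mul'
    mul_one := mul_one'
    left_distrib := left_distrib'
    right_distrib := right_distrib'
    zero_mul := zero_mul'
    mul_zero := mul_zero'
    mul_comm := mul_comm' }

lemma normConvMulLe (f g : A1) : ‖f * g‖ ≤ ‖f‖ * ‖g‖ := by
  have hs := summable2 f g
  rw [norm_eq, norm_eq f, norm_eq g]
  have h1 : ∑' k, ‖((f * g : A1) : ℤ → ℂ) k‖
      ≤ ∑' (k : ℤ) (j : ℤ), ‖(f : ℤ → ℂ) j * (g : ℤ → ℂ) (k - j)‖ := by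
    refine Summable.tsum_le_tsum (fun k => ?_) (summable_norm (f * g)) hs.prod
    exact norm_tsum_le_tsum_norm (hs.prod_factor k)
  refine h1.trans (le_of_eq ?_)
  have e1 : (∑' (k : ℤ) (j : ℤ), ‖(f : ℤ → ℂ) j * (g : ℤ → ℂ) (k - j)‖)
      = ∑' p : ℤ × ℤ, ‖(f : ℤ → ℂ) p.2 * (g : ℤ → ℂ) (p.1 - p.2)‖ := (Summable.tsum_prod hs).symm
  have e2 : (∑' p : ℤ × ℤ, ‖(f : ℤ → ℂ) p.2 * (g : ℤ → ℂ) (p.1 - p.2)‖)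
      = ∑' p : ℤ × ℤ, ‖(f : ℤ → ℂ) p.1‖ * ‖(g : ℤ → ℂ) p.2‖ := by
    rw [← shear.tsum_eq (fun p : ℤ × ℤ => ‖(f : ℤ → ℂ) p.2 * (g : ℤ → ℂ) (p.1 - p.2)‖)]
    exact tsum_congr fun p => by simp [shear, norm_mul]
  have e3 : (∑' p : ℤ × ℤ, ‖(f : ℤ → ℂ) p.1‖ * ‖(g : ℤ → ℂ) p.2‖)
      = (∑' k, ‖(f : ℤ → ℂ) k‖) * ∑' k, ‖(g : ℤ → ℂ) k‖ :=
    (Summable.tsum_mul_tsum (summable_norm f) (summable_norm g)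
      ((summable_norm f).mul_of_nonneg (summable_norm g)
        (fun _ => norm_nonneg _) (fun _ => norm_nonneg _))).symm
  rw [e1, e2, e3]

instance normedCommRing : NormedCommRing A1 :=
  { commRing, (inferInstance : NormedAddCommGroup A1) with
    norm_mul_le := normConvMulLe }

lemma norm_one' : ‖(1 : A1)‖ = 1 := by
  have := lp.norm_single (E := fun _ : ℤ => ℂ) (p := 1) (by norm_num) (0 : ℤ) (1 : ℂ)
  exact this.trans norm_one

instance : NormOneClass A1 := ⟨norm_one'⟩

lemma smulMulAssocA1 (c : ℂ) (f g : A1) : c • f * g = c • (f * g) := by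
  apply lp.ext
  funext k
  simp only [mul_apply, lp.coeFn_smul, Pi.smul_apply, smul_eq_mul, ← tsum_mul_left]
  exact tsum_congr fun j => by ring

lemma mulSmulCommA1 (c : ℂ) (f g : A1) : f * c • g = c • (f * g) := by
  rw [mul_comm', smulMulAssocA1, mul_comm']

instance normedAlgebra : NormedAlgebra ℂ A1 :=
  { Algebra.ofModule smulMulAssocA1 mulSmulCommA1 with
    norm_smul_le := norm_smul_le }

end WienerL1

namespace WienerL1

/-- Kronecker delta at `m` as an element of `ℓ¹`. -/
def δ (m : ℤ) : A1 := lp.single 1 m 1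

lemma δ_apply (m j : ℤ) : (δ m : ℤ → ℂ) j = if j = m then 1 else 0 := single_apply m 1 j

lemma δ_zero : δ 0 = 1 := rfl

lemma δ_mul_apply (m : ℤ) (f : A1) (k : ℤ) :
    ((δ m * f : A1) : ℤ → ℂ) k = (f : ℤ → ℂ) (k - m) := by
  rw [mul_apply, tsum_eq_single m (fun j hj => by simp [δ_apply, hj])]
  simp [δ_apply]

lemma δ_mul_δ (m n : ℤ) : δ m * δ n = δ (m + n) := by
  apply lp.ext
  funext k
  rw [δ_mul_apply, δ_apply, δ_apply]
  congr 1
  exact propext sub_eq_iff_eq_add'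

lemma isUnit_δ (m : ℤ) : IsUnit (δ m) :=
  ⟨⟨δ m, δ (-m), by rw [δ_mul_δ]; simp [δ_zero], by rw [δ_mul_δ]; simp [δ_zero]⟩, rfl⟩

lemma hasSum_smul_δ (f : A1) : HasSum (fun m => (f : ℤ → ℂ) m • δ m) f := by
  have h := lp.hasSum_single (p := 1) (by norm_num) f
  refine h.congr_fun fun m => ?_
  calc (f : ℤ → ℂ) m • δ m = lp.single 1 m ((f : ℤ → ℂ) m • (1 : ℂ)) :=
        (lp.single_smul 1 m _ 1).symm
    _ = lp.single 1 m ((f : ℤ → ℂ) m) := by rw [smul_eq_mul, mul_one]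

lemma dense_span_δ : Dense (Submodule.span ℂ (Set.range δ) : Set A1) := by
  intro f
  refine mem_closure_of_tendsto (hasSum_smul_δ f) (Filter.Eventually.of_forall fun s => ?_)
  exact Submodule.sum_mem _ fun m _ => Submodule.smul_mem _ _ (Submodule.subset_span ⟨m, rfl⟩)


end WienerL1

namespace WienerL1

lemma norm_exp_I_int (k : ℤ) (t : ℝ) : ‖Complex.exp (Complex.I * k * t)‖ = 1 := by
  have h : Complex.I * k * t = ((k * t : ℝ) : ℂ) * Complex.I := by push_cast; ring
  rw [h, Complex.norm_exp_ofReal_mul_I]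

lemma summable_char_norm (f : A1) (t : ℝ) :
    Summable (fun k : ℤ => ‖(f : ℤ → ℂ) k * Complex.exp (Complex.I * k * t)‖) :=
  (summable_norm f).congr fun k =>
    (by rw [norm_mul, norm_exp_I_int, mul_one] :
      ‖(f : ℤ → ℂ) k * Complex.exp (Complex.I * k * t)‖ = ‖(f : ℤ → ℂ) k‖).symm

lemma summable_char (f : A1) (t : ℝ) :
    Summable (fun k : ℤ => (f : ℤ → ℂ) k * Complex.exp (Complex.I * k * t)) :=
  (summable_char_norm f t).of_norm

/-- Evaluation of the Fourier transform at `t`, as a continuous linear functional on `ℓ¹`. -/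
def chi (t : ℝ) : A1 →L[ℂ] ℂ :=
  LinearMap.mkContinuous
    { toFun := fun f => ∑' k : ℤ, (f : ℤ → ℂ) k * Complex.exp (Complex.I * k * t)
      map_add' := fun f g => by
        simp only [lp.coeFn_add, Pi.add_apply, add_mul]
        exact Summable.tsum_add (summable_char f t) (summable_char g t)
      map_smul' := fun c f => by
        simp only [lp.coeFn_smul, Pi.smul_apply, smul_eq_mul, RingHom.id_apply, mul_assoc]
        exact tsum_mul_left }
    1 (fun f => by
      simp only [LinearMap.coe_mk, AddHom.coe_mk, one_mul]
      calc ‖∑' k : ℤ, (f : ℤ → ℂ) k * Complex.exp (Complex.I * k * t)‖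
          ≤ ∑' k : ℤ, ‖(f : ℤ → ℂ) k * Complex.exp (Complex.I * k * t)‖ :=
            norm_tsum_le_tsum_norm (summable_char_norm f t)
        _ = ‖f‖ := by
            rw [norm_eq]
            exact tsum_congr fun k => by rw [norm_mul, norm_exp_I_int, mul_one])

lemma chi_apply (t : ℝ) (f : A1) :
    chi t f = ∑' k : ℤ, (f : ℤ → ℂ) k * Complex.exp (Complex.I * k * t) := rfl

lemma chi_one (t : ℝ) : chi t (1 : A1) = 1 := by
  rw [chi_apply, tsum_eq_single 0 (fun j hj => by simp [one_apply, hj])]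
  simp [one_apply]

lemma chi_translate (t : ℝ) (x y : A1)
    (hy : ∀ k, (y : ℤ → ℂ) k = (x : ℤ → ℂ) (k - m)) :
    chi t y = Complex.exp (Complex.I * m * t) * chi t x := by
  rw [chi_apply, chi_apply,
    ← (Equiv.addRight m).tsum_eq (fun k => (y : ℤ → ℂ) k * Complex.exp (Complex.I * k * t))]
  rw [← tsum_mul_left]
  refine tsum_congr fun k => ?_
  simp only [Equiv.coe_addRight, hy (k + m), add_sub_cancel_right]
  have he : Complex.exp (Complex.I * ((k : ℂ) + (m : ℂ)) * t)
      = Complex.exp (Complex.I * m * t) * Complex.exp (Complex.I * k * t) := by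
    rw [← Complex.exp_add]; ring_nf
  push_cast
  rw [he]
  ring

lemma norm_δ (m : ℤ) : ‖δ m‖ = 1 := by
  have := lp.norm_single (E := fun _ : ℤ => ℂ) (p := 1) (by norm_num) m (1 : ℂ)
  exact this.trans norm_one

lemma exists_char_rep (φ : WeakDual.characterSpace ℂ A1) :
    ∃ t : ℝ, ∀ f : A1, φ f = chi t f := by
  set z := φ (δ 1) with hzdef
  have hz1 : z * φ (δ (-1)) = 1 := by
    rw [← map_mul φ, δ_mul_δ]
    norm_num [δ_zero, map_one φ]
  have hz0 : z ≠ 0 := left_ne_zero_of_mul_eq_one hz1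
  have hinv : φ (δ (-1)) = z⁻¹ := eq_inv_of_mul_eq_one_right hz1
  have hn1 : ‖z‖ ≤ 1 := by
    simpa [norm_δ] using spectrum.norm_le_norm_of_mem (AlgHom.apply_mem_spectrum φ (δ 1))
  have hn2 : ‖φ (δ (-1))‖ ≤ 1 := by
    simpa [norm_δ] using spectrum.norm_le_norm_of_mem (AlgHom.apply_mem_spectrum φ (δ (-1)))
  have habs : ‖z‖ = 1 := by
    have h1 : ‖z‖ * ‖φ (δ (-1))‖ = 1 := by rw [← norm_mul, hz1, norm_one]
    have : 1 ≤ ‖z‖ := by nlinarith [norm_nonneg z, norm_nonneg (φ (δ (-1)))]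
    exact le_antisymm hn1 this
  refine ⟨z.arg, fun f => ?_⟩
  have hexp : Complex.exp ((z.arg : ℂ) * Complex.I) = z := by
    have := Complex.norm_mul_exp_arg_mul_I z
    rwa [habs, Complex.ofReal_one, one_mul] at this
  have hδm : ∀ m : ℤ, φ (δ m) = z ^ m := by
    intro m
    induction m using Int.induction_on with
    | zero => simp [δ_zero, map_one φ]
    | succ i ih =>
      have : δ ((i : ℤ) + 1) = δ i * δ 1 := (δ_mul_δ i 1).symm
      rw [this, map_mul φ, ih, ← hzdef, zpow_add_one₀ hz0]
    | pred i ih =>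
      have : δ (-(i : ℤ) - 1) = δ (-i) * δ (-1) := by rw [δ_mul_δ]; ring_nf
      rw [this, map_mul φ, ih, hinv, zpow_sub_one₀ hz0]
  have hsum := (hasSum_smul_δ f).mapL (WeakDual.CharacterSpace.toCLM φ)
  have hφf : φ f = ∑' m : ℤ, (f : ℤ → ℂ) m * z ^ m := by
    refine (hsum.congr_fun fun m => ?_).tsum_eq.symm
    show (f : ℤ → ℂ) m * z ^ m = φ ((f : ℤ → ℂ) m • δ m)
    rw [map_smul φ, smul_eq_mul, hδm]
  rw [hφf, chi_apply]
  refine tsum_congr fun m => ?_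
  congr 1
  rw [show Complex.I * m * z.arg = (m : ℂ) * ((z.arg : ℂ) * Complex.I) by ring,
    Complex.exp_int_mul, hexp]

end WienerL1

namespace WienerL1

lemma dense_of_isUnit (x : A1) (hx : IsUnit x) :
    Dense (Submodule.span ℂ
      {y : A1 | ∃ m : ℤ, ∀ k : ℤ, (y : ℤ → ℂ) k = (x : ℤ → ℂ) (k - m)} : Set A1) := by
  obtain ⟨u, rfl⟩ := hx
  intro z
  have hw : z * ↑u⁻¹ * ↑u = z := by rw [mul_assoc, Units.inv_mul, mul_one]
  have hwc := dense_span_δ (z * ↑u⁻¹)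
  have hcont : Continuous (fun y : A1 => y * (u : A1)) := continuous_id.mul continuous_const
  have hmaps : Set.MapsTo (fun y : A1 => y * (u : A1))
      (Submodule.span ℂ (Set.range δ) : Set A1)
      (Submodule.span ℂ {y : A1 | ∃ m : ℤ, ∀ k : ℤ,
        (y : ℤ → ℂ) k = ((u : A1) : ℤ → ℂ) (k - m)} : Set A1) := by
    intro y hy
    simp only [SetLike.mem_coe] at hy ⊢
    refine Submodule.span_induction (fun v hv => ?_) ?_ (fun a b _ _ ha hb => ?_)
      (fun c a _ ha => ?_) hy
    · obtain ⟨m, rfl⟩ := hv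
      exact Submodule.subset_span ⟨m, fun k => δ_mul_apply m u k⟩
    · simpa [zero_mul] using (Submodule.span ℂ _).zero_mem
    · simpa [add_mul] using Submodule.add_mem _ ha hb
    · simpa [smul_mul_assoc] using Submodule.smul_mem _ c ha
  have := map_mem_closure hcont hwc hmaps
  simpa [hw] using this

lemma chi_x_ne_zero_of_dense (x : A1)
    (h : Dense (Submodule.span ℂ
      {y : A1 | ∃ m : ℤ, ∀ k : ℤ, (y : ℤ → ℂ) k = (x : ℤ → ℂ) (k - m)} : Set A1))
    (t : ℝ) : chi t x ≠ 0 := by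
  intro h0
  have hsub : Submodule.span ℂ
      {y : A1 | ∃ m : ℤ, ∀ k : ℤ, (y : ℤ → ℂ) k = (x : ℤ → ℂ) (k - m)}
      ≤ LinearMap.ker (chi t : A1 →ₗ[ℂ] ℂ) := by
    rw [Submodule.span_le]
    rintro y ⟨m, hy⟩
    simp only [SetLike.mem_coe, LinearMap.mem_ker, ContinuousLinearMap.coe_coe]
    rw [chi_translate t x y hy, h0, mul_zero]
  have hcl : closure (Submodule.span ℂ
      {y : A1 | ∃ m : ℤ, ∀ k : ℤ, (y : ℤ → ℂ) k = (x : ℤ → ℂ) (k - m)} : Set A1)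
      ⊆ {z : A1 | chi t z = 0} := by
    refine closure_minimal (fun y hy => ?_) (isClosed_eq (chi t).continuous continuous_const)
    have := hsub hy
    simpa using this
  have h1 : chi t (1 : A1) = 0 := hcl (by rw [h.closure_eq]; trivial)
  rw [chi_one] at h1
  exact one_ne_zero h1

lemma isUnit_of_chi_ne_zero (x : A1) (h : ∀ t, chi t x ≠ 0) : IsUnit x := by
  by_contra hx
  obtain ⟨φ, hφ⟩ := WeakDual.CharacterSpace.exists_apply_eq_zero hx
  obtain ⟨t, ht⟩ := exists_char_rep φ
  exact h t (by rw [← ht, hφ])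

end WienerL1

end

/-- Wiener's theorem: `x ∈ ℓ¹(ℤ)` is cyclic in `ℓ¹(ℤ)` iff its Fourier transform
`x̂(t) = ∑_k x_k e^{ikt}` has no zeros. -/
theorem wiener_l1_cyclic (x : lp (fun _ : ℤ => ℂ) 1) :
    IsCyclicVector 1 (x : ℤ → ℂ) ↔
      ∀ t : ℝ, (∑' k : ℤ, (x : ℤ → ℂ) k * Complex.exp (Complex.I * k * t)) ≠ 0 := by
  constructor
  · intro hd t
    have hd' : Dense (Submodule.span ℂ
        {y : WienerL1.A1 | ∃ m : ℤ, ∀ k : ℤ, (y : ℤ → ℂ) k = (x : ℤ → ℂ) (k - m)} :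
        Set WienerL1.A1) := hd
    have := WienerL1.chi_x_ne_zero_of_dense x hd' t
    rwa [WienerL1.chi_apply] at this
  · intro h
    have hu : IsUnit x := WienerL1.isUnit_of_chi_ne_zero x
      (fun t => by rw [WienerL1.chi_apply]; exact h t)
    exact WienerL1.dense_of_isUnit x hu
end

section
/- There exists a nonzero Borel measure μ on the circle, supported on a compact set of Lebesgue measure zero, whose Fourier coefficients μ̂(n) tend to 0 as |n| → ∞. -/
open MeasureTheory Complex Filter

instance : Fact (0 < 2 * Real.pi) := ⟨Real.two_pi_pos⟩

open Finset Real

noncomputable section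
namespace Menshov

/-- distance to nearest integer -/
def del (x : ℝ) : ℝ := |x - round x|

lemma del_nonneg (x : ℝ) : 0 ≤ del x := abs_nonneg _
lemma del_le_half (x : ℝ) : del x ≤ 1/2 := abs_sub_round x

lemma del_le (x : ℝ) (k : ℤ) : del x ≤ |x - k| := by
  rcases eq_or_ne k (round x) with h | h
  · simp [del, h]
  · have h1 : (1:ℝ) ≤ |(round x : ℝ) - k| := by
      have hne : round x - k ≠ 0 := sub_ne_zero.2 (Ne.symm h)
      have := Int.one_le_abs hne
      calc (1:ℝ) ≤ |(round x - k : ℤ)| := by exact_mod_cast this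
      _ = |(round x : ℝ) - k| := by push_cast; ring_nf
    have h2 : |(round x:ℝ) - k| ≤ |x - k| + |x - round x| := by
      have he : (round x:ℝ) - k = (x - k) - (x - round x) := by ring
      rw [he]
      exact abs_sub _ _
    have := del_le_half x
    unfold del at *
    linarith

lemma del_neg (x : ℝ) : del (-x) = del x := by
  have h1 : ∀ y : ℝ, del (-y) ≤ del y := by
    intro y
    have := del_le (-y) (-round y)
    simpa [del, ← abs_neg (y - round y)] using this.trans (le_of_eq (by push_cast; ring_nf))
  have h2 := h1 (-x)
  rw [neg_neg] at h2
  exact le_antisymm (h1 x) h2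

lemma del_intCast (k : ℤ) : del (k:ℝ) = 0 := by simp [del]

lemma del_sub (x y : ℝ) : del (x - y) ≤ del x + del y := by
  have h := del_le (x - y) (round x - round y)
  refine h.trans ?_
  have he : x - y - ((round x - round y : ℤ) : ℝ) = (x - round x) - (y - round y) := by
    push_cast; ring
  rw [he]
  exact abs_sub _ _

lemma del_eq_zero {x : ℝ} (h : del x = 0) : x = round x := by
  have := abs_eq_zero.1 h
  linarith [sub_eq_zero.1 this]

lemma del_eq_self {x : ℝ} (h0 : 0 ≤ x) (h1 : x < 1/2) : del x = x := by
  have hr : round x = 0 := by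
    rw [round_eq, Int.floor_eq_zero_iff]
    constructor
    · simp; linarith
    · simp; linarith
  simp [del, hr, _root_.abs_of_nonneg h0]

/-- Jordan-type inequality -/
lemma jordan {y : ℝ} (h0 : 0 ≤ y) (h2 : y ≤ π/2) : 2/5 * y ≤ Real.sin y := by
  rcases le_or_gt y 1 with h1 | h1
  · rcases eq_or_lt_of_le h0 with h | h
    · simp [← h]
    · have hs := Real.sin_gt_sub_cube h
      nlinarith [sq_nonneg y, mul_le_one₀ h1 h0 h1]
  · have hs1 : Real.sin 1 ≥ 3/4 := by
      have := Real.sin_gt_sub_cube one_pos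
      norm_num at this ⊢
      linarith
    have hmono : Real.sin 1 ≤ Real.sin y := by
      rcases eq_or_lt_of_le h1.le with h | h
      · rw [h]
      · exact le_of_lt (Real.strictMonoOn_sin
          ⟨by linarith [Real.pi_pos], by linarith [Real.pi_pos]⟩
          ⟨by linarith [Real.pi_pos], h2⟩ h)
    have hpi : π < 3.15 := by
      have := Real.pi_lt_d2
      norm_num at this ⊢
      linarith
    nlinarith

lemma abs_sin_pi_mul (x : ℝ) : |Real.sin (π * x)| = Real.sin (π * del x) := by
  have h1 : Real.sin (π * x - (round x) * π) = (-1)^(round x) * Real.sin (π * x) :=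
    Real.sin_sub_int_mul_pi _ _
  have h2 : |Real.sin (π * (x - round x))| = |Real.sin (π * x)| := by
    have he : π * (x - round x) = π * x - (round x) * π := by ring
    rw [he, h1, _root_.abs_mul]
    have : |((-1:ℝ))^(round x)| = 1 := by
      rcases Int.even_or_odd (round x) with he' | ho
      · rw [he'.neg_one_zpow]; simp
      · rw [ho.neg_one_zpow]; simp
    rw [this, one_mul]
  rw [← h2]
  have hd := del_le_half x
  rcases _root_.abs_cases (x - round x) with ⟨he, hp⟩ | ⟨he, hn⟩
  · rw [del, he, _root_.abs_of_nonneg]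
    apply Real.sin_nonneg_of_nonneg_of_le_pi
    · nlinarith [Real.pi_pos]
    · rw [del, he] at hd; nlinarith [Real.pi_pos]
  · rw [del, he]
    rw [show π * (x - round x) = -(π * -(x - round x)) by ring, Real.sin_neg, abs_neg,
      _root_.abs_of_nonneg]
    apply Real.sin_nonneg_of_nonneg_of_le_pi
    · nlinarith [Real.pi_pos]
    · rw [del, he] at hd; nlinarith [Real.pi_pos]

/-- the character `e^{-2π i x}` -/
def ec (x : ℝ) : ℂ := Complex.exp (-(2 * π * x) * Complex.I)

lemma ec_add (x y : ℝ) : ec (x + y) = ec x * ec y := by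
  rw [ec, ec, ec, ← Complex.exp_add]
  congr 1
  push_cast
  ring

lemma norm_ec (x : ℝ) : ‖ec x‖ = 1 := by
  rw [ec]
  have he : ((-(2 * π * x) : ℝ) : ℂ) = (-(2 * (π:ℂ) * x)) := by push_cast; ring
  rw [← he, Complex.norm_exp_ofReal_mul_I]

lemma ec_natmul (e : ℕ) (x : ℝ) : ec (e * x) = (ec x)^e := by
  induction e with
  | zero => simp [ec]
  | succ k ih => rw [show ((k+1 : ℕ) : ℝ) * x = k * x + x by push_cast; ring,
      ec_add, ih, pow_succ]

lemma ec_intCast (k : ℤ) : ec (k : ℝ) = 1 := by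
  rw [ec, show (-(2 * (π:ℂ) * (k:ℝ)) * Complex.I) = -k * (2 * π * Complex.I) by push_cast; ring]
  rw [show ((-k : ℂ) * (2 * π * Complex.I)) = ((-k : ℤ) : ℂ) * (2 * π * Complex.I) by push_cast; ring]
  exact Complex.exp_int_mul_two_pi_mul_I (-k)

lemma norm_exp_mul_I_sub_one (θ : ℝ) :
    ‖Complex.exp ((θ:ℂ) * Complex.I) - 1‖ = 2 * |Real.sin (θ/2)| := by
  have e1 : Complex.exp ((θ:ℂ) * Complex.I) - 1
      = Complex.exp (((θ/2 : ℝ):ℂ) * Complex.I) *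
        (Complex.exp (((θ/2:ℝ):ℂ) * Complex.I) - Complex.exp (-((θ/2:ℝ):ℂ) * Complex.I)) := by
    rw [mul_sub, ← Complex.exp_add, ← Complex.exp_add]
    congr 2
    · push_cast; ring
    · rw [show (((θ/2:ℝ):ℂ) * Complex.I + -((θ/2:ℝ):ℂ) * Complex.I) = 0 by ring,
        Complex.exp_zero]
  have e2 : Complex.exp (((θ/2:ℝ):ℂ) * Complex.I) - Complex.exp (-((θ/2:ℝ):ℂ) * Complex.I)
      = 2 * (Real.sin (θ/2) : ℂ) * Complex.I := by
    rw [show (-((θ/2:ℝ):ℂ) * Complex.I) = ((-(θ/2):ℝ):ℂ) * Complex.I by push_cast; ring]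
    rw [Complex.exp_mul_I, Complex.exp_mul_I]
    rw [← Complex.ofReal_cos, ← Complex.ofReal_sin, ← Complex.ofReal_cos, ← Complex.ofReal_sin]
    rw [Real.cos_neg, Real.sin_neg]
    push_cast
    ring
  rw [e1, e2]
  rw [norm_mul, norm_mul, norm_mul, Complex.norm_exp_ofReal_mul_I]
  rw [Complex.norm_real, Real.norm_eq_abs, Complex.norm_I, Complex.norm_two]
  ring

lemma norm_ec_sub_one (x : ℝ) : ‖ec x - 1‖ = 2 * |Real.sin (π * x)| := by
  have : ec x = Complex.exp (((-(2 * π * x) : ℝ):ℂ) * Complex.I) := by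
    rw [ec]; congr 1; push_cast; ring
  rw [this, norm_exp_mul_I_sub_one]
  rw [show (-(2*π*x))/2 = -(π*x) by ring, Real.sin_neg, abs_neg]

lemma norm_ec_sub_one_eq_del (x : ℝ) : ‖ec x - 1‖ = 2 * Real.sin (π * del x) := by
  rw [norm_ec_sub_one, abs_sin_pi_mul]

lemma norm_ec_sub_one_le (x : ℝ) : ‖ec x - 1‖ ≤ 2 * π * |x| := by
  rw [norm_ec_sub_one_eq_del]
  have h1 : Real.sin (π * del x) ≤ π * del x :=
    Real.sin_le (mul_nonneg Real.pi_pos.le (del_nonneg x))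
  have h2 : del x ≤ |x| := by simpa using del_le x 0
  nlinarith [Real.pi_pos]

lemma norm_ec_sub_ec_le (x y : ℝ) : ‖ec x - ec y‖ ≤ 2 * π * |x - y| := by
  have : ec x - ec y = ec y * (ec (x - y) - 1) := by
    rw [mul_sub, ← ec_add]; ring_nf
  rw [this, norm_mul, norm_ec, one_mul]
  exact norm_ec_sub_one_le _

lemma del_le_norm_ec_sub_one (x : ℝ) : del x ≤ ‖ec x - 1‖ := by
  rw [norm_ec_sub_one_eq_del]
  have h1 : 2/5 * (π * del x) ≤ Real.sin (π * del x) := by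
    apply jordan
    · exact mul_nonneg Real.pi_pos.le (del_nonneg x)
    · nlinarith [del_le_half x, Real.pi_pos]
  nlinarith [Real.pi_gt_three, del_nonneg x]

lemma norm_ec_sub_one_le_del (x : ℝ) : ‖ec x - 1‖ ≤ 2 * π * del x := by
  rw [norm_ec_sub_one_eq_del]
  have := Real.sin_le (x := π * del x) (mul_nonneg Real.pi_pos.le (del_nonneg x))
  linarith

/-! ### the factors `gg` and the key decay lemma -/

/-- the `j`-th factor of the Fourier coefficient -/
def gg (j : ℕ) (n : ℤ) : ℝ :=
  ‖∑ e ∈ Finset.range (j+2), (ec ((n:ℝ) / (Nat.factorial (j+3))))^e‖ / (j+2)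

lemma fact_succ_real (k : ℕ) :
    ((Nat.factorial (k+1) : ℝ)) = (k+1) * (Nat.factorial k) := by
  rw [Nat.factorial_succ]; push_cast; ring

lemma div_fact_succ (x : ℝ) (k : ℕ) :
    x / (Nat.factorial k) = (k+1) * (x / (Nat.factorial (k+1))) := by
  rw [fact_succ_real]
  have h1 : ((Nat.factorial k : ℝ)) ≠ 0 := by
    exact_mod_cast (Nat.factorial_pos k).ne'
  have h2 : ((k:ℝ)+1) ≠ 0 := by positivity
  field_simp

lemma gg_step {j : ℕ} {n : ℤ} {ε : ℝ} (hε : 0 < ε) (hj : 20 ≤ ε * (j+2))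
    (hg : ε < gg j n) :
    2 * del ((n:ℝ) / (Nat.factorial (j+3))) ≤ del ((n:ℝ) / (Nat.factorial (j+2))) := by
  set τ := del ((n:ℝ) / (Nat.factorial (j+3))) with hτdef
  have hid : (n:ℝ) / (Nat.factorial (j+2)) = (j+3) * ((n:ℝ) / (Nat.factorial (j+3))) := by
    have := div_fact_succ (n:ℝ) (j+2)
    rw [show j+2+1 = j+3 by ring] at this
    rw [this]; push_cast; ring
  rcases (del_nonneg ((n:ℝ) / (Nat.factorial (j+3)))).eq_or_lt with h0 | h0
  · rw [← hτdef] at h0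
    rw [← h0]
    simpa using del_nonneg ((n:ℝ) / (Nat.factorial (j+2)))
  · -- τ > 0 : geometric series estimate
    have hne : ec ((n:ℝ) / (Nat.factorial (j+3))) ≠ 1 := by
      intro h
      have := del_le_norm_ec_sub_one ((n:ℝ) / (Nat.factorial (j+3)))
      rw [h] at this
      simp at this
      rw [← hτdef] at this
      linarith
    have hgeom := geom_sum_eq hne (j+2)
    have hnum : (ec ((n:ℝ) / (Nat.factorial (j+3))))^(j+2)
        = ec ((n:ℝ) / (Nat.factorial (j+2)) - (n:ℝ) / (Nat.factorial (j+3))) := by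
      rw [← ec_natmul]
      congr 1
      rw [hid]; push_cast; ring
    set A := del ((n:ℝ) / (Nat.factorial (j+2))) with hA
    have hupper : gg j n ≤ 2 * π * (A + τ) / ((j+2) * τ) := by
      rw [gg, hgeom, norm_div]
      have hden : τ ≤ ‖ec ((n:ℝ) / (Nat.factorial (j+3))) - 1‖ :=
        del_le_norm_ec_sub_one _
      have hnum2 : ‖(ec ((n:ℝ) / (Nat.factorial (j+3))))^(j+2) - 1‖ ≤ 2 * π * (A + τ) := by
        rw [hnum]
        refine (norm_ec_sub_one_le_del _).trans ?_
        have := del_sub ((n:ℝ) / (Nat.factorial (j+2))) ((n:ℝ) / (Nat.factorial (j+3)))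
        rw [← hA, ← hτdef] at this
        nlinarith [Real.pi_pos]
      have hpos1 : (0:ℝ) < ‖ec ((n:ℝ) / (Nat.factorial (j+3))) - 1‖ := lt_of_lt_of_le h0 hden
      have hj2 : (0:ℝ) < (j:ℝ)+2 := by positivity
      rw [div_div]
      apply div_le_div₀ (by nlinarith [Real.pi_pos, del_nonneg ((n:ℝ) / (Nat.factorial (j+2)))])
        hnum2 (by positivity)
      calc ((j:ℝ)+2) * τ ≤ ‖ec ((n:ℝ) / (Nat.factorial (j+3))) - 1‖ * ((j:ℝ)+2) := by
            nlinarith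
        _ ≤ _ := le_of_eq (by ring_nf)
    have hεlt : ε < 2 * π * (A + τ) / ((j+2) * τ) := lt_of_lt_of_le hg hupper
    have hττ : (0:ℝ) < ((j:ℝ)+2) * τ := by positivity
    rw [lt_div_iff₀ hττ] at hεlt
    have hπ : π < 3.15 := by
      have := Real.pi_lt_d2; norm_num at this ⊢; linarith
    have h20 : 20 * τ ≤ ε * ((j:ℝ)+2) * τ := by nlinarith
    nlinarith [Real.pi_gt_three, del_nonneg ((n:ℝ) / (Nat.factorial (j+2)))]

lemma exists_p {n : ℕ} (hn : 1 ≤ n) :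
    ∃ p, 1 ≤ p ∧ Nat.factorial p ≤ n ∧ n < Nat.factorial (p+1) ∧
      (∀ Q, Nat.factorial Q ≤ n → Q ≤ p) := by
  classical
  set p := Nat.findGreatest (fun q => Nat.factorial q ≤ n) n with hp
  have hmax : ∀ Q, Nat.factorial Q ≤ n → Q ≤ p := by
    intro Q hQ
    by_contra hc
    push_neg at hc
    exact (Nat.findGreatest_is_greatest hc ((Nat.self_le_factorial Q).trans hQ)) hQ
  have hple : Nat.factorial p ≤ n :=
    Nat.findGreatest_spec (P := fun q => Nat.factorial q ≤ n) (m := 1) hn (by simpa using hn)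
  refine ⟨p, hmax 1 (by simpa using hn), hple, ?_, hmax⟩
  by_contra hc
  push_neg at hc
  exact absurd (hmax (p+1) hc) (by omega)

lemma chain {ε : ℝ} {n : ℤ} {J p : ℕ} (hε : 0 < ε) (hJ : 20 ≤ ε * (J+2))
    (hg : ∀ j, J ≤ j → j ≤ p → ε < gg j n) :
    ∀ d, d ≤ p + 1 - J →
      2^d * del ((n:ℝ) / (Nat.factorial (p+3))) ≤ del ((n:ℝ) / (Nat.factorial (p+3-d))) := by
  intro d
  induction d with
  | zero => intro _; simp
  | succ d ih =>
    intro hd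
    have hd' : d ≤ p + 1 - J := by omega
    have hJp : J + d ≤ p := by omega
    have ihd := ih hd'
    have hstep := gg_step (j := p - d) hε ?_ (hg (p-d) (by omega) (by omega))
    · have e3 : p - d + 3 = p + 3 - d := by omega
      have e2 : p - d + 2 = p + 3 - (d+1) := by omega
      rw [e3, e2] at hstep
      calc 2^(d+1) * del ((n:ℝ) / (Nat.factorial (p+3)))
          = 2 * (2^d * del ((n:ℝ) / (Nat.factorial (p+3)))) := by ring
        _ ≤ 2 * del ((n:ℝ) / (Nat.factorial (p+3-d))) := by linarith
        _ ≤ _ := hstep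
    · have : (J:ℝ) + 2 ≤ ((p-d : ℕ):ℝ) + 2 := by
        have : (J:ℝ) ≤ ((p-d : ℕ):ℝ) := by exact_mod_cast (by omega : J ≤ p - d)
        linarith
      nlinarith

lemma exists_growth (c : ℕ) : ∃ D : ℕ, ∀ d, D ≤ d → ((d + c : ℕ):ℝ)^3 < 2^d := by
  have hsum : Summable (fun d : ℕ => ((d:ℝ))^3 * (1/2)^d) := by
    apply summable_pow_mul_geometric_of_norm_lt_one
    rw [norm_of_nonneg (by norm_num)]
    norm_num
  have ht : Tendsto (fun d : ℕ => ((d:ℝ))^3 * (1/2)^d) atTop (nhds 0) :=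
    hsum.tendsto_atTop_zero
  have ht2 : Tendsto (fun d : ℕ => (((d+c:ℕ)):ℝ)^3 * (1/2)^(d+c)) atTop (nhds 0) :=
    ht.comp (tendsto_add_atTop_nat c)
  have ht3 : Tendsto (fun d : ℕ => (((d+c:ℕ)):ℝ)^3 * (1/2)^d) atTop (nhds 0) := by
    have : (fun d : ℕ => (((d+c:ℕ)):ℝ)^3 * (1/2)^d)
        = fun d : ℕ => ((((d+c:ℕ)):ℝ)^3 * (1/2)^(d+c)) * 2^c := by
      funext d
      rw [pow_add]
      have : ((1:ℝ)/2)^c * 2^c = 1 := by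
        rw [div_pow, one_pow, div_mul_cancel₀]
        positivity
      field_simp
      linear_combination (-((((d+c:ℕ)):ℝ)^3)) * this
    rw [this]
    simpa using ht2.mul_const ((2:ℝ)^c)
  have hev : ∀ᶠ d in atTop, (((d+c:ℕ)):ℝ)^3 * (1/2)^d < 1 :=
    Filter.Tendsto.eventually_lt_const one_pos ht3
  obtain ⟨D, hD⟩ := Filter.eventually_atTop.1 hev
  refine ⟨D, fun d hd => ?_⟩
  have := hD d hd
  have h2 : (0:ℝ) < 2^d := by positivity
  have hh : ((1:ℝ)/2)^d = (2^d)⁻¹ := by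
    rw [div_pow, one_pow, inv_eq_one_div]
  rw [hh] at this
  calc (((d + c : ℕ)):ℝ)^3 = (((d+c:ℕ)):ℝ)^3 * (2^d)⁻¹ * 2^d := by field_simp
    _ < 1 * 2^d := by
        apply mul_lt_mul_of_pos_right this h2
    _ = 2^d := one_mul _

lemma del_abs (x : ℝ) : del |x| = del x := by
  rcases abs_cases x with ⟨h, _⟩ | ⟨h, _⟩
  · rw [h]
  · rw [h, del_neg]

lemma del_int_natAbs (n : ℤ) (k : ℕ) :
    del ((n.natAbs : ℝ) / k) = del ((n:ℝ) / k) := by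
  have : ((n.natAbs : ℝ)) = |(n:ℝ)| := by
    simp [Nat.cast_natAbs]
  rw [this, ← del_abs ((n:ℝ)/k), abs_div,
    _root_.abs_of_nonneg (Nat.cast_nonneg (α := ℝ) k)]

/-- Key lemma : for large `|n|` some factor is at most `ε`. -/
lemma key {ε : ℝ} (hε : 0 < ε) :
    ∃ N : ℕ, 1 ≤ N ∧ ∀ n : ℤ, (N:ℤ) ≤ |n| → ∃ j, gg j n ≤ ε := by
  obtain ⟨J, hJ⟩ : ∃ J : ℕ, 20 ≤ ε * (J+2) := by
    refine ⟨⌈20/ε⌉₊, ?_⟩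
    have h1 : 20/ε ≤ (⌈20/ε⌉₊ : ℝ) := Nat.le_ceil _
    have h2 : 20/ε * ε = 20 := by field_simp
    nlinarith [Nat.cast_nonneg (α := ℝ) ⌈20/ε⌉₊]
  obtain ⟨D, hD⟩ := exists_growth (J + 2)
  set P := J + D + 1 with hP
  refine ⟨Nat.factorial P, Nat.one_le_iff_ne_zero.2 (Nat.factorial_pos P).ne', fun n hn => ?_⟩
  by_contra hc
  push_neg at hc
  set nn := n.natAbs with hnn
  have hnn1 : Nat.factorial P ≤ nn := by
    have : (Nat.factorial P : ℤ) ≤ |n| := hn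
    rw [Int.abs_eq_natAbs] at this
    exact_mod_cast this
  obtain ⟨p, hp1, hple, hplt, hmax⟩ := exists_p (le_trans (Nat.one_le_iff_ne_zero.2 (Nat.factorial_pos P).ne') hnn1)
  have hpP : P ≤ p := hmax P hnn1
  -- apply the chain with d = p + 1 - J
  have hch := chain hε hJ (fun j _ _ => hc j) (p + 1 - J) le_rfl
  have hidx : p + 3 - (p + 1 - J) = J + 2 := by omega
  rw [hidx] at hch
  -- lower bound for del (n / (p+3)!)
  have hT : del ((n:ℝ) / (Nat.factorial (p+3))) = (nn:ℝ) / (Nat.factorial (p+3)) := by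
    rw [← del_int_natAbs]
    apply del_eq_self
    · positivity
    · rw [div_lt_iff₀ (by positivity : (0:ℝ) < (Nat.factorial (p+3) : ℝ))]
      have h1 : (nn:ℝ) < (Nat.factorial (p+1) : ℝ) := by exact_mod_cast hplt
      have h2 : (Nat.factorial (p+1) : ℝ) * 2 ≤ (Nat.factorial (p+3) : ℝ) := by
        have : Nat.factorial (p+1) * 2 ≤ Nat.factorial (p+3) := by
          have h3 : Nat.factorial (p+3) = (p+3) * ((p+2) * Nat.factorial (p+1)) := by
            rw [Nat.factorial_succ, Nat.factorial_succ]
          rw [h3]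
          have h4 : 2 ≤ (p+3)*(p+2) := by nlinarith
          calc Nat.factorial (p+1) * 2 ≤ Nat.factorial (p+1) * ((p+3)*(p+2)) :=
                Nat.mul_le_mul_left _ h4
            _ = (p+3) * ((p+2) * Nat.factorial (p+1)) := by ring
        exact_mod_cast this
      nlinarith [Nat.factorial_pos (p+1), (by positivity : (0:ℝ) < (Nat.factorial (p+1):ℝ))]
  have hlow : (1:ℝ) / ((p+1) * (p+2) * (p+3)) ≤ del ((n:ℝ) / (Nat.factorial (p+3))) := by
    rw [hT]
    have h1 : (Nat.factorial p : ℝ) ≤ (nn:ℝ) := by exact_mod_cast hple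
    have h2 : (Nat.factorial (p+3) : ℝ)
        = (Nat.factorial p : ℝ) * ((p+1) * (p+2) * (p+3)) := by
      have : Nat.factorial (p+3) = Nat.factorial p * ((p+1) * ((p+2) * (p+3))) := by
        rw [Nat.factorial_succ, Nat.factorial_succ, Nat.factorial_succ]
        ring
      rw [this]; push_cast; ring
    rw [div_le_div_iff₀ (by positivity) (by positivity : (0:ℝ) < (Nat.factorial (p+3):ℝ))]
    rw [h2]
    nlinarith [Nat.factorial_pos p, (by positivity : (0:ℝ) < (Nat.factorial p : ℝ))]
  -- contradiction
  set d := p + 1 - J with hd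
  have hdD : D ≤ d := by omega
  have hgrow := hD d hdD
  have hcast : ((d + (J + 2) : ℕ) : ℝ) = ((p:ℝ) + 3) := by
    have : d + (J + 2) = p + 3 := by omega
    rw [this]; push_cast; ring
  rw [hcast] at hgrow
  have hhalf : del ((n:ℝ) / (Nat.factorial (J+2))) ≤ 1/2 := del_le_half _
  have hfinal : (2:ℝ)^d * (1 / ((p+1) * (p+2) * (p+3))) ≤ 1/2 := by
    calc (2:ℝ)^d * (1 / ((p+1) * (p+2) * (p+3)))
        ≤ 2^d * del ((n:ℝ) / (Nat.factorial (p+3))) := by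
          apply mul_le_mul_of_nonneg_left hlow (by positivity)
      _ ≤ del ((n:ℝ) / (Nat.factorial (J+2))) := hch
      _ ≤ 1/2 := hhalf
  have hppos : (0:ℝ) < ((p:ℝ)+1) * ((p:ℝ)+2) * ((p:ℝ)+3) := by positivity
  rw [mul_one_div, div_le_div_iff₀ hppos (by norm_num)] at hfinal
  -- 2^d * 2 ≤ (p+1)(p+2)(p+3) ≤ (p+3)^3 < 2^d : contradiction
  have hle : ((p:ℝ)+1) * ((p:ℝ)+2) * ((p:ℝ)+3) ≤ ((p:ℝ)+3)^3 := by nlinarith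
  nlinarith [pow_pos (by norm_num : (0:ℝ) < 2) d]
/-! ### digits and partial sums -/

/-- the `j`-th digit of `t` -/
def dig (j : ℕ) (t : ℝ) : ℕ := ⌊(Nat.factorial (j+2) : ℝ) * t⌋₊ % (j+2)

lemma dig_lt (j : ℕ) (t : ℝ) : dig j t < j + 2 := Nat.mod_lt _ (by omega)

/-- partial sum of the digit expansion -/
def S (m : ℕ) (t : ℝ) : ℝ := ∑ j ∈ Finset.range m, (dig j t : ℝ) / Nat.factorial (j+3)

/-- the full digit expansion -/
def psi (t : ℝ) : ℝ := ∑' j, (dig j t : ℝ) / Nat.factorial (j+3)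

lemma term_le (j : ℕ) (t : ℝ) :
    (dig j t : ℝ) / Nat.factorial (j+3) ≤ 1 / Nat.factorial (j+2) := by
  have h1 : ((dig j t : ℝ)) ≤ (j+1 : ℝ) := by
    have := dig_lt j t; exact_mod_cast (by omega : dig j t ≤ j+1)
  have h2 : ((Nat.factorial (j+3) : ℝ)) = (j+3) * Nat.factorial (j+2) := by
    rw [Nat.factorial_succ]; push_cast; ring
  rw [h2, div_le_div_iff₀ (by positivity) (by positivity)]
  nlinarith [(by positivity : (0:ℝ) < (Nat.factorial (j+2) : ℝ))]

lemma summable_shift : Summable (fun j : ℕ => (1:ℝ) / Nat.factorial (j+2)) := by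
  have h := Real.summable_pow_div_factorial 1
  simp only [one_pow] at h
  exact (summable_nat_add_iff 2).2 h

lemma summable_dig (t : ℝ) :
    Summable (fun j : ℕ => (dig j t : ℝ) / Nat.factorial (j+3)) := by
  apply Summable.of_nonneg_of_le (fun j => by positivity) (fun j => term_le j t) summable_shift

lemma fact_add_ge (m j : ℕ) :
    Nat.factorial (m+2) * 2^j ≤ Nat.factorial (m + 2 + j) := by
  induction j with
  | zero => simp
  | succ j ih =>
    have h1 : Nat.factorial (m+2+j) * 2 ≤ Nat.factorial (m+2+(j+1)) := by
      rw [show m+2+(j+1) = (m+2+j)+1 by ring, Nat.factorial_succ]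
      calc Nat.factorial (m+2+j) * 2 = 2 * Nat.factorial (m+2+j) := by ring
        _ ≤ (m+2+j+1) * Nat.factorial (m+2+j) := Nat.mul_le_mul (by omega) le_rfl
    calc Nat.factorial (m+2) * 2^(j+1) = (Nat.factorial (m+2) * 2^j) * 2 := by ring
      _ ≤ Nat.factorial (m+2+j) * 2 := Nat.mul_le_mul ih le_rfl
      _ ≤ _ := h1

lemma tail_bound (m : ℕ) (t : ℝ) :
    0 ≤ psi t - S m t ∧ psi t - S m t ≤ 2 / Nat.factorial (m+2) := by
  have hsum := summable_dig t
  have hsplit := Summable.sum_add_tsum_nat_add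
    (f := fun j : ℕ => (dig j t : ℝ) / Nat.factorial (j+3)) m hsum
  have htail : psi t - S m t = ∑' j : ℕ, ((dig (j+m) t : ℝ) / Nat.factorial (j+m+3)) := by
    rw [psi, S, ← hsplit]; ring
  have hsum2 : Summable (fun j : ℕ => (dig (j+m) t : ℝ) / Nat.factorial (j+m+3)) :=
    (summable_nat_add_iff m).2 hsum
  constructor
  · rw [htail]
    exact tsum_nonneg (fun j => by positivity)
  · rw [htail]
    have hle : ∀ j : ℕ, (dig (j+m) t : ℝ) / Nat.factorial (j+m+3)
        ≤ (1 / Nat.factorial (m+2)) * (1/2)^j := by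
      intro j
      refine (term_le (j+m) t).trans ?_
      have h1 : (Nat.factorial (m+2) : ℝ) * 2^j ≤ (Nat.factorial (j+m+2) : ℝ) := by
        have := fact_add_ge m j
        rw [show m+2+j = j+m+2 by ring] at this
        exact_mod_cast this
      have he : (1 / (Nat.factorial (m+2):ℝ)) * (1/2)^j
          = ((Nat.factorial (m+2) : ℝ) * 2^j)⁻¹ := by
        rw [div_pow, one_pow, mul_inv]
        field_simp
      rw [he, one_div]
      exact inv_anti₀ (by positivity) h1
    have hgsum : Summable (fun j : ℕ => (1 / (Nat.factorial (m+2):ℝ)) * (1/2)^j) :=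
      (summable_geometric_of_lt_one (by norm_num) (by norm_num)).mul_left _
    calc ∑' j : ℕ, ((dig (j+m) t : ℝ) / Nat.factorial (j+m+3))
        ≤ ∑' j : ℕ, (1 / (Nat.factorial (m+2):ℝ)) * (1/2)^j :=
          Summable.tsum_le_tsum hle hsum2 hgsum
      _ = (1 / (Nat.factorial (m+2):ℝ)) * (1 - 1/2)⁻¹ := by
          rw [tsum_mul_left, tsum_geometric_of_lt_one (by norm_num) (by norm_num)]
      _ = 2 / Nat.factorial (m+2) := by norm_num; ring

lemma measurable_digR (j : ℕ) : Measurable (fun t : ℝ => (dig j t : ℝ)) := by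
  have h1 : Measurable (fun t : ℝ => ⌊(Nat.factorial (j+2) : ℝ) * t⌋₊) :=
    Nat.measurable_floor.comp (measurable_const.mul measurable_id)
  exact (measurable_from_nat (f := fun k : ℕ => ((k % (j+2) : ℕ) : ℝ))).comp h1

lemma measurable_S (m : ℕ) : Measurable (S m) := by
  apply Finset.measurable_sum
  intro j _
  exact (measurable_digR j).div_const _

lemma measurable_psi : Measurable psi := by
  apply measurable_of_tendsto_metrizable (f := fun m => S m)
  · exact fun m => measurable_S m
  · rw [tendsto_pi_nhds]
    intro t
    exact (summable_dig t).hasSum.tendsto_sum_nat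

lemma dig_rat {j : ℕ} {R F : ℕ} (hR : 0 < R) (hF : F = Nat.factorial (j+2) * R) (a : ℕ) :
    dig j ((a:ℝ)/F) = (a / R) % (j+2) := by
  rw [dig]
  congr 1
  have hfm : (Nat.factorial (j+2) : ℝ) * ((a:ℝ)/F) = (a:ℝ)/R := by
    rw [hF]
    have h1 : ((Nat.factorial (j+2) : ℝ)) ≠ 0 := by positivity
    have h2 : ((R:ℝ)) ≠ 0 := by positivity
    push_cast
    field_simp
  rw [hfm, Nat.floor_div_natCast, Nat.floor_natCast]

lemma dig_floor {j m : ℕ} (hj : j < m) (t : ℝ) :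
    dig j ((⌊(Nat.factorial (m+1) : ℝ) * t⌋₊ : ℝ) / Nat.factorial (m+1)) = dig j t := by
  obtain ⟨R, hR⟩ : Nat.factorial (j+2) ∣ Nat.factorial (m+1) :=
    Nat.factorial_dvd_factorial (by omega)
  have hR0 : 0 < R := by
    rcases Nat.eq_zero_or_pos R with h | h
    · exfalso; rw [h, mul_zero] at hR; exact (Nat.factorial_pos (m+1)).ne' hR
    · exact h
  rw [dig_rat hR0 hR]
  rw [dig]
  congr 1
  rw [← Nat.floor_div_natCast]
  congr 1
  have h1 : ((R:ℝ)) ≠ 0 := by positivity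
  have h2 : ((Nat.factorial (m+1) : ℝ)) = (Nat.factorial (j+2) : ℝ) * R := by
    exact_mod_cast hR
  rw [h2]
  field_simp

lemma S_floor {m : ℕ} (t : ℝ) :
    S m ((⌊(Nat.factorial (m+1) : ℝ) * t⌋₊ : ℝ) / Nat.factorial (m+1)) = S m t := by
  rw [S, S]
  apply Finset.sum_congr rfl
  intro j hj
  rw [dig_floor (Finset.mem_range.1 hj)]
lemma sum_range_add' (f : ℕ → ℂ) (m k : ℕ) :
    ∑ a ∈ Finset.range (m+k), f a
      = ∑ a ∈ Finset.range m, f a + ∑ v ∈ Finset.range k, f (m+v) := by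
  rw [Finset.range_add, Finset.sum_union, Finset.sum_map]
  · simp [addLeftEmbedding_apply]
  · rw [Finset.disjoint_left]
    intro x hx hx2
    rw [Finset.mem_range] at hx
    rw [Finset.mem_map] at hx2
    obtain ⟨v, _, hv⟩ := hx2
    rw [addLeftEmbedding_apply] at hv
    omega

lemma sum_range_mul (f : ℕ → ℂ) (M K : ℕ) :
    ∑ a ∈ Finset.range (M*K), f a
      = ∑ u ∈ Finset.range M, ∑ v ∈ Finset.range K, f (u*K + v) := by
  induction M with
  | zero => simp
  | succ M ih =>
    rw [show (M+1)*K = M*K + K by ring, sum_range_add' f (M*K) K, ih,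
      Finset.sum_range_succ]

lemma integral_S (m : ℕ) (n : ℤ) :
    ∫ t in Set.Ico (0:ℝ) 1, ec ((n:ℝ) * S m t)
      = ((Nat.factorial (m+1) : ℝ))⁻¹ •
          ∑ a ∈ Finset.range (Nat.factorial (m+1)),
            ec ((n:ℝ) * S m ((a:ℝ)/(Nat.factorial (m+1)))) := by
  set N := Nat.factorial (m+1) with hNdef
  have hN : 0 < N := Nat.factorial_pos _
  have hNR : (0:ℝ) < (N:ℝ) := by exact_mod_cast hN
  have hcover : Set.Ico (0:ℝ) 1
      = ⋃ a ∈ Finset.range N, Set.Ico ((a:ℝ)/N) (((a:ℝ)+1)/N) := by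
    ext t
    simp only [Set.mem_iUnion, Finset.mem_range, Set.mem_Ico, exists_prop]
    constructor
    · rintro ⟨h0, h1⟩
      have ht0 : (0:ℝ) ≤ (N:ℝ)*t := by positivity
      refine ⟨⌊(N:ℝ)*t⌋₊, ?_, ?_, ?_⟩
      · rw [Nat.floor_lt ht0]
        calc (N:ℝ)*t < N*1 := by
              exact mul_lt_mul_of_pos_left h1 hNR
          _ = N := mul_one _
      · rw [div_le_iff₀ hNR]
        calc ((⌊(N:ℝ)*t⌋₊ : ℝ)) ≤ (N:ℝ)*t := Nat.floor_le ht0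
          _ = t * N := mul_comm _ _
      · rw [lt_div_iff₀ hNR]
        calc t * N = (N:ℝ)*t := mul_comm _ _
          _ < ⌊(N:ℝ)*t⌋₊ + 1 := Nat.lt_floor_add_one _
    · rintro ⟨a, ha, h1, h2⟩
      constructor
      · exact le_trans (by positivity) h1
      · calc t < ((a:ℝ)+1)/N := h2
          _ ≤ (N:ℝ)/N := by
              rw [div_le_div_iff_of_pos_right hNR]
              exact_mod_cast (by omega : a+1 ≤ N)
          _ = 1 := div_self hNR.ne'
  have heq : ∀ a ∈ Finset.range N, ∀ t ∈ Set.Ico ((a:ℝ)/N) (((a:ℝ)+1)/N),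
      ec ((n:ℝ) * S m t) = ec ((n:ℝ) * S m ((a:ℝ)/N)) := by
    intro a _ t ht
    obtain ⟨h1, h2⟩ := ht
    have hf : ⌊(N:ℝ)*t⌋₊ = a := by
      rw [Nat.floor_eq_iff]
      constructor
      · calc ((a:ℝ)) = (a/N)*N := by field_simp
          _ ≤ t*N := mul_le_mul_of_nonneg_right h1 hNR.le
          _ = N*t := mul_comm _ _
      · calc (N:ℝ)*t = t*N := mul_comm _ _
          _ < (((a:ℝ)+1)/N)*N := mul_lt_mul_of_pos_right h2 hNR
          _ = (a:ℝ)+1 := by field_simp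
      · have : (0:ℝ) ≤ (a:ℝ)/N := by positivity
        nlinarith
    rw [← S_floor (m := m) t, hf]
  have hint : ∀ a ∈ Finset.range N,
      IntegrableOn (fun t => ec ((n:ℝ) * S m t)) (Set.Ico ((a:ℝ)/N) (((a:ℝ)+1)/N)) volume := by
    intro a ha
    have hconst : IntegrableOn (fun _ : ℝ => ec ((n:ℝ) * S m ((a:ℝ)/N)))
        (Set.Ico ((a:ℝ)/N) (((a:ℝ)+1)/N)) volume :=
      integrableOn_const measure_Ico_lt_top.ne
    exact hconst.congr_fun (fun t ht => (heq a ha t ht).symm) measurableSet_Ico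
  rw [hcover, integral_biUnion_finset (Finset.range N)
    (fun a _ => measurableSet_Ico) ?_ hint]
  · have hterm : ∀ a ∈ Finset.range N,
        ∫ t in Set.Ico ((a:ℝ)/N) (((a:ℝ)+1)/N), ec ((n:ℝ) * S m t)
          = ((N:ℝ))⁻¹ • ec ((n:ℝ) * S m ((a:ℝ)/N)) := by
      intro a ha
      rw [setIntegral_congr_fun measurableSet_Ico (heq a ha), setIntegral_const]
      congr 1
      rw [Real.volume_real_Ico]
      rw [show ((a:ℝ)+1)/N - (a:ℝ)/N = (N:ℝ)⁻¹ by field_simp; ring]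
      exact max_eq_left (by positivity)
    rw [Finset.sum_congr rfl hterm, ← Finset.smul_sum]
  · intro a ha b hb hab
    simp only [Function.onFun]
    rw [Set.Ico_disjoint_Ico]
    rcases Nat.lt_or_ge a b with h | h
    · apply le_trans (min_le_left _ _)
      apply le_trans ?_ (le_max_right _ _)
      rw [div_le_div_iff_of_pos_right hNR]
      exact_mod_cast (by omega : a+1 ≤ b)
    · have h' : b < a := by omega
      apply le_trans (min_le_right _ _)
      apply le_trans ?_ (le_max_left _ _)
      rw [div_le_div_iff_of_pos_right hNR]
      exact_mod_cast (by omega : b+1 ≤ a)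
section SumBound

variable {m j₀ : ℕ}

lemma dig_split (hj₀ : j₀ < m) {q : ℕ} (hq : Nat.factorial (m+1) = Nat.factorial (j₀+2) * q)
    {x e y : ℕ} (he : e < j₀+2) (hy : y < q) (j : ℕ) (hj : j < m) :
    (dig j₀ (((x*(q*(j₀+2))+(e*q+y) : ℕ):ℝ)/(Nat.factorial (m+1))) = e ∧
     dig j₀ (((x*(q*(j₀+2))+y : ℕ):ℝ)/(Nat.factorial (m+1))) = 0) ∧
    (j ≠ j₀ → dig j (((x*(q*(j₀+2))+(e*q+y) : ℕ):ℝ)/(Nat.factorial (m+1)))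
      = dig j (((x*(q*(j₀+2))+y : ℕ):ℝ)/(Nat.factorial (m+1)))) := by
  have hN : 0 < Nat.factorial (m+1) := Nat.factorial_pos _
  have hq0 : 0 < q := by
    rcases Nat.eq_zero_or_pos q with h | h
    · exfalso; rw [h, mul_zero] at hq; omega
    · exact h
  have hb0 : 0 < j₀ + 2 := by omega
  constructor
  · constructor
    · rw [dig_rat hq0 hq]
      have h1 : x*(q*(j₀+2))+(e*q+y) = q * ((j₀+2)*x+e) + y := by ring
      rw [h1, Nat.mul_add_div hq0, Nat.div_eq_of_lt hy, Nat.add_zero, Nat.mul_add_mod]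
      exact Nat.mod_eq_of_lt he
    · rw [dig_rat hq0 hq]
      have h1 : x*(q*(j₀+2))+y = q * (x*(j₀+2)) + y := by ring
      rw [h1, Nat.mul_add_div hq0, Nat.div_eq_of_lt hy, Nat.add_zero]
      exact Nat.mul_mod_left x _
  · intro hne
    have hqb0 : 0 < q*(j₀+2) := by positivity
    have hs1 : e*q+y < q*(j₀+2) := by
      calc e*q+y < e*q + q := by omega
        _ = (e+1)*q := by ring
        _ ≤ (j₀+2)*q := Nat.mul_le_mul (by omega) le_rfl
        _ = q*(j₀+2) := Nat.mul_comm _ _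
    have hs0 : y < q*(j₀+2) := lt_of_lt_of_le hy (Nat.le_mul_of_pos_right q hb0)
    rcases Nat.lt_or_ge j j₀ with hlt | hge
    · -- coarse digit : depends only on x
      obtain ⟨c, hc⟩ : Nat.factorial (j+2) ∣ Nat.factorial (j₀+1) :=
        Nat.factorial_dvd_factorial (by omega)
      have hc0 : 0 < c := by
        rcases Nat.eq_zero_or_pos c with h | h
        · exfalso; rw [h, mul_zero] at hc; exact (Nat.factorial_pos (j₀+1)).ne' hc
        · exact h
      have hF : Nat.factorial (m+1) = Nat.factorial (j+2) * ((q*(j₀+2))*c) := by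
        have h2 : Nat.factorial (j₀+2) = (j₀+2) * Nat.factorial (j₀+1) :=
          Nat.factorial_succ _
        rw [hq, h2, hc]; ring
      have key : ∀ s, s < q*(j₀+2) →
          (x*(q*(j₀+2)) + s) / ((q*(j₀+2))*c) = x / c := by
        intro s hs
        rw [← Nat.div_div_eq_div_mul]
        congr 1
        rw [show x*(q*(j₀+2)) + s = (q*(j₀+2)) * x + s by ring,
          Nat.mul_add_div hqb0, Nat.div_eq_of_lt hs, Nat.add_zero]
      rw [dig_rat (by positivity) hF, dig_rat (by positivity) hF, key _ hs1, key _ hs0]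
    · -- fine digit : adding e*q does not change it
      have hgt : j₀ < j := by omega
      obtain ⟨L, hL⟩ : Nat.factorial (j₀+2) ∣ Nat.factorial (j+1) :=
        Nat.factorial_dvd_factorial (by omega)
      obtain ⟨R, hR⟩ : Nat.factorial (j+2) ∣ Nat.factorial (m+1) :=
        Nat.factorial_dvd_factorial (by omega)
      have hR0 : 0 < R := by
        rcases Nat.eq_zero_or_pos R with h | h
        · exfalso; rw [h, mul_zero] at hR; omega
        · exact h
      have hqLR : q = L*(j+2)*R := by
        apply Nat.eq_of_mul_eq_mul_left (Nat.factorial_pos (j₀+2))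
        calc Nat.factorial (j₀+2) * q = Nat.factorial (m+1) := hq.symm
          _ = Nat.factorial (j+2) * R := hR
          _ = ((j+2) * Nat.factorial (j+1)) * R := by rw [Nat.factorial_succ]
          _ = ((j+2) * (Nat.factorial (j₀+2) * L)) * R := by rw [hL]
          _ = Nat.factorial (j₀+2) * (L*(j+2)*R) := by ring
      rw [dig_rat hR0 hR, dig_rat hR0 hR]
      have h1 : x*(q*(j₀+2))+(e*q+y) = (x*(q*(j₀+2))+y) + (e*L*(j+2))*R := by
        rw [hqLR]; ring
      rw [h1, Nat.add_mul_div_right _ _ hR0, Nat.add_mul_mod_self_right]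

lemma S_split (hj₀ : j₀ < m) {q : ℕ} (hq : Nat.factorial (m+1) = Nat.factorial (j₀+2) * q)
    {x e y : ℕ} (he : e < j₀+2) (hy : y < q) :
    S m (((x*(q*(j₀+2))+(e*q+y) : ℕ):ℝ)/(Nat.factorial (m+1)))
      = S m (((x*(q*(j₀+2))+y : ℕ):ℝ)/(Nat.factorial (m+1))) + (e:ℝ)/Nat.factorial (j₀+3) := by
  rw [S, S]
  have hkey : ∑ j ∈ Finset.range m,
      ((dig j (((x*(q*(j₀+2))+(e*q+y) : ℕ):ℝ)/(Nat.factorial (m+1))) : ℝ) / Nat.factorial (j+3)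
        - (dig j (((x*(q*(j₀+2))+y : ℕ):ℝ)/(Nat.factorial (m+1))) : ℝ) / Nat.factorial (j+3))
      = (e:ℝ)/Nat.factorial (j₀+3) := by
    rw [Finset.sum_eq_single_of_mem j₀ (Finset.mem_range.2 hj₀)]
    · rw [((dig_split hj₀ hq he hy j₀ hj₀).1).1, ((dig_split hj₀ hq he hy j₀ hj₀).1).2]
      norm_num
    · intro j hj hne
      rw [(dig_split hj₀ hq he hy j (Finset.mem_range.1 hj)).2 hne]
      ring
  rw [Finset.sum_sub_distrib] at hkey
  linarith

lemma gg_nonneg (j : ℕ) (n : ℤ) : 0 ≤ gg j n := by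
  rw [gg]; positivity

lemma sum_bound (n : ℤ) (hj₀ : j₀ < m) :
    ‖∑ a ∈ Finset.range (Nat.factorial (m+1)),
        ec ((n:ℝ) * S m ((a:ℝ)/(Nat.factorial (m+1))))‖
      ≤ (Nat.factorial (m+1) : ℝ) * gg j₀ n := by
  obtain ⟨q, hq⟩ : Nat.factorial (j₀+2) ∣ Nat.factorial (m+1) :=
    Nat.factorial_dvd_factorial (by omega)
  have hq0 : 0 < q := by
    rcases Nat.eq_zero_or_pos q with h | h
    · exfalso; rw [h, mul_zero] at hq; exact (Nat.factorial_pos (m+1)).ne' hq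
    · exact h
  have hX : Nat.factorial (m+1) = Nat.factorial (j₀+1) * (q*(j₀+2)) := by
    rw [hq, Nat.factorial_succ (j₀+1)]; ring
  set N := Nat.factorial (m+1) with hNdef
  set f : ℕ → ℂ := fun a => ec ((n:ℝ) * S m ((a:ℝ)/N)) with hf
  have hsplit : ∑ a ∈ Finset.range N, f a
      = ∑ x ∈ Finset.range (Nat.factorial (j₀+1)), ∑ e ∈ Finset.range (j₀+2),
          ∑ y ∈ Finset.range q, f (x*(q*(j₀+2)) + (e*q+y)) := by
    calc ∑ a ∈ Finset.range N, f a
        = ∑ a ∈ Finset.range (Nat.factorial (j₀+1) * (q*(j₀+2))), f a := by rw [← hX]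
      _ = ∑ x ∈ Finset.range (Nat.factorial (j₀+1)), ∑ s ∈ Finset.range (q*(j₀+2)),
            f (x*(q*(j₀+2)) + s) := sum_range_mul f _ _
      _ = _ := by
          apply Finset.sum_congr rfl
          intro x _
          calc ∑ s ∈ Finset.range (q*(j₀+2)), f (x*(q*(j₀+2)) + s)
              = ∑ s ∈ Finset.range ((j₀+2)*q), f (x*(q*(j₀+2)) + s) :=
                Finset.sum_congr (by rw [Nat.mul_comm q (j₀+2)]) (fun _ _ => rfl)
            _ = _ := sum_range_mul (fun s => f (x*(q*(j₀+2)) + s)) (j₀+2) q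
  have hinner : ∀ x ∈ Finset.range (Nat.factorial (j₀+1)), ∀ y ∈ Finset.range q,
      ‖∑ e ∈ Finset.range (j₀+2), f (x*(q*(j₀+2)) + (e*q+y))‖
        = ((j₀:ℝ)+2) * gg j₀ n := by
    intro x _ y hy
    have hyq := Finset.mem_range.1 hy
    have hterm : ∀ e ∈ Finset.range (j₀+2),
        f (x*(q*(j₀+2)) + (e*q+y))
          = ec ((n:ℝ) * S m (((x*(q*(j₀+2))+y : ℕ):ℝ)/N)) *
              (ec ((n:ℝ) / Nat.factorial (j₀+3)))^e := by
      intro e he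
      rw [hf]
      simp only []
      rw [S_split hj₀ hq (Finset.mem_range.1 he) hyq]
      rw [mul_add, ec_add]
      congr 1
      rw [show (n:ℝ) * ((e:ℝ)/Nat.factorial (j₀+3)) = (e:ℝ) * ((n:ℝ)/Nat.factorial (j₀+3)) by
        ring, ec_natmul]
    rw [Finset.sum_congr rfl hterm, ← Finset.mul_sum, norm_mul, norm_ec, one_mul]
    rw [gg]
    field_simp
  calc ‖∑ a ∈ Finset.range N, f a‖
      ≤ ∑ x ∈ Finset.range (Nat.factorial (j₀+1)), ∑ y ∈ Finset.range q,
          ‖∑ e ∈ Finset.range (j₀+2), f (x*(q*(j₀+2)) + (e*q+y))‖ := by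
        rw [hsplit]
        refine (norm_sum_le _ _).trans (Finset.sum_le_sum fun x hx => ?_)
        rw [Finset.sum_comm]
        exact norm_sum_le _ _
    _ = (Nat.factorial (j₀+1) : ℝ) * (q * (((j₀:ℝ)+2) * gg j₀ n)) := by
        rw [Finset.sum_congr rfl (fun x hx => Finset.sum_congr rfl (hinner x hx))]
        rw [Finset.sum_const, Finset.sum_const, Finset.card_range, Finset.card_range]
        simp [nsmul_eq_mul]
    _ = (N:ℝ) * gg j₀ n := by
        have : ((N:ℝ)) = (Nat.factorial (j₀+1) : ℝ) * (q * ((j₀:ℝ)+2)) := by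
          rw [hX]; push_cast; ring
        rw [this]; ring
end SumBound
/-! ### the measure and its support -/

/-- the map from `[0,1)` to the circle -/
def Gam (t : ℝ) : AddCircle (2 * Real.pi) := ((2 * Real.pi * psi t : ℝ) : AddCircle (2 * Real.pi))

lemma measurable_Gam : Measurable Gam := by
  apply Measurable.comp
  · exact (AddCircle.continuous_mk' (2 * Real.pi)).measurable
  · exact measurable_const.mul measurable_psi

/-- the singular measure -/
def nu : Measure (AddCircle (2 * Real.pi)) :=
  Measure.map Gam (volume.restrict (Set.Ico (0:ℝ) 1))

lemma nu_univ : nu Set.univ = 1 := by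
  rw [nu, Measure.map_apply measurable_Gam MeasurableSet.univ]
  simp [Real.volume_Ico]

instance nu_finite : IsFiniteMeasure nu := by
  constructor
  rw [nu_univ]
  exact ENNReal.one_lt_top

lemma norm_coe_le (x : ℝ) : ‖((x:ℝ) : AddCircle (2 * Real.pi))‖ ≤ |x| := by
  rw [AddCircle.norm_eq]
  have h2π : (0:ℝ) < 2 * π := Real.two_pi_pos
  have he : x - (round ((2*π)⁻¹ * x) : ℤ) * (2*π)
      = (2*π) * ((2*π)⁻¹ * x - (round ((2*π)⁻¹ * x) : ℤ)) := by
    field_simp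
  have key : |x - (round ((2*π)⁻¹ * x) : ℤ) * (2*π)| = (2*π) * del ((2*π)⁻¹ * x) := by
    rw [he, abs_mul, _root_.abs_of_pos h2π, del]
  rw [key]
  have h1 : del ((2*π)⁻¹ * x) ≤ |(2*π)⁻¹ * x| := by simpa using del_le ((2*π)⁻¹ * x) 0
  calc (2*π) * del ((2*π)⁻¹ * x) ≤ (2*π) * |(2*π)⁻¹ * x| :=
        mul_le_mul_of_nonneg_left h1 h2π.le
    _ = |x| := by
        rw [abs_mul, abs_inv, _root_.abs_of_pos h2π]
        field_simp

lemma dist_coe_le (a b : ℝ) :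
    dist ((a:ℝ) : AddCircle (2 * Real.pi)) ((b:ℝ) : AddCircle (2 * Real.pi)) ≤ |a - b| := by
  rw [dist_eq_norm]
  have : ((a:ℝ) : AddCircle (2 * Real.pi)) - ((b:ℝ) : AddCircle (2 * Real.pi))
      = (((a - b : ℝ)) : AddCircle (2 * Real.pi)) :=
    (QuotientAddGroup.mk_sub _ a b).symm
  rw [this]
  exact norm_coe_le _

/-- the compact support -/
def KK : Set (AddCircle (2 * Real.pi)) := closure (Gam '' Set.Ico (0:ℝ) 1)

lemma KK_compact : IsCompact KK := isClosed_closure.isCompact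

lemma nu_compl_KK : nu KKᶜ = 0 := by
  have hK : MeasurableSet KKᶜ := isClosed_closure.measurableSet.compl
  rw [nu, Measure.map_apply measurable_Gam hK]
  rw [Measure.restrict_apply (measurable_Gam hK)]
  convert measure_empty (μ := volume)
  rw [Set.eq_empty_iff_forall_notMem]
  rintro t ⟨hmem, ht⟩
  exact hmem (subset_closure (Set.mem_image_of_mem Gam ht))

lemma KK_subset (m : ℕ) :
    KK ⊆ ⋃ a ∈ Finset.range (Nat.factorial (m+1)),
      Metric.closedBall
        (((2 * π * S m ((a:ℝ)/(Nat.factorial (m+1))) + 2*π/(Nat.factorial (m+2)) : ℝ)) :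
          AddCircle (2 * Real.pi))
        (2*π/(Nat.factorial (m+2))) := by
  apply closure_minimal
  · rintro z ⟨t, ht, rfl⟩
    obtain ⟨h0, h1⟩ := ht
    set N := Nat.factorial (m+1) with hNdef
    have hN : (0:ℝ) < (N:ℝ) := by exact_mod_cast Nat.factorial_pos (m+1)
    have ht0 : (0:ℝ) ≤ (N:ℝ)*t := by positivity
    set a := ⌊(N:ℝ)*t⌋₊ with ha
    have haN : a ∈ Finset.range N := by
      rw [Finset.mem_range, ha, Nat.floor_lt ht0]
      calc (N:ℝ)*t < N*1 := mul_lt_mul_of_pos_left h1 hN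
        _ = N := mul_one _
    apply Set.mem_biUnion haN
    rw [Metric.mem_closedBall]
    have hSa : S m ((a:ℝ)/N) = S m t := S_floor t
    rw [Gam, hSa]
    refine (dist_coe_le _ _).trans ?_
    have hub := (tail_bound m t).2
    have hlb := (tail_bound m t).1
    rw [show 2*π*psi t - (2*π*S m t + 2*π/(Nat.factorial (m+2)))
      = 2*π*((psi t - S m t) - 1/(Nat.factorial (m+2))) by ring]
    rw [abs_mul, _root_.abs_of_pos Real.two_pi_pos]
    rw [show 2*π/((Nat.factorial (m+2):ℝ)) = 2*π*(1/(Nat.factorial (m+2))) by ring]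
    apply mul_le_mul_of_nonneg_left ?_ Real.two_pi_pos.le
    rw [abs_le]
    constructor
    · have : (0:ℝ) < 1/(Nat.factorial (m+2)) := by positivity
      linarith
    · have h2 : (2:ℝ)/(Nat.factorial (m+2)) = 2*(1/(Nat.factorial (m+2))) := by ring
      rw [h2] at hub
      linarith
  · apply Set.Finite.isClosed_biUnion (Finset.finite_toSet _)
    intro a _
    exact Metric.isClosed_closedBall

lemma volume_KK : volume KK = 0 := by
  have hb : ∀ m : ℕ, volume KK ≤ ENNReal.ofReal (4*π/((m:ℝ)+2)) := by
    intro m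
    refine (measure_mono (KK_subset m)).trans ?_
    refine (measure_biUnion_finset_le _ _).trans ?_
    have hball : ∀ a : ℕ,
        volume (Metric.closedBall
          (((2 * π * S m ((a:ℝ)/(Nat.factorial (m+1))) + 2*π/(Nat.factorial (m+2)) : ℝ)) :
            AddCircle (2 * Real.pi))
          (2*π/(Nat.factorial (m+2))))
        ≤ ENNReal.ofReal (4*π/(Nat.factorial (m+2))) := by
      intro a
      rw [AddCircle.volume_closedBall]
      apply ENNReal.ofReal_le_ofReal
      refine (min_le_right _ _).trans (le_of_eq (by ring))
    calc ∑ a ∈ Finset.range (Nat.factorial (m+1)), volume (Metric.closedBall _ _)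
        ≤ ∑ a ∈ Finset.range (Nat.factorial (m+1)),
            ENNReal.ofReal (4*π/(Nat.factorial (m+2))) :=
          Finset.sum_le_sum (fun a _ => hball a)
      _ = (Nat.factorial (m+1)) * ENNReal.ofReal (4*π/(Nat.factorial (m+2))) := by
          rw [Finset.sum_const, Finset.card_range, nsmul_eq_mul]
      _ ≤ ENNReal.ofReal (4*π/((m:ℝ)+2)) := by
          rw [← ENNReal.ofReal_natCast (Nat.factorial (m+1)), ← ENNReal.ofReal_mul (by positivity)]
          apply ENNReal.ofReal_le_ofReal
          have hfact : ((Nat.factorial (m+2) : ℝ)) = ((m:ℝ)+2) * (Nat.factorial (m+1)) := by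
            rw [Nat.factorial_succ]; push_cast; ring
          apply le_of_eq
          rw [hfact]
          have h1 : ((Nat.factorial (m+1):ℝ)) ≠ 0 := by positivity
          have h2 : ((m:ℝ)+2) ≠ 0 := by positivity
          field_simp
  have ht : Tendsto (fun m : ℕ => ENNReal.ofReal (4*π/((m:ℝ)+2))) atTop (nhds 0) := by
    rw [show (0 : ENNReal) = ENNReal.ofReal 0 by simp]
    apply ENNReal.tendsto_ofReal
    have h := (tendsto_const_div_atTop_nhds_zero_nat (4*π)).comp (tendsto_add_atTop_nat 2)
    apply h.congr
    intro m
    simp only [Function.comp_apply]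
    push_cast
    ring
  have h0 : volume KK ≤ 0 := ge_of_tendsto' ht hb
  exact le_antisymm h0 (by positivity)
/-! ### the Fourier coefficients of `nu` -/

instance finite_restrict : IsFiniteMeasure (volume.restrict (Set.Ico (0:ℝ) 1)) :=
  ⟨by rw [Measure.restrict_apply_univ]; exact measure_Ico_lt_top⟩

lemma intOn {w : ℝ → ℝ} (hw : Measurable w) :
    IntegrableOn (fun t => ec (w t)) (Set.Ico (0:ℝ) 1) volume := by
  have he : (fun t => ec (w t))
      = fun t => Complex.exp (((-(2*π*(w t)) : ℝ) : ℂ) * Complex.I) := by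
    funext t
    rw [ec]
    congr 1
    push_cast
    ring
  have hm : Measurable fun t => ec (w t) := by
    rw [he]
    apply Complex.measurable_exp.comp
    exact (Complex.measurable_ofReal.comp (measurable_const.mul hw).neg).mul_const Complex.I
  apply Integrable.mono' (integrable_const (1:ℝ)) hm.aestronglyMeasurable
  apply Filter.Eventually.of_forall
  intro t
  rw [norm_ec]

lemma norm_integral_S_le (m : ℕ) (n : ℤ) {j₀ : ℕ} (hj₀ : j₀ < m) :
    ‖∫ t in Set.Ico (0:ℝ) 1, ec ((n:ℝ) * S m t)‖ ≤ gg j₀ n := by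
  rw [integral_S m n, norm_smul, Real.norm_eq_abs]
  have hN : (0:ℝ) < (Nat.factorial (m+1) : ℝ) := by positivity
  rw [_root_.abs_of_pos (by positivity : (0:ℝ) < ((Nat.factorial (m+1):ℝ))⁻¹)]
  calc ((Nat.factorial (m+1):ℝ))⁻¹ * ‖∑ a ∈ Finset.range (Nat.factorial (m+1)),
        ec ((n:ℝ) * S m ((a:ℝ)/(Nat.factorial (m+1))))‖
      ≤ ((Nat.factorial (m+1):ℝ))⁻¹ * ((Nat.factorial (m+1) : ℝ) * gg j₀ n) := by
        apply mul_le_mul_of_nonneg_left (sum_bound n hj₀) (by positivity)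
    _ = gg j₀ n := by field_simp

lemma coeff_eq (n : ℤ) :
    cmFourierCoeff nu 1 n = ∫ t in Set.Ico (0:ℝ) 1, ec ((n:ℝ) * psi t) := by
  rw [cmFourierCoeff]
  simp only [Pi.one_apply, mul_one]
  rw [nu, integral_map measurable_Gam.aemeasurable
    ((fourier (-n)).continuous.aestronglyMeasurable)]
  apply setIntegral_congr_fun measurableSet_Ico
  intro t _
  show (fourier (-n)) (Gam t) = ec ((n:ℝ) * psi t)
  rw [Gam, fourier_coe_apply, ec]
  congr 1
  have hπ : (π:ℂ) ≠ 0 := by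
    exact_mod_cast Real.pi_ne_zero
  push_cast
  field_simp

lemma coeff_bound {j₀ m : ℕ} (n : ℤ) (hj : j₀ < m) :
    ‖cmFourierCoeff nu 1 n‖ ≤ gg j₀ n + 4*π*|(n:ℝ)|/(Nat.factorial (m+2)) := by
  rw [coeff_eq]
  have hint1 : IntegrableOn (fun t => ec ((n:ℝ) * psi t)) (Set.Ico (0:ℝ) 1) volume :=
    intOn (measurable_const.mul measurable_psi)
  have hint2 : IntegrableOn (fun t => ec ((n:ℝ) * S m t)) (Set.Ico (0:ℝ) 1) volume :=
    intOn (measurable_const.mul (measurable_S m))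
  have hdiff : ‖∫ t in Set.Ico (0:ℝ) 1, (ec ((n:ℝ) * psi t) - ec ((n:ℝ) * S m t))‖
      ≤ 4*π*|(n:ℝ)|/(Nat.factorial (m+2)) := by
    have hbd : ∀ t : ℝ, ‖ec ((n:ℝ) * psi t) - ec ((n:ℝ) * S m t)‖
        ≤ 4*π*|(n:ℝ)|/(Nat.factorial (m+2)) := by
      intro t
      refine (norm_ec_sub_ec_le _ _).trans ?_
      rw [show (n:ℝ) * psi t - (n:ℝ) * S m t = (n:ℝ) * (psi t - S m t) by ring, abs_mul]
      obtain ⟨hl, hu⟩ := tail_bound m t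
      rw [_root_.abs_of_nonneg hl]
      calc 2*π*(|(n:ℝ)| * (psi t - S m t)) ≤ 2*π*(|(n:ℝ)| * (2/(Nat.factorial (m+2)))) := by
            apply mul_le_mul_of_nonneg_left ?_ (by positivity)
            exact mul_le_mul_of_nonneg_left hu (abs_nonneg _)
        _ = 4*π*|(n:ℝ)|/(Nat.factorial (m+2)) := by ring
    refine (norm_integral_le_of_norm_le_const (Filter.Eventually.of_forall hbd)).trans ?_
    rw [measureReal_restrict_apply_univ, Real.volume_real_Ico]
    norm_num
  calc ‖∫ t in Set.Ico (0:ℝ) 1, ec ((n:ℝ) * psi t)‖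
      = ‖(∫ t in Set.Ico (0:ℝ) 1, ec ((n:ℝ) * S m t))
          + ∫ t in Set.Ico (0:ℝ) 1, (ec ((n:ℝ) * psi t) - ec ((n:ℝ) * S m t))‖ := by
        rw [integral_sub hint1 hint2]
        congr 1
        ring
    _ ≤ ‖∫ t in Set.Ico (0:ℝ) 1, ec ((n:ℝ) * S m t)‖
          + ‖∫ t in Set.Ico (0:ℝ) 1, (ec ((n:ℝ) * psi t) - ec ((n:ℝ) * S m t))‖ :=
        norm_add_le _ _
    _ ≤ gg j₀ n + 4*π*|(n:ℝ)|/(Nat.factorial (m+2)) :=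
        add_le_add (norm_integral_S_le m n hj) hdiff

lemma tendsto_coeff : Tendsto (fun n : ℤ => ‖cmFourierCoeff nu 1 n‖) cofinite (nhds 0) := by
  rw [Metric.tendsto_nhds]
  intro ε hε
  obtain ⟨N₀, hN1, hN₀⟩ := key (ε := ε/2) (by linarith)
  rw [Filter.eventually_cofinite]
  apply Set.Finite.subset (Set.finite_Icc (-(N₀:ℤ)) (N₀:ℤ))
  intro n hn
  rw [Set.mem_setOf_eq] at hn
  by_contra hmem
  apply hn
  have habs : (N₀:ℤ) ≤ |n| := by
    have h1 : ¬(|n| ≤ (N₀:ℤ)) := fun h => hmem (Set.mem_Icc.2 (abs_le.1 h))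
    exact (not_le.1 h1).le
  obtain ⟨j, hj⟩ := hN₀ n habs
  set m := max (j+1) ⌈8*π*(|(n:ℝ)|+1)/ε⌉₊ with hm
  have hjm : j < m := lt_of_lt_of_le (Nat.lt_succ_self j) (le_max_left _ _)
  have hcb := coeff_bound (j₀ := j) (m := m) n hjm
  have htail : 4*π*|(n:ℝ)|/(Nat.factorial (m+2)) < ε/2 := by
    have h1 : 8*π*(|(n:ℝ)|+1)/ε ≤ (Nat.factorial (m+2) : ℝ) := by
      calc 8*π*(|(n:ℝ)|+1)/ε ≤ (⌈8*π*(|(n:ℝ)|+1)/ε⌉₊ : ℝ) := Nat.le_ceil _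
        _ ≤ ((m+2 : ℕ) : ℝ) := by
            have : ⌈8*π*(|(n:ℝ)|+1)/ε⌉₊ ≤ m + 2 :=
              le_trans (le_max_right (j+1) _) (Nat.le_add_right m 2)
            exact_mod_cast this
        _ ≤ (Nat.factorial (m+2) : ℝ) := by exact_mod_cast Nat.self_le_factorial (m+2)
    have h2 : (0:ℝ) < 8*π*(|(n:ℝ)|+1)/ε := by positivity
    calc 4*π*|(n:ℝ)|/(Nat.factorial (m+2))
        ≤ 4*π*|(n:ℝ)|/(8*π*(|(n:ℝ)|+1)/ε) :=
          div_le_div_of_nonneg_left (by positivity) h2 h1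
      _ < ε/2 := by
          rw [div_lt_iff₀ h2]
          have hπ := Real.pi_pos
          have habs0 : (0:ℝ) ≤ |(n:ℝ)| := abs_nonneg _
          have he : ε/2 * (8*π*(|(n:ℝ)|+1)/ε) = 4*π*(|(n:ℝ)|+1) := by
            field_simp
            ring
          rw [he]
          nlinarith
  rw [Real.dist_eq, sub_zero, _root_.abs_of_nonneg (norm_nonneg _)]
  calc ‖cmFourierCoeff nu 1 n‖ ≤ gg j n + 4*π*|(n:ℝ)|/(Nat.factorial (m+2)) := hcb
    _ < ε/2 + ε/2 := by
        apply add_lt_add_of_le_of_lt hj htail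
    _ = ε := by ring
end Menshov



/-- Menshov's theorem: there exists a nonzero Borel measure on the circle, supported on
a compact set of Lebesgue measure zero, whose Fourier coefficients tend to `0` as
`|n| → ∞`. -/
theorem menshov_singular_pseudofunction_measure :
    ∃ (ν : Measure (AddCircle (2 * Real.pi))) (f : AddCircle (2 * Real.pi) → ℂ),
      IsFiniteMeasure ν ∧ Integrable f ν ∧ ¬ f =ᵐ[ν] 0 ∧
      (∃ K : Set (AddCircle (2 * Real.pi)), IsCompact K ∧ volume K = 0 ∧ ν Kᶜ = 0) ∧
      Tendsto (fun n : ℤ => ‖cmFourierCoeff ν f n‖) cofinite (nhds 0) := by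
  refine ⟨Menshov.nu, 1, Menshov.nu_finite, integrable_const 1, ?_,
    ⟨Menshov.KK, Menshov.KK_compact, Menshov.volume_KK, Menshov.nu_compl_KK⟩,
    Menshov.tendsto_coeff⟩
  intro h
  have h2 : ∀ᵐ x ∂Menshov.nu, False := h.mono (fun x hx => one_ne_zero hx)
  rw [MeasureTheory.ae_iff] at h2
  simp only [not_false_eq_true, Set.setOf_true] at h2
  rw [Menshov.nu_univ] at h2
  exact one_ne_zero h2
end
end
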